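/- arXiv:2005.10122 — 4 statements merged into one kernel-verified Lean document; each statement's English description precedes it below -/
import Mathlib

section
/- Let q ∈ ℂ with 0 < |q| < 1 and c ∈ ℂ ∖ {0}. Set φ(x) := θ_q(x/c) and ψ(x) := x φ′(x). If f, g are holomorphic on ℂ ∖ {0} and satisfy f(qx) = (c/x) f(x) and g(qx) = (c/x)(g(x) − f(x)) for all x ≠ 0, then there exist α, β ∈ ℂ such that f = α φ and g = α ψ + β φ. -/
open Complex Metric Set Function Filter MeasureTheory intervalIntegral Real


/-- Jacobi theta function `θ_q(x) = ∑_{n ∈ ℤ} q^(n(n-1)/2) x^n`. -/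
noncomputable def theta (q : ℂ) (x : ℂ) : ℂ := ∑' n : ℤ, q ^ (n * (n - 1) / 2) * x ^ n

lemma exp_succ (n : ℤ) : (n+1)*n/2 = n*(n-1)/2 + n := by
  obtain ⟨k, hk⟩ := Int.even_mul_succ_self (n-1)
  have hk' : n*(n-1) = k + k := by rw [← hk]; ring
  have hb : (n+1)*n = n*(n-1) + 2*n := by ring
  omega

lemma summable_theta_aux {K C : ℝ} (hK0 : 0 < K) (hK1 : K < 1) (hC : 0 < C) :
    Summable (fun n : ℤ => K ^ (n*(n-1)/2) * C ^ n) := by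
  have hpos : ∀ n : ℤ, 0 < K ^ (n*(n-1)/2) * C ^ n := fun n =>
    mul_pos (zpow_pos hK0 _) (zpow_pos hC _)
  apply Summable.of_nat_of_neg_add_one
  · apply summable_of_ratio_norm_eventually_le (r := 1/2) (by norm_num)
    have h0 : Tendsto (fun n : ℕ => K ^ n * C) atTop (nhds (0 * C)) :=
      (tendsto_pow_atTop_nhds_zero_of_lt_one hK0.le hK1).mul_const C
    rw [zero_mul] at h0
    filter_upwards [h0.eventually_le_const (by norm_num : (0:ℝ) < 1/2)] with n hn
    have he : ((n:ℤ)+1)*((n:ℤ)+1-1)/2 = (n:ℤ)*((n:ℤ)-1)/2 + n := by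
      simpa using exp_succ (n : ℤ)
    have : K ^ (((n:ℤ)+1)*((n:ℤ)+1-1)/2) * C ^ ((n:ℤ)+1)
        = (K ^ n * C) * (K ^ ((n:ℤ)*((n:ℤ)-1)/2) * C ^ (n:ℤ)) := by
      rw [he, zpow_add₀ hK0.ne', zpow_add₀ hC.ne']
      push_cast
      rw [zpow_natCast, zpow_one]
      ring
    rw [Real.norm_eq_abs, Real.norm_eq_abs, abs_of_pos (hpos _), abs_of_pos (hpos _)]
    push_cast
    rw [this]
    exact mul_le_mul_of_nonneg_right hn (hpos _).le
  · apply summable_of_ratio_norm_eventually_le (r := 1/2) (by norm_num)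
    have h0 : Tendsto (fun n : ℕ => K ^ n * (K^2 * C⁻¹)) atTop (nhds (0 * (K^2 * C⁻¹))) :=
      (tendsto_pow_atTop_nhds_zero_of_lt_one hK0.le hK1).mul_const _
    rw [zero_mul] at h0
    filter_upwards [h0.eventually_le_const (by norm_num : (0:ℝ) < 1/2)] with n hn
    have he : (-((n:ℤ)+1+1))*((-((n:ℤ)+1+1))-1)/2 = (-((n:ℤ)+1))*((-((n:ℤ)+1))-1)/2 + (n + 2) := by
      obtain ⟨k, hk⟩ := Int.even_mul_succ_self (-((n:ℤ)+1)-1)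
      have hk' : (-((n:ℤ)+1))*((-((n:ℤ)+1))-1) = k + k := by rw [← hk]; ring
      have hb : (-((n:ℤ)+1+1))*((-((n:ℤ)+1+1))-1) =
        (-((n:ℤ)+1))*((-((n:ℤ)+1))-1) + 2*(n+2) := by ring
      omega
    have : K ^ ((-((n:ℤ)+1+1))*((-((n:ℤ)+1+1))-1)/2) * C ^ (-((n:ℤ)+1+1))
        = (K ^ n * (K^2 * C⁻¹)) * (K ^ ((-((n:ℤ)+1))*((-((n:ℤ)+1))-1)/2) * C ^ (-((n:ℤ)+1))) := by
      rw [he, zpow_add₀ hK0.ne']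
      have : ((-((n:ℤ)+1+1)) : ℤ) = (-((n:ℤ)+1)) + (-1) := by ring
      rw [this, zpow_add₀ hC.ne']
      push_cast
      have e1 : K ^ ((n:ℤ)+2) = K ^ n * K ^ 2 := by
        rw [show ((n:ℤ)+2) = (((n+2:ℕ)):ℤ) by push_cast; ring, zpow_natCast, pow_add]
      simp only [e1, zpow_neg, zpow_one]
      ring
    rw [Real.norm_eq_abs, Real.norm_eq_abs, abs_of_pos (hpos _), abs_of_pos (hpos _)]
    push_cast at this ⊢
    rw [this]
    exact mul_le_mul_of_nonneg_right hn (hpos _).le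

lemma zpow_abs_le {a b : ℝ} {x : ℂ} (ha : 0 < a) (hax : a ≤ ‖x‖)
    (hxb : ‖x‖ ≤ b) (n : ℤ) : (‖x‖) ^ n ≤ a ^ n + b ^ n := by
  have hb : 0 < b := ha.trans_le (hax.trans hxb)
  have hx : 0 < ‖x‖ := ha.trans_le hax
  rcases le_or_gt 0 n with hn | hn
  · obtain ⟨m, rfl⟩ := Int.eq_ofNat_of_zero_le hn
    simp only [zpow_natCast]
    refine le_add_of_nonneg_of_le (pow_pos ha _).le ?_
    exact pow_le_pow_left₀ hx.le hxb m
  · refine le_add_of_le_of_nonneg ?_ (zpow_pos hb _).le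
    obtain ⟨m, rfl⟩ : ∃ m : ℕ, n = -(m+1) := ⟨(-n-1).toNat, by omega⟩
    have hc : (-((m:ℤ)+1)) = -(((m+1:ℕ)):ℤ) := by push_cast; ring
    simp only [hc, zpow_neg, zpow_natCast]
    exact inv_anti₀ (pow_pos ha _) (pow_le_pow_left₀ ha.le hax _)

lemma norm_theta_term (q x : ℂ) (n : ℤ) :
    ‖q ^ (n*(n-1)/2) * x ^ n‖ = (‖q‖) ^ (n*(n-1)/2) * (‖x‖) ^ n := by
  rw [norm_mul, norm_zpow, norm_zpow]

lemma summable_theta_term {q : ℂ} (hq0 : 0 < ‖q‖) (hq1 : ‖q‖ < 1)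
    {x : ℂ} (hx : x ≠ 0) :
    Summable (fun n : ℤ => q ^ (n*(n-1)/2) * x ^ n) := by
  have hx' : 0 < ‖x‖ := by simpa [norm_pos_iff] using hx
  apply Summable.of_norm_bounded (summable_theta_aux hq0 hq1 hx')
  intro n
  exact (norm_theta_term q x n).le

lemma hasSum_theta {q : ℂ} (hq0 : 0 < ‖q‖) (hq1 : ‖q‖ < 1)
    {x : ℂ} (hx : x ≠ 0) :
    HasSum (fun n : ℤ => q ^ (n*(n-1)/2) * x ^ n) (theta q x) :=
  (summable_theta_term hq0 hq1 hx).hasSum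

lemma theta_q_mul {q y : ℂ} (hq : q ≠ 0) (hy : y ≠ 0) :
    theta q (q * y) = y⁻¹ * theta q y := by
  have h1 : theta q (q * y) = ∑' n : ℤ, q ^ ((n+1)*((n+1)-1)/2) * y ^ ((n+1)-1) := by
    unfold theta
    refine tsum_congr fun n => ?_
    rw [mul_zpow, show ((n:ℤ)+1-1) = n by ring, exp_succ, zpow_add₀ hq]
    ring
  have h2 := Equiv.tsum_eq (Equiv.addRight (1:ℤ)) (fun m : ℤ => q ^ (m*(m-1)/2) * y ^ (m-1))
  simp only [Equiv.coe_addRight] at h2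
  rw [h1, h2]
  unfold theta
  rw [← tsum_mul_left]
  refine tsum_congr fun n => ?_
  rw [zpow_sub₀ hy, zpow_one]
  field_simp

theorem div_le_div_of_nonneg_right' {a b c : ℝ} (h : a ≤ b) (hc : 0 < c) : a / c ≤ b / c := by
  gcongr





lemma phi_differentiableAt {q cc : ℂ} (hq0 : 0 < ‖q‖) (hq1 : ‖q‖ < 1)
    (hc : cc ≠ 0) {x : ℂ} (hx : x ≠ 0) :
    DifferentiableAt ℂ (fun y => theta q (y / cc)) x := by
  have hax : 0 < ‖x‖ := by simpa [norm_pos_iff] using hx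
  have hacc : 0 < ‖cc‖ := by simpa [norm_pos_iff] using hc
  set a : ℝ := ‖x‖ / 2 with ha_def
  set b : ℝ := ‖x‖ + 1 with hb_def
  have ha : 0 < a := by positivity
  set U : Set ℂ := (fun z : ℂ => ‖z‖) ⁻¹' (Ioo a b) with hU_def
  have hU : IsOpen U := isOpen_Ioo.preimage continuous_norm
  have hxU : x ∈ U := by
    constructor <;> simp only [ha_def, hb_def] <;> linarith
  have hdiff : DifferentiableOn ℂ (fun y => theta q (y / cc)) U := by
    simp only [theta]
    apply differentiableOn_tsum_of_summable_norm
      (u := fun n : ℤ => ‖q‖ ^ (n*(n-1)/2) * ((a / ‖cc‖) ^ n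
        + (b / ‖cc‖) ^ n)) ?_ ?_ hU ?_
    rotate_right
    · intro n y hy
      simp only [hU_def, mem_preimage, mem_Ioo] at hy
      rw [norm_theta_term]
      have e1 : a / ‖cc‖ ≤ ‖(y / cc)‖ := by
        rw [norm_div]; exact div_le_div_of_nonneg_right' hy.1.le hacc
      have e2 : ‖(y / cc)‖ ≤ b / ‖cc‖ := by
        rw [norm_div]; exact div_le_div_of_nonneg_right' hy.2.le hacc
      have e3 := zpow_abs_le (x := y / cc) (by positivity) e1 e2 n
      exact mul_le_mul_of_nonneg_left e3 (zpow_pos hq0 _).le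
    · have h1 := summable_theta_aux (C := a / ‖cc‖) hq0 hq1 (by positivity)
      have h2 := summable_theta_aux (C := b / ‖cc‖) hq0 hq1 (by positivity)
      exact (h1.add h2).congr fun n => by ring
    · intro n y hy
      simp only [hU_def, mem_preimage, mem_Ioo] at hy
      have hy0 : y ≠ 0 := by
        intro h; rw [h] at hy; simp only [norm_zero] at hy
        linarith [hy.1, ha]
      have hyc : y / cc ≠ 0 := div_ne_zero hy0 hc
      exact (((differentiableAt_zpow.mpr (Or.inl hyc)).comp y
        (differentiableAt_id.div_const cc)).const_mul _).differentiableWithinAt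
  exact hdiff.differentiableAt (hU.mem_nhds hxU)

lemma hasSum_circleIntegral {ι : Type*} [Countable ι] {F : ι → ℂ → ℂ} {f : ℂ → ℂ} {r : ℝ}
    (hr : 0 < r) (hcont : ∀ i, ContinuousOn (F i) (sphere (0:ℂ) r))
    {u : ι → ℝ} (hu : Summable u)
    (hb : ∀ i, ∀ z ∈ sphere (0:ℂ) r, ‖F i z‖ ≤ u i)
    (hsum : ∀ z ∈ sphere (0:ℂ) r, HasSum (fun i => F i z) (f z)) :
    HasSum (fun i => ∮ z in C(0, r), F i z) (∮ z in C(0, r), f z) := by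
  simp only [circleIntegral, deriv_circleMap]
  apply intervalIntegral.hasSum_integral_of_dominated_convergence
    (bound := fun i (_ : ℝ) => r * u i)
  · intro i
    have hcont' : Continuous fun θ => F i (circleMap 0 r θ) :=
      (hcont i).comp_continuous (continuous_circleMap 0 r)
        (fun θ => circleMap_mem_sphere 0 hr.le θ)
    exact (((continuous_circleMap 0 r).mul continuous_const).smul
      hcont').aestronglyMeasurable.restrict
  · intro i
    refine Eventually.of_forall fun θ _ => ?_
    rw [norm_smul, norm_mul,
      norm_circleMap_zero, Complex.norm_I, mul_one, _root_.abs_of_pos hr]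
    exact mul_le_mul_of_nonneg_left (hb i _ (circleMap_mem_sphere 0 hr.le θ)) hr.le
  · exact Eventually.of_forall fun θ _ => hu.mul_left r
  · exact intervalIntegrable_const
  · refine Eventually.of_forall fun θ _ => ?_
    exact (hsum _ (circleMap_mem_sphere 0 hr.le θ)).const_smul _

lemma circleIntegral_rot {q : ℂ} (hq : q ≠ 0) (f : ℂ → ℂ) (r : ℝ) :
    (∮ z in C(0, ‖q‖ * r), f z) = q * ∮ z in C(0, r), f (q * z) := by
  have key : ∀ θ : ℝ, circleMap 0 (‖q‖ * r) (θ + q.arg) = q * circleMap 0 r θ := by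
    intro θ
    simp only [circleMap_zero]
    conv_rhs => rw [← Complex.norm_mul_exp_arg_mul_I q]
    rw [Complex.ofReal_mul, Complex.ofReal_add, add_mul, Complex.exp_add]
    ring
  set G : ℝ → ℂ := fun θ => deriv (circleMap 0 (‖q‖ * r)) θ •
    f (circleMap 0 (‖q‖ * r) θ) with hG
  have hGper : Function.Periodic G (2 * π) := by
    intro θ
    simp only [hG, deriv_circleMap, (periodic_circleMap 0 (‖q‖ * r) θ)]
  have h1 : (∮ z in C(0, ‖q‖ * r), f z) = ∫ θ in (0:ℝ)..2*π, G θ := rfl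
  have h2 : (q * ∮ z in C(0, r), f (q * z)) = ∫ θ in (0:ℝ)..2*π, G (θ + q.arg) := by
    rw [circleIntegral, ← intervalIntegral.integral_const_mul]
    refine intervalIntegral.integral_congr fun θ _ => ?_
    simp only [hG, deriv_circleMap, key θ, smul_eq_mul]
    ring
  rw [h1, h2, intervalIntegral.integral_comp_add_right (a := 0) (b := 2*π) G q.arg]
  have := hGper.intervalIntegral_add_eq q.arg 0
  simpa [add_comm] using this.symm

lemma ne_zero_of_norm_pos {z : ℂ} {r : ℝ} (hr : 0 < r) (h : r ≤ ‖z‖) : z ≠ 0 := by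
  intro h0; rw [h0] at h; simp at h; linarith

lemma diffAt_zpow_mul {h : ℂ → ℂ} (hd : ∀ z : ℂ, z ≠ 0 → DifferentiableAt ℂ h z) (m : ℤ)
    {z : ℂ} (hz : z ≠ 0) : DifferentiableAt ℂ (fun z => z ^ m * h z) z :=
  (differentiableAt_zpow.mpr (Or.inl hz)).mul (hd z hz)

lemma coeff_radius_indep {h : ℂ → ℂ} (hd : ∀ z : ℂ, z ≠ 0 → DifferentiableAt ℂ h z)
    (m : ℤ) {r R : ℝ} (hr : 0 < r) (hle : r ≤ R) :
    (∮ z in C(0, R), z ^ m * h z) = ∮ z in C(0, r), z ^ m * h z := by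
  apply circleIntegral_eq_of_differentiable_on_annulus_off_countable hr hle countable_empty
  · intro z hz
    have hz0 : z ≠ 0 := by
      refine ne_zero_of_norm_pos hr ?_
      have := hz.2
      simpa [mem_ball_zero_iff, not_lt] using this
    exact (diffAt_zpow_mul hd m hz0).continuousAt.continuousWithinAt
  · intro z hz
    have hz0 : z ≠ 0 := by
      refine ne_zero_of_norm_pos hr ?_
      have := hz.1.2
      rw [mem_closedBall_zero_iff] at this
      push_neg at this
      exact this.le
    exact diffAt_zpow_mul hd m hz0


noncomputable def coeffI (h : ℂ → ℂ) (m : ℤ) : ℂ := ∮ z in C(0, 1), z ^ m * h z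

lemma coeffI_eq {h : ℂ → ℂ} (hd : ∀ z : ℂ, z ≠ 0 → DifferentiableAt ℂ h z) (m : ℤ)
    {r : ℝ} (hr : 0 < r) : (∮ z in C(0, r), z ^ m * h z) = coeffI h m := by
  unfold coeffI
  rcases le_total r 1 with hr1 | hr1
  · exact (coeff_radius_indep hd m hr hr1).symm
  · exact coeff_radius_indep hd m one_pos hr1

lemma coeffI_rec {q c : ℂ} (hq : q ≠ 0) (hc : c ≠ 0) {h : ℂ → ℂ}
    (hd : ∀ z : ℂ, z ≠ 0 → DifferentiableAt ℂ h z)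
    (heq : ∀ x : ℂ, x ≠ 0 → h (q * x) = c / x * h x) (m : ℤ) :
    coeffI h m = q ^ (m + 1) * c * coeffI h (m - 1) := by
  have hq0 : 0 < ‖q‖ := by simpa [norm_pos_iff] using hq
  have h1 : coeffI h m = ∮ z in C(0, ‖q‖ * 1), z ^ m * h z := by
    rw [mul_one]
    exact (coeffI_eq hd m hq0).symm
  rw [h1, circleIntegral_rot hq (fun z => z ^ m * h z) 1]
  have h2 : (∮ z in C(0, (1:ℝ)), (q * z) ^ m * h (q * z))
      = ∮ z in C(0, (1:ℝ)), (q ^ m * c) * (z ^ (m - 1) * h z) := by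
    refine circleIntegral.integral_congr zero_le_one fun z hz => ?_
    have hz0 : z ≠ 0 := by
      refine ne_zero_of_norm_pos one_pos ?_
      rw [mem_sphere_zero_iff_norm] at hz
      exact hz.ge
    rw [heq z hz0, mul_zpow, zpow_sub₀ hz0, zpow_one]
    field_simp
  rw [h2, circleIntegral.integral_const_mul, coeffI_eq hd (m - 1) one_pos,
    zpow_add₀ hq, zpow_one]
  ring

lemma coeffI_all_zero {q c : ℂ} (hq : q ≠ 0) (hc : c ≠ 0) {h : ℂ → ℂ}
    (hd : ∀ z : ℂ, z ≠ 0 → DifferentiableAt ℂ h z)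
    (heq : ∀ x : ℂ, x ≠ 0 → h (q * x) = c / x * h x)
    (h0 : coeffI h (-1) = 0) : ∀ m : ℤ, coeffI h m = 0 := by
  have key : ∀ m : ℤ, coeffI h (m - 1) = 0 := by
    intro m
    induction m using Int.induction_on with
    | zero => simpa using h0
    | succ i ih =>
      have := coeffI_rec hq hc hd heq i
      rw [show ((i:ℤ) - 1 : ℤ) = (i - 1 : ℤ) from rfl] at ih
      rw [show ((i:ℤ) + 1 - 1 : ℤ) = (i : ℤ) by ring]
      rw [this, ih, mul_zero]
    | pred i ih =>
      have hrec := coeffI_rec hq hc hd heq (-(i:ℤ) - 1)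
      rw [show (-(i:ℤ) - 1 + 1 : ℤ) = -(i:ℤ) by ring] at hrec
      rw [show (-(i:ℤ) - 1 : ℤ) = (-(i:ℤ)) - 1 from rfl] at ih
      rw [ih] at hrec
      have hne : q ^ (-(i:ℤ)) * c ≠ 0 := mul_ne_zero (zpow_ne_zero _ hq) hc
      rw [show (-(i:ℤ) - 1 - 1 : ℤ) = -(i:ℤ) - 1 - 1 from rfl]
      have : q ^ (-(i:ℤ)) * c * coeffI h (-(i:ℤ) - 1 - 1) = 0 := hrec.symm
      exact (mul_eq_zero.mp this).resolve_left hne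
  intro m
  have := key (m + 1)
  simpa using this

lemma eq_zero_of_coeffI_zero {h : ℂ → ℂ} (hd : ∀ z : ℂ, z ≠ 0 → DifferentiableAt ℂ h z)
    (h0 : ∀ m : ℤ, coeffI h m = 0) : ∀ x : ℂ, x ≠ 0 → h x = 0 := by
  intro x hx
  have hax : 0 < ‖x‖ := by simpa [norm_pos_iff] using hx
  set r : ℝ := ‖x‖ / 2 with hr_def
  set R : ℝ := 2 * ‖x‖ with hR_def
  have hr : 0 < r := by positivity
  have hR : 0 < R := by positivity
  have hle : r ≤ R := by rw [hr_def, hR_def]; linarith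
  have hxR : ‖x‖ < R := by rw [hR_def]; linarith
  have hrx : r < ‖x‖ := by rw [hr_def]; linarith
  -- continuity of h away from 0
  have hcont : ∀ {ρ : ℝ}, 0 < ρ → ContinuousOn h (sphere (0:ℂ) ρ) := by
    intro ρ hρ z hz
    rw [mem_sphere_zero_iff_norm] at hz
    have hz0 : z ≠ 0 := ne_zero_of_norm_pos hρ (le_of_eq hz.symm)
    exact (hd z hz0).continuousAt.continuousWithinAt
  have hsph_ne : ∀ {ρ : ℝ}, 0 < ρ → ∀ z ∈ sphere (0:ℂ) ρ, z ≠ 0 := by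
    intro ρ hρ z hz
    rw [mem_sphere_zero_iff_norm] at hz
    exact ne_zero_of_norm_pos hρ (le_of_eq hz.symm)
  -- Step 1 : outer integral is zero
  have houter : (∮ z in C(0, R), (z - x)⁻¹ • h z) = 0 := by
    have hci : CircleIntegrable h 0 R := (hcont hR).circleIntegrable hR.le
    have hs := hasSum_two_pi_I_cauchyPowerSeries_integral (c := 0) (w := x) hci hxR
    simp only [zero_add, sub_zero] at hs
    have hterm : ∀ n : ℕ, (∮ z in C(0, R), (x / z) ^ n • (z)⁻¹ • h z) = 0 := by
      intro n
      have hcongr : (∮ z in C(0, R), (x / z) ^ n • (z)⁻¹ • h z)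
          = ∮ z in C(0, R), x ^ n * (z ^ (-(n:ℤ) - 1) * h z) := by
        refine circleIntegral.integral_congr hR.le fun z hz => ?_
        have hz0 : z ≠ 0 := hsph_ne hR z hz
        have hzp : (z:ℂ) ^ (-(n:ℤ) - 1) = (z ^ n)⁻¹ * z⁻¹ := by
          rw [show (-(n:ℤ) - 1) = -((n:ℤ) + 1) by ring, zpow_neg, zpow_add₀ hz0, zpow_one,
            mul_inv, zpow_natCast]
        rw [hzp, smul_eq_mul, smul_eq_mul, div_pow]
        field_simp
      rw [hcongr, circleIntegral.integral_const_mul, coeffI_eq hd _ hR, h0, mul_zero]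
    have : HasSum (fun _ : ℕ => (0:ℂ)) (∮ z in C(0, R), (z - x)⁻¹ • h z) := by
      convert hs using 1
      · rfl
      exact (funext fun n => (hterm n).symm)
    exact this.unique hasSum_zero
  -- Step 2 : inner integral is zero
  have hinner : (∮ z in C(0, r), (z - x)⁻¹ • h z) = 0 := by
    obtain ⟨M, hM⟩ := (isCompact_sphere (0:ℂ) r).exists_bound_of_continuousOn (hcont hr)
    have hM0 : 0 ≤ M := by
      have hmem : (r : ℂ) ∈ sphere (0:ℂ) r := by
        simp [mem_sphere_zero_iff_norm, abs_of_pos hr]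
      exact (norm_nonneg _).trans (hM _ hmem)
    set t : ℝ := r / ‖x‖ with ht_def
    have ht0 : 0 ≤ t := by positivity
    have ht1 : t < 1 := by rw [ht_def, div_lt_one hax]; exact hrx
    set F : ℕ → ℂ → ℂ := fun n z => -((z / x) ^ n * x⁻¹) * h z with hF_def
    have key : HasSum (fun n => ∮ z in C(0, r), F n z) (∮ z in C(0, r), (z - x)⁻¹ • h z) := by
      apply hasSum_circleIntegral hr
      · intro n
        refine (((continuousOn_id.div_const x).pow n).mul continuousOn_const).neg.mul (hcont hr)
      · exact (summable_geometric_of_lt_one ht0 ht1).mul_left (M * (‖x‖)⁻¹)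
      · intro n z hz
        rw [mem_sphere_zero_iff_norm] at hz
        have hb1 : ‖F n z‖ = (‖z‖ / ‖x‖) ^ n * ‖x‖⁻¹ * ‖h z‖ := by
          simp only [hF_def, norm_neg, norm_mul, norm_pow, norm_div, norm_inv]
        have hMz : ‖h z‖ ≤ M := hM z (by rwa [mem_sphere_zero_iff_norm])
        rw [hb1, hz]
        calc (r / ‖x‖) ^ n * ‖x‖⁻¹ * ‖h z‖
            ≤ (r / ‖x‖) ^ n * ‖x‖⁻¹ * M := by
              refine mul_le_mul_of_nonneg_left hMz (by positivity)
          _ = M * (‖x‖)⁻¹ * t ^ n := by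
              rw [ht_def]; ring
      · intro z hz
        have hz0 : z ≠ 0 := hsph_ne hr z hz
        rw [mem_sphere_zero_iff_norm] at hz
        have hzx : z ≠ x := by
          intro hzz; rw [hzz] at hz; linarith
        have hnorm : ‖z / x‖ < 1 := by
          rw [norm_div, hz, ← ht_def]
          exact ht1
        have hgeo := hasSum_geometric_of_norm_lt_one hnorm
        have := (hgeo.mul_right (x⁻¹ * h z)).neg
        have hxz : x - z ≠ 0 := sub_ne_zero.mpr (Ne.symm hzx)
        have harr : -((1 - z / x)⁻¹ * (x⁻¹ * h z)) = (z - x)⁻¹ • h z := by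
          rw [smul_eq_mul]
          have h1 : (1:ℂ) - z / x = (x - z) / x := by field_simp
          rw [h1, inv_div, show z - x = -(x - z) by ring, inv_neg, neg_mul, neg_inj,
            eq_comm, inv_mul_eq_div, div_eq_iff hxz]
          field_simp
        rw [harr] at this
        convert this using 1
        · rfl
        funext n
        simp only [hF_def]
        ring
    have hterm : ∀ n : ℕ, (∮ z in C(0, r), F n z) = 0 := by
      intro n
      have hcongr : (∮ z in C(0, r), F n z)
          = ∮ z in C(0, r), (-(x⁻¹ ^ n * x⁻¹)) * (z ^ (n:ℤ) * h z) := by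
        refine circleIntegral.integral_congr hr.le fun z hz => ?_
        simp only [hF_def, div_pow, zpow_natCast]
        field_simp
        rw [one_div, inv_pow]
        field_simp
      rw [hcongr, circleIntegral.integral_const_mul, coeffI_eq hd _ hr, h0, mul_zero]
    have : HasSum (fun _ : ℕ => (0:ℂ)) (∮ z in C(0, r), (z - x)⁻¹ • h z) := by
      convert key using 1
      exact (funext fun n => (hterm n).symm)
    exact this.unique hasSum_zero
  -- Step 3 : annulus Cauchy formula
  set k : ℂ → ℂ := dslope h x with hk_def
  have hkd : DifferentiableOn ℂ k {z : ℂ | z ≠ 0} := by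
    rw [hk_def]
    refine (differentiableOn_dslope ?_).mpr ?_
    · exact (isOpen_ne).mem_nhds hx
    · intro z hz
      exact (hd z hz).differentiableWithinAt
  have hopen : IsOpen {z : ℂ | z ≠ 0} := isOpen_ne
  have hE : (∮ z in C(0, R), k z) = ∮ z in C(0, r), k z := by
    apply circleIntegral_eq_of_differentiable_on_annulus_off_countable hr hle countable_empty
    · intro z hz
      have hz0 : z ≠ 0 := by
        refine ne_zero_of_norm_pos hr ?_
        have := hz.2
        rw [mem_ball_zero_iff] at this
        push_neg at this
        exact this
      exact ((hkd z hz0).differentiableAt (hopen.mem_nhds hz0)).continuousAt.continuousWithinAt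
    · intro z hz
      have hz0 : z ≠ 0 := by
        refine ne_zero_of_norm_pos hr ?_
        have := hz.1.2
        rw [mem_closedBall_zero_iff] at this
        push_neg at this
        exact this.le
      exact (hkd z hz0).differentiableAt (hopen.mem_nhds hz0)
  -- expand both circle integrals of k
  have hexp : ∀ {ρ : ℝ}, 0 < ρ → x ∉ sphere (0:ℂ) ρ →
      (∮ z in C(0, ρ), k z)
        = (∮ z in C(0, ρ), (z - x)⁻¹ • h z) - (∮ z in C(0, ρ), (z - x)⁻¹) * h x := by
    intro ρ hρ hxs
    have hcongr : (∮ z in C(0, ρ), k z)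
        = ∮ z in C(0, ρ), ((z - x)⁻¹ • h z - (z - x)⁻¹ • h x) := by
      refine circleIntegral.integral_congr hρ.le fun z hz => ?_
      have hzx : z ≠ x := fun hzz => hxs (hzz ▸ hz)
      rw [hk_def, dslope_of_ne h hzx, slope_def_field]
      rw [smul_eq_mul, smul_eq_mul]
      have : z - x ≠ 0 := sub_ne_zero.mpr hzx
      field_simp
    have h1int : CircleIntegrable (fun z => (z - x)⁻¹ • h z) 0 ρ := by
      refine ContinuousOn.circleIntegrable hρ.le ?_
      refine (ContinuousOn.inv₀ (continuousOn_id.sub continuousOn_const) ?_).smul (hcont hρ)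
      intro z hz
      exact sub_ne_zero.mpr (fun hzz => hxs (by rw [← show z = x from hzz]; exact hz))
    have h2int : CircleIntegrable (fun z => (z - x)⁻¹ • h x) 0 ρ := by
      refine ContinuousOn.circleIntegrable hρ.le ?_
      refine (ContinuousOn.inv₀ (continuousOn_id.sub continuousOn_const) ?_).smul continuousOn_const
      intro z hz
      exact sub_ne_zero.mpr (fun hzz => hxs (by rw [← show z = x from hzz]; exact hz))
    rw [hcongr, circleIntegral.integral_sub h1int h2int, circleIntegral.integral_smul_const]
    try rfl
  have hxsR : x ∉ sphere (0:ℂ) R := by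
    rw [mem_sphere_zero_iff_norm]
    intro hcon
    linarith
  have hxsr : x ∉ sphere (0:ℂ) r := by
    rw [mem_sphere_zero_iff_norm]
    intro hcon
    linarith
  have hIR : (∮ z in C(0, R), (z - x)⁻¹) = 2 * π * I := by
    apply circleIntegral.integral_sub_inv_of_mem_ball
    rw [mem_ball_zero_iff]
    exact hxR
  have hIr : (∮ z in C(0, r), (z - x)⁻¹) = 0 := by
    apply circleIntegral_eq_zero_of_differentiable_on_off_countable hr.le countable_empty
    · intro z hz
      rw [mem_closedBall_zero_iff] at hz
      have hzx : z ≠ x := by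
        intro hzz
        rw [hzz] at hz
        linarith
      exact (((differentiableAt_id (𝕜 := ℂ) (x := z)).sub_const x).inv (sub_ne_zero.mpr hzx)).continuousAt.continuousWithinAt
    · intro z hz
      have hz' : ‖z‖ < r := by simpa [mem_ball_zero_iff] using hz.1
      have hzx : z ≠ x := by
        intro hzz
        rw [hzz] at hz'
        linarith
      exact ((differentiableAt_id (𝕜 := ℂ) (x := z)).sub_const x).inv (sub_ne_zero.mpr hzx)
  rw [hexp hR hxsR, hexp hr hxsr, houter, hinner, hIR, hIr] at hE
  have h2pi : (2 * (π:ℂ) * I) ≠ 0 :=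
    mul_ne_zero (mul_ne_zero two_ne_zero (Complex.ofReal_ne_zero.mpr Real.pi_ne_zero))
      Complex.I_ne_zero
  simp only [zero_sub, zero_mul, neg_zero, neg_eq_zero] at hE
  exact (mul_eq_zero.mp hE).resolve_left h2pi

-- coefficient of φ
lemma coeffI_phi {q cc : ℂ} (hq0 : 0 < ‖q‖) (hq1 : ‖q‖ < 1) (hc : cc ≠ 0) :
    coeffI (fun x => theta q (x / cc)) (-1) = 2 * π * I := by
  have hacc : 0 < ‖cc‖ := by simpa [norm_pos_iff] using hc
  set F : ℤ → ℂ → ℂ := fun n z => z ^ (-1 : ℤ) * (q ^ (n*(n-1)/2) * (z / cc) ^ n) with hF_def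
  have key : HasSum (fun n => ∮ z in C(0, (1:ℝ)), F n z)
      (∮ z in C(0, (1:ℝ)), z ^ (-1 : ℤ) * theta q (z / cc)) := by
    apply hasSum_circleIntegral one_pos
      (u := fun n : ℤ => ‖q‖ ^ (n*(n-1)/2) * ((‖cc‖)⁻¹) ^ n)
    · intro n
      refine ContinuousOn.mul ?_ ?_
      · intro z hz
        have hz0 : z ≠ 0 := ne_zero_of_norm_pos one_pos
          (by rw [mem_sphere_zero_iff_norm] at hz; exact hz.ge)
        exact ((differentiableAt_zpow (m := (-1:ℤ))).mpr
          (Or.inl hz0)).continuousAt.continuousWithinAt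
      · intro z hz
        have hz0 : z ≠ 0 := ne_zero_of_norm_pos one_pos
          (by rw [mem_sphere_zero_iff_norm] at hz; exact hz.ge)
        have hzc : z / cc ≠ 0 := div_ne_zero hz0 hc
        exact ((((differentiableAt_zpow (m := n)).mpr (Or.inl hzc)).comp z
          ((differentiableAt_id).div_const cc)).const_mul _).continuousAt.continuousWithinAt
    · exact summable_theta_aux hq0 hq1 (by positivity)
    · intro n z hz
      rw [mem_sphere_zero_iff_norm] at hz
      have hz1 : ‖z‖ = 1 := hz
      rw [hF_def]
      simp only
      rw [norm_mul, norm_theta_term q (z/cc) n, norm_zpow, hz1,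
        one_zpow, one_mul, norm_div, hz1, one_div]
    · intro z hz
      rw [mem_sphere_zero_iff_norm] at hz
      have hz0 : z ≠ 0 := ne_zero_of_norm_pos one_pos hz.ge
      have hzc : z / cc ≠ 0 := div_ne_zero hz0 hc
      exact (hasSum_theta hq0 hq1 hzc).mul_left _
  have hterm : ∀ n : ℤ, (∮ z in C(0, (1:ℝ)), F n z)
      = if n = 0 then (2 * (π:ℂ) * I) else 0 := by
    intro n
    have hcongr : (∮ z in C(0, (1:ℝ)), F n z)
        = ∮ z in C(0, (1:ℝ)), (q ^ (n*(n-1)/2) * cc ^ (-n)) * z ^ (n - 1) := by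
      refine circleIntegral.integral_congr one_pos.le fun z hz => ?_
      rw [mem_sphere_zero_iff_norm] at hz
      have hz0 : z ≠ 0 := ne_zero_of_norm_pos one_pos hz.ge
      rw [hF_def]
      simp only
      rw [div_zpow, zpow_sub₀ hz0, zpow_one, zpow_neg, zpow_neg cc n, zpow_one]
      simp only [div_eq_mul_inv]
      ring
    rw [hcongr, circleIntegral.integral_const_mul]
    rcases eq_or_ne n 0 with rfl | hn
    · simp only [if_true]
      have : (∮ z in C(0, (1:ℝ)), z ^ ((0:ℤ) - 1)) = 2 * (π:ℂ) * I := by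
        have h2 := circleIntegral.integral_sub_center_inv (0:ℂ) (R := (1:ℝ)) one_ne_zero
        have hcongr2 : (∮ z in C(0, (1:ℝ)), z ^ ((0:ℤ) - 1)) = ∮ z in C(0, (1:ℝ)), (z - 0)⁻¹ := by
          refine circleIntegral.integral_congr one_pos.le fun z hz => ?_
          norm_num
        rw [hcongr2, h2]
      rw [this]
      norm_num
    · rw [if_neg hn]
      have hne : n - 1 ≠ -1 := by omega
      have h3 := circleIntegral.integral_sub_zpow_of_ne hne 0 0 (1:ℝ)
      have hcongr3 : (∮ z in C(0, (1:ℝ)), z ^ (n - 1)) = ∮ z in C(0, (1:ℝ)), (z - 0) ^ (n-1) := by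
        refine circleIntegral.integral_congr one_pos.le fun z hz => ?_
        norm_num
      rw [hcongr3, h3, mul_zero]
  have key2 : HasSum (fun n : ℤ => if n = 0 then (2 * (π:ℂ) * I) else 0)
      (∮ z in C(0, (1:ℝ)), z ^ (-1 : ℤ) * theta q (z / cc)) := by
    rwa [funext hterm] at key
  have := (hasSum_ite_eq (0:ℤ) (2 * (π:ℂ) * I)).unique key2
  unfold coeffI
  exact this.symm

-- derivative of Φ is differentiable (holomorphy)
lemma deriv_differentiableAt {φ : ℂ → ℂ} (hφ : ∀ z : ℂ, z ≠ 0 → DifferentiableAt ℂ φ z)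
    {x : ℂ} (hx : x ≠ 0) : DifferentiableAt ℂ (deriv φ) x := by
  have hopen : IsOpen {z : ℂ | z ≠ 0} := isOpen_ne
  have hdOn : DifferentiableOn ℂ φ {z : ℂ | z ≠ 0} :=
    fun z hz => (hφ z hz).differentiableWithinAt
  have han : AnalyticAt ℂ φ x := hdOn.analyticAt (hopen.mem_nhds hx)
  have h1 : DifferentiableAt ℂ (fderiv ℂ φ) x := han.fderiv.differentiableAt
  have hfun : deriv φ = fun y => fderiv ℂ φ y 1 := funext fun y => (fderiv_apply_one_eq_deriv).symm
  rw [hfun]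
  exact h1.clm_apply (differentiableAt_const 1)

-- functional equation for ψ
lemma psi_eq {q c : ℂ} (hq : q ≠ 0) {φ : ℂ → ℂ}
    (hφ : ∀ z : ℂ, z ≠ 0 → DifferentiableAt ℂ φ z)
    (hφe : ∀ x : ℂ, x ≠ 0 → φ (q * x) = c / x * φ x)
    {x : ℂ} (hx : x ≠ 0) :
    (q * x) * deriv φ (q * x) = c / x * ((x * deriv φ x) - φ x) := by
  have hqx : q * x ≠ 0 := mul_ne_zero hq hx
  have hopen : IsOpen {z : ℂ | z ≠ 0} := isOpen_ne
  have hev : (fun y => φ (q * y)) =ᶠ[nhds x] (fun y => c / y * φ y) := by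
    filter_upwards [hopen.mem_nhds hx] with y hy
    exact hφe y hy
  have hL : HasDerivAt (fun y => φ (q * y)) (deriv φ (q * x) * q) x := by
    have h1 : HasDerivAt (fun y : ℂ => q * y) q x := by
      simpa using (hasDerivAt_id x).const_mul q
    exact ((hφ (q*x) hqx).hasDerivAt).comp x h1
  have hR : HasDerivAt (fun y => c / y * φ y)
      ((c * (-(x^2)⁻¹)) * φ x + c / x * deriv φ x) x := by
    have h1 : HasDerivAt (fun y : ℂ => c / y) (c * (-(x^2)⁻¹)) x := by
      simpa [div_eq_mul_inv] using (hasDerivAt_inv hx).const_mul c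
    exact h1.mul ((hφ x hx).hasDerivAt)
  have heq : deriv φ (q * x) * q = (c * (-(x^2)⁻¹)) * φ x + c / x * deriv φ x := by
    rw [← hL.deriv, ← hR.deriv]
    exact hev.deriv_eq
  have hgoal : (q * x) * deriv φ (q*x) = x * (deriv φ (q*x) * q) := by ring
  rw [hgoal, heq]
  field_simp
  ring

-- linearity of coefficients
lemma coeffI_sub_smul {f g : ℂ → ℂ} (hdf : ∀ z : ℂ, z ≠ 0 → DifferentiableAt ℂ f z)
    (hdg : ∀ z : ℂ, z ≠ 0 → DifferentiableAt ℂ g z) (α : ℂ) (m : ℤ) :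
    coeffI (fun x => f x - α * g x) m = coeffI f m - α * coeffI g m := by
  unfold coeffI
  have hsph : ∀ z ∈ sphere (0:ℂ) (1:ℝ), z ≠ 0 := fun z hz =>
    ne_zero_of_norm_pos one_pos (by rw [mem_sphere_zero_iff_norm] at hz; exact hz.ge)
  have hcongr : (∮ z in C(0, (1:ℝ)), z ^ m * (f z - α * g z))
      = ∮ z in C(0, (1:ℝ)), (z ^ m * f z - α * (z ^ m * g z)) := by
    refine circleIntegral.integral_congr one_pos.le fun z hz => ?_
    ring
  have hint : ∀ {h : ℂ → ℂ}, (∀ z : ℂ, z ≠ 0 → DifferentiableAt ℂ h z) →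
      CircleIntegrable (fun z => z ^ m * h z) 0 1 := by
    intro h hd
    refine ContinuousOn.circleIntegrable one_pos.le fun z hz => ?_
    have hz0 := hsph z hz
    exact (((differentiableAt_zpow (m := m)).mpr (Or.inl hz0)).mul
      (hd z hz0)).continuousAt.continuousWithinAt
  have h2 : CircleIntegrable (fun z => α * (z ^ m * g z)) 0 1 := by
    refine ContinuousOn.circleIntegrable one_pos.le fun z hz => ?_
    have hz0 := hsph z hz
    exact (continuousAt_const.mul (((differentiableAt_zpow (m := m)).mpr (Or.inl hz0)).mul
      (hdg z hz0)).continuousAt).continuousWithinAt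
  rw [hcongr, circleIntegral.integral_sub (hint hdf) h2, circleIntegral.integral_const_mul]

/-- If `f(qx) = (c/x) f(x)` and `g(qx) = (c/x)(g(x) − f(x))` on `ℂ*`, then with
`φ(x) = θ_q(x/c)` and `ψ(x) = x φ'(x)` one has `f = α φ` and `g = α ψ + β φ`. -/
theorem stmt1 (q : ℂ) (hq0 : 0 < ‖q‖) (hq1 : ‖q‖ < 1)
    (c : ℂ) (hc : c ≠ 0) (f g : ℂ → ℂ)
    (hf : ∀ x : ℂ, x ≠ 0 → DifferentiableAt ℂ f x)
    (hg : ∀ x : ℂ, x ≠ 0 → DifferentiableAt ℂ g x)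
    (hfe : ∀ x : ℂ, x ≠ 0 → f (q * x) = c / x * f x)
    (hge : ∀ x : ℂ, x ≠ 0 → g (q * x) = c / x * (g x - f x)) :
    ∃ α β : ℂ,
      (∀ x : ℂ, x ≠ 0 → f x = α * theta q (x / c)) ∧
      (∀ x : ℂ, x ≠ 0 →
        g x = α * (x * deriv (fun y : ℂ => theta q (y / c)) x) + β * theta q (x / c)) := by
  have hq : q ≠ 0 := by
    intro h; rw [h] at hq0; simp at hq0
  have h2pi : (2 * (π:ℂ) * I) ≠ 0 :=
    mul_ne_zero (mul_ne_zero two_ne_zero (Complex.ofReal_ne_zero.mpr Real.pi_ne_zero))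
      Complex.I_ne_zero
  set Φ : ℂ → ℂ := fun y => theta q (y / c) with hΦ_def
  have hΦd : ∀ x : ℂ, x ≠ 0 → DifferentiableAt ℂ Φ x := fun x hx =>
    phi_differentiableAt hq0 hq1 hc hx
  have hΦe : ∀ x : ℂ, x ≠ 0 → Φ (q * x) = c / x * Φ x := by
    intro x hx
    have hxc : x / c ≠ 0 := div_ne_zero hx hc
    have hmul : q * x / c = q * (x / c) := by ring
    show theta q (q * x / c) = c / x * theta q (x / c)
    rw [hmul, theta_q_mul hq hxc, inv_div]
  have hΦ0 : coeffI Φ (-1) = 2 * π * I := coeffI_phi hq0 hq1 hc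
  set α : ℂ := coeffI f (-1) / (2 * π * I) with hα
  have hhd : ∀ x : ℂ, x ≠ 0 → DifferentiableAt ℂ (fun x => f x - α * Φ x) x := fun x hx =>
    (hf x hx).sub ((hΦd x hx).const_mul α)
  have hheq : ∀ x : ℂ, x ≠ 0 →
      (fun x => f x - α * Φ x) (q * x) = c / x * (fun x => f x - α * Φ x) x := by
    intro x hx
    simp only
    rw [hfe x hx, hΦe x hx]
    ring
  have hh0 : coeffI (fun x => f x - α * Φ x) (-1) = 0 := by
    rw [coeffI_sub_smul hf hΦd α (-1), hΦ0, hα, div_mul_cancel₀ _ h2pi, sub_self]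
  have hfeq : ∀ x : ℂ, x ≠ 0 → f x = α * Φ x := by
    intro x hx
    have := eq_zero_of_coeffI_zero hhd (coeffI_all_zero hq hc hhd hheq hh0) x hx
    exact sub_eq_zero.mp this
  set ψ : ℂ → ℂ := fun y => y * deriv Φ y with hψ_def
  have hψd : ∀ x : ℂ, x ≠ 0 → DifferentiableAt ℂ ψ x := fun x hx =>
    differentiableAt_id.mul (deriv_differentiableAt hΦd hx)
  have hψe : ∀ x : ℂ, x ≠ 0 → ψ (q * x) = c / x * (ψ x - Φ x) := fun x hx =>
    psi_eq hq hΦd hΦe hx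
  have hGd : ∀ x : ℂ, x ≠ 0 → DifferentiableAt ℂ (fun x => g x - α * ψ x) x := fun x hx =>
    (hg x hx).sub ((hψd x hx).const_mul α)
  have hGeq : ∀ x : ℂ, x ≠ 0 →
      (fun x => g x - α * ψ x) (q * x) = c / x * (fun x => g x - α * ψ x) x := by
    intro x hx
    simp only
    rw [hge x hx, hψe x hx, hfeq x hx]
    ring
  set β : ℂ := coeffI (fun x => g x - α * ψ x) (-1) / (2 * π * I) with hβ
  have hHd : ∀ x : ℂ, x ≠ 0 →
      DifferentiableAt ℂ (fun x => (g x - α * ψ x) - β * Φ x) x := fun x hx =>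
    (hGd x hx).sub ((hΦd x hx).const_mul β)
  have hHeq : ∀ x : ℂ, x ≠ 0 →
      (fun x => (g x - α * ψ x) - β * Φ x) (q * x)
        = c / x * (fun x => (g x - α * ψ x) - β * Φ x) x := by
    intro x hx
    simp only
    have h1 := hGeq x hx
    simp only at h1
    rw [h1, hΦe x hx]
    ring
  have hH0 : coeffI (fun x => (g x - α * ψ x) - β * Φ x) (-1) = 0 := by
    rw [coeffI_sub_smul hGd hΦd β (-1), hΦ0, hβ, div_mul_cancel₀ _ h2pi, sub_self]
  have hgeq : ∀ x : ℂ, x ≠ 0 → g x = α * ψ x + β * Φ x := by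
    intro x hx
    have := eq_zero_of_coeffI_zero hHd (coeffI_all_zero hq hc hHd hHeq hH0) x hx
    have h2 := sub_eq_zero.mp this
    have h3 := sub_eq_zero.mp (by rw [h2]; ring : (g x - α * ψ x) - β * Φ x = 0)
    linear_combination h3
  exact ⟨α, β, fun x hx => hfeq x hx, fun x hx => hgeq x hx⟩
end

section
/- Assuming (FR) and (NR), there always exists an indexing of the intermediate singularities for which the non-splitting condition holds: there exist indices 1 ≤ i < j ≤ 4 such that for all m, n ∈ {1, 2}, ρ_m/σ_n ≢ x_i x_j (mod q^ℤ). -/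
/-- `a ≡ b (mod q^ℤ)`, i.e. `a/b ∈ q^ℤ`. -/
def qCong (q a b : ℂ) : Prop := ∃ m : ℤ, a = q ^ m * b

theorem key {G : Type*} [CommGroup G] (a b c d y1 y2 y3 y4 : G)
    (hP : a * d = b * c)
    (hFR : y1 * y2 * y3 * y4 = a * d)
    (h12 : y1 ≠ y2) (h13 : y1 ≠ y3) (h14 : y1 ≠ y4)
    (h23 : y2 ≠ y3) (h24 : y2 ≠ y4) (h34 : y3 ≠ y4)
    (m12 : y1*y2 = a ∨ y1*y2 = b ∨ y1*y2 = c ∨ y1*y2 = d)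
    (m13 : y1*y3 = a ∨ y1*y3 = b ∨ y1*y3 = c ∨ y1*y3 = d)
    (m14 : y1*y4 = a ∨ y1*y4 = b ∨ y1*y4 = c ∨ y1*y4 = d) : False := by
  rcases m12 with E12|E12|E12|E12 <;> rcases m13 with E13|E13|E13|E13 <;>
    rcases m14 with E14|E14|E14|E14
  · exact h23 (mul_left_cancel (E12.trans E13.symm))
  · exact h23 (mul_left_cancel (E12.trans E13.symm))
  · exact h23 (mul_left_cancel (E12.trans E13.symm))
  · exact h23 (mul_left_cancel (E12.trans E13.symm))
  · exact h24 (mul_left_cancel (E12.trans E14.symm))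
  · exact h34 (mul_left_cancel (E13.trans E14.symm))
  · have h23' : y1*y4*(y2*y3) = a*d := by rw [mul_mul_mul_comm, mul_comm y4 y3, ← mul_assoc]; exact hFR
    rw [E14] at h23'
    rw [hP, mul_comm b c] at h23'
    have E23 : y2*y3 = b := mul_left_cancel h23'
    exact h12 (mul_right_cancel (E13.trans E23.symm))
  · have h23' : y1*y4*(y2*y3) = a*d := by rw [mul_mul_mul_comm, mul_comm y4 y3, ← mul_assoc]; exact hFR
    rw [E14] at h23'
    rw [mul_comm a d] at h23'
    have E23 : y2*y3 = a := mul_left_cancel h23'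
    have h := E12.trans E23.symm; rw [mul_comm y1 y2] at h; exact h13 (mul_left_cancel h)
  · exact h24 (mul_left_cancel (E12.trans E14.symm))
  · have h23' : y1*y4*(y2*y3) = a*d := by rw [mul_mul_mul_comm, mul_comm y4 y3, ← mul_assoc]; exact hFR
    rw [E14] at h23'
    rw [hP] at h23'
    have E23 : y2*y3 = c := mul_left_cancel h23'
    exact h12 (mul_right_cancel (E13.trans E23.symm))
  · exact h34 (mul_left_cancel (E13.trans E14.symm))
  · have h23' : y1*y4*(y2*y3) = a*d := by rw [mul_mul_mul_comm, mul_comm y4 y3, ← mul_assoc]; exact hFR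
    rw [E14] at h23'
    rw [mul_comm a d] at h23'
    have E23 : y2*y3 = a := mul_left_cancel h23'
    have h := E12.trans E23.symm; rw [mul_comm y1 y2] at h; exact h13 (mul_left_cancel h)
  · exact h24 (mul_left_cancel (E12.trans E14.symm))
  · have h24' : y1*y3*(y2*y4) = a*d := by rw [mul_mul_mul_comm, ← mul_assoc]; exact hFR
    rw [E13] at h24'
    rw [mul_comm a d] at h24'
    have E24 : y2*y4 = a := mul_left_cancel h24'
    have h := E12.trans E24.symm; rw [mul_comm y1 y2] at h; exact h14 (mul_left_cancel h)
  · have h24' : y1*y3*(y2*y4) = a*d := by rw [mul_mul_mul_comm, ← mul_assoc]; exact hFR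
    rw [E13] at h24'
    rw [mul_comm a d] at h24'
    have E24 : y2*y4 = a := mul_left_cancel h24'
    have h := E12.trans E24.symm; rw [mul_comm y1 y2] at h; exact h14 (mul_left_cancel h)
  · exact h34 (mul_left_cancel (E13.trans E14.symm))
  · exact h34 (mul_left_cancel (E13.trans E14.symm))
  · exact h24 (mul_left_cancel (E12.trans E14.symm))
  · have h23' : y1*y4*(y2*y3) = a*d := by rw [mul_mul_mul_comm, mul_comm y4 y3, ← mul_assoc]; exact hFR
    rw [E14] at h23'
    rw [hP, mul_comm b c] at h23'
    have E23 : y2*y3 = b := mul_left_cancel h23'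
    have h := E12.trans E23.symm; rw [mul_comm y1 y2] at h; exact h13 (mul_left_cancel h)
  · have h23' : y1*y4*(y2*y3) = a*d := by rw [mul_mul_mul_comm, mul_comm y4 y3, ← mul_assoc]; exact hFR
    rw [E14] at h23'
    rw [mul_comm a d] at h23'
    have E23 : y2*y3 = a := mul_left_cancel h23'
    exact h12 (mul_right_cancel (E13.trans E23.symm))
  · exact h23 (mul_left_cancel (E12.trans E13.symm))
  · exact h23 (mul_left_cancel (E12.trans E13.symm))
  · exact h23 (mul_left_cancel (E12.trans E13.symm))
  · exact h23 (mul_left_cancel (E12.trans E13.symm))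
  · have h24' : y1*y3*(y2*y4) = a*d := by rw [mul_mul_mul_comm, ← mul_assoc]; exact hFR
    rw [E13] at h24'
    rw [hP, mul_comm b c] at h24'
    have E24 : y2*y4 = b := mul_left_cancel h24'
    have h := E12.trans E24.symm; rw [mul_comm y1 y2] at h; exact h14 (mul_left_cancel h)
  · exact h24 (mul_left_cancel (E12.trans E14.symm))
  · exact h34 (mul_left_cancel (E13.trans E14.symm))
  · have h24' : y1*y3*(y2*y4) = a*d := by rw [mul_mul_mul_comm, ← mul_assoc]; exact hFR
    rw [E13] at h24'
    rw [hP, mul_comm b c] at h24'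
    have E24 : y2*y4 = b := mul_left_cancel h24'
    have h := E12.trans E24.symm; rw [mul_comm y1 y2] at h; exact h14 (mul_left_cancel h)
  · have h23' : y1*y4*(y2*y3) = a*d := by rw [mul_mul_mul_comm, mul_comm y4 y3, ← mul_assoc]; exact hFR
    rw [E14] at h23'
    have E23 : y2*y3 = d := mul_left_cancel h23'
    exact h12 (mul_right_cancel (E13.trans E23.symm))
  · exact h24 (mul_left_cancel (E12.trans E14.symm))
  · have h23' : y1*y4*(y2*y3) = a*d := by rw [mul_mul_mul_comm, mul_comm y4 y3, ← mul_assoc]; exact hFR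
    rw [E14] at h23'
    rw [hP, mul_comm b c] at h23'
    have E23 : y2*y3 = b := mul_left_cancel h23'
    have h := E12.trans E23.symm; rw [mul_comm y1 y2] at h; exact h13 (mul_left_cancel h)
  · exact h34 (mul_left_cancel (E13.trans E14.symm))
  · exact h34 (mul_left_cancel (E13.trans E14.symm))
  · have h23' : y1*y4*(y2*y3) = a*d := by rw [mul_mul_mul_comm, mul_comm y4 y3, ← mul_assoc]; exact hFR
    rw [E14] at h23'
    rw [hP] at h23'
    have E23 : y2*y3 = c := mul_left_cancel h23'
    have h := E12.trans E23.symm; rw [mul_comm y1 y2] at h; exact h13 (mul_left_cancel h)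
  · exact h24 (mul_left_cancel (E12.trans E14.symm))
  · have h23' : y1*y4*(y2*y3) = a*d := by rw [mul_mul_mul_comm, mul_comm y4 y3, ← mul_assoc]; exact hFR
    rw [E14] at h23'
    rw [mul_comm a d] at h23'
    have E23 : y2*y3 = a := mul_left_cancel h23'
    exact h12 (mul_right_cancel (E13.trans E23.symm))
  · have h24' : y1*y3*(y2*y4) = a*d := by rw [mul_mul_mul_comm, ← mul_assoc]; exact hFR
    rw [E13] at h24'
    rw [hP] at h24'
    have E24 : y2*y4 = c := mul_left_cancel h24'
    have h := E12.trans E24.symm; rw [mul_comm y1 y2] at h; exact h14 (mul_left_cancel h)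
  · exact h34 (mul_left_cancel (E13.trans E14.symm))
  · exact h24 (mul_left_cancel (E12.trans E14.symm))
  · have h24' : y1*y3*(y2*y4) = a*d := by rw [mul_mul_mul_comm, ← mul_assoc]; exact hFR
    rw [E13] at h24'
    rw [hP] at h24'
    have E24 : y2*y4 = c := mul_left_cancel h24'
    have h := E12.trans E24.symm; rw [mul_comm y1 y2] at h; exact h14 (mul_left_cancel h)
  · exact h23 (mul_left_cancel (E12.trans E13.symm))
  · exact h23 (mul_left_cancel (E12.trans E13.symm))
  · exact h23 (mul_left_cancel (E12.trans E13.symm))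
  · exact h23 (mul_left_cancel (E12.trans E13.symm))
  · have h23' : y1*y4*(y2*y3) = a*d := by rw [mul_mul_mul_comm, mul_comm y4 y3, ← mul_assoc]; exact hFR
    rw [E14] at h23'
    have E23 : y2*y3 = d := mul_left_cancel h23'
    exact h12 (mul_right_cancel (E13.trans E23.symm))
  · have h23' : y1*y4*(y2*y3) = a*d := by rw [mul_mul_mul_comm, mul_comm y4 y3, ← mul_assoc]; exact hFR
    rw [E14] at h23'
    rw [hP] at h23'
    have E23 : y2*y3 = c := mul_left_cancel h23'
    have h := E12.trans E23.symm; rw [mul_comm y1 y2] at h; exact h13 (mul_left_cancel h)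
  · exact h24 (mul_left_cancel (E12.trans E14.symm))
  · exact h34 (mul_left_cancel (E13.trans E14.symm))
  · exact h34 (mul_left_cancel (E13.trans E14.symm))
  · have h24' : y1*y3*(y2*y4) = a*d := by rw [mul_mul_mul_comm, ← mul_assoc]; exact hFR
    rw [E13] at h24'
    have E24 : y2*y4 = d := mul_left_cancel h24'
    have h := E12.trans E24.symm; rw [mul_comm y1 y2] at h; exact h14 (mul_left_cancel h)
  · have h24' : y1*y3*(y2*y4) = a*d := by rw [mul_mul_mul_comm, ← mul_assoc]; exact hFR
    rw [E13] at h24'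
    have E24 : y2*y4 = d := mul_left_cancel h24'
    have h := E12.trans E24.symm; rw [mul_comm y1 y2] at h; exact h14 (mul_left_cancel h)
  · exact h24 (mul_left_cancel (E12.trans E14.symm))
  · have h23' : y1*y4*(y2*y3) = a*d := by rw [mul_mul_mul_comm, mul_comm y4 y3, ← mul_assoc]; exact hFR
    rw [E14] at h23'
    have E23 : y2*y3 = d := mul_left_cancel h23'
    have h := E12.trans E23.symm; rw [mul_comm y1 y2] at h; exact h13 (mul_left_cancel h)
  · exact h34 (mul_left_cancel (E13.trans E14.symm))
  · have h23' : y1*y4*(y2*y3) = a*d := by rw [mul_mul_mul_comm, mul_comm y4 y3, ← mul_assoc]; exact hFR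
    rw [E14] at h23'
    rw [hP, mul_comm b c] at h23'
    have E23 : y2*y3 = b := mul_left_cancel h23'
    exact h12 (mul_right_cancel (E13.trans E23.symm))
  · exact h24 (mul_left_cancel (E12.trans E14.symm))
  · have h23' : y1*y4*(y2*y3) = a*d := by rw [mul_mul_mul_comm, mul_comm y4 y3, ← mul_assoc]; exact hFR
    rw [E14] at h23'
    have E23 : y2*y3 = d := mul_left_cancel h23'
    have h := E12.trans E23.symm; rw [mul_comm y1 y2] at h; exact h13 (mul_left_cancel h)
  · have h23' : y1*y4*(y2*y3) = a*d := by rw [mul_mul_mul_comm, mul_comm y4 y3, ← mul_assoc]; exact hFR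
    rw [E14] at h23'
    rw [hP] at h23'
    have E23 : y2*y3 = c := mul_left_cancel h23'
    exact h12 (mul_right_cancel (E13.trans E23.symm))
  · exact h34 (mul_left_cancel (E13.trans E14.symm))
  · exact h24 (mul_left_cancel (E12.trans E14.symm))
  · exact h23 (mul_left_cancel (E12.trans E13.symm))
  · exact h23 (mul_left_cancel (E12.trans E13.symm))
  · exact h23 (mul_left_cancel (E12.trans E13.symm))
  · exact h23 (mul_left_cancel (E12.trans E13.symm))

/-- Under (FR) and (NR) there is an indexing of the intermediate singularities for which
the non-splitting condition (NS) holds. -/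
theorem stmt9 (q : ℂ) (hq0 : 0 < ‖q‖) (hq1 : ‖q‖ < 1)
    (ρ σv : Fin 2 → ℂ) (xs : Fin 4 → ℂ)
    (hρ0 : ∀ i, ρ i ≠ 0) (hσ0 : ∀ i, σv i ≠ 0) (hx0 : ∀ k, xs k ≠ 0)
    (hFR : qCong q (xs 0 * xs 1 * xs 2 * xs 3) (ρ 0 * ρ 1 / (σv 0 * σv 1)))
    (hNRρ : ¬ qCong q (ρ 0) (ρ 1)) (hNRσ : ¬ qCong q (σv 0) (σv 1))
    (hNRx : ∀ k l : Fin 4, k ≠ l → ¬ qCong q (xs k) (xs l)) :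
    ∃ i j : Fin 4, i < j ∧ ∀ m n : Fin 2, ¬ qCong q (ρ m / σv n) (xs i * xs j) := by
  have hq : q ≠ 0 := by
    intro h; rw [h] at hq0; simp at hq0
  set qu : ℂˣ := Units.mk0 q hq with hqu
  have hiff : ∀ (a b : ℂ) (ha : a ≠ 0) (hb : b ≠ 0),
      qCong q a b ↔ (QuotientGroup.mk (Units.mk0 a ha) : ℂˣ ⧸ Subgroup.zpowers qu)
        = QuotientGroup.mk (Units.mk0 b hb) := by
    intro a b ha hb
    rw [QuotientGroup.eq, Subgroup.mem_zpowers_iff]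
    constructor
    · rintro ⟨m, hm⟩
      refine ⟨-m, Units.ext ?_⟩
      rw [Units.val_zpow_eq_zpow_val]
      simp only [Units.val_mul, Units.val_inv_eq_inv_val, Units.val_mk0, hqu]
      rw [hm, zpow_neg, mul_inv, mul_assoc, inv_mul_cancel₀ hb, mul_one]
    · rintro ⟨k, hk⟩
      have hk' : (q : ℂ) ^ k = a⁻¹ * b := by
        have h2 := congrArg Units.val hk
        rw [Units.val_zpow_eq_zpow_val] at h2
        simpa [hqu] using h2
      refine ⟨-k, ?_⟩
      rw [zpow_neg, hk', mul_inv, inv_inv, mul_assoc, inv_mul_cancel₀ hb, mul_one]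
  have hmul : ∀ (a b : ℂ) (ha : a ≠ 0) (hb : b ≠ 0),
      (QuotientGroup.mk (Units.mk0 (a * b) (mul_ne_zero ha hb)) : ℂˣ ⧸ Subgroup.zpowers qu)
        = QuotientGroup.mk (Units.mk0 a ha) * QuotientGroup.mk (Units.mk0 b hb) := by
    intro a b ha hb
    exact congrArg _ (Units.ext rfl)
  have hdiv : ∀ (a b : ℂ) (ha : a ≠ 0) (hb : b ≠ 0),
      (QuotientGroup.mk (Units.mk0 (a / b) (div_ne_zero ha hb)) : ℂˣ ⧸ Subgroup.zpowers qu)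
        = QuotientGroup.mk (Units.mk0 a ha) / QuotientGroup.mk (Units.mk0 b hb) := by
    intro a b ha hb
    exact congrArg _ (Units.ext (by simp))
  set Y : Fin 4 → ℂˣ ⧸ Subgroup.zpowers qu :=
    fun k => QuotientGroup.mk (Units.mk0 (xs k) (hx0 k)) with hY
  set R : Fin 2 → ℂˣ ⧸ Subgroup.zpowers qu :=
    fun m => QuotientGroup.mk (Units.mk0 (ρ m) (hρ0 m)) with hR
  set S : Fin 2 → ℂˣ ⧸ Subgroup.zpowers qu :=
    fun n => QuotientGroup.mk (Units.mk0 (σv n) (hσ0 n)) with hS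
  have hYne : ∀ k l : Fin 4, k ≠ l → Y k ≠ Y l := by
    intro k l hkl h
    exact hNRx k l hkl ((hiff _ _ (hx0 k) (hx0 l)).mpr h)
  have hP : (R 0 / S 0) * (R 1 / S 1) = (R 0 / S 1) * (R 1 / S 0) := by
    exact (div_mul_div_comm (R 0) (S 0) (R 1) (S 1)).trans
      (by rw [mul_comm (S 0) (S 1), ← div_mul_div_comm])
  have hFR' : Y 0 * Y 1 * Y 2 * Y 3 = (R 0 / S 0) * (R 1 / S 1) := by
    have h2 := (hiff _ _
      (mul_ne_zero (mul_ne_zero (mul_ne_zero (hx0 0) (hx0 1)) (hx0 2)) (hx0 3))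
      (div_ne_zero (mul_ne_zero (hρ0 0) (hρ0 1)) (mul_ne_zero (hσ0 0) (hσ0 1)))).mp hFR
    rw [hmul _ _ (mul_ne_zero (mul_ne_zero (hx0 0) (hx0 1)) (hx0 2)) (hx0 3),
      hmul _ _ (mul_ne_zero (hx0 0) (hx0 1)) (hx0 2),
      hmul _ _ (hx0 0) (hx0 1),
      hdiv _ _ (mul_ne_zero (hρ0 0) (hρ0 1)) (mul_ne_zero (hσ0 0) (hσ0 1)),
      hmul _ _ (hρ0 0) (hρ0 1), hmul _ _ (hσ0 0) (hσ0 1)] at h2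
    exact h2.trans (div_mul_div_comm (R 0) (S 0) (R 1) (S 1)).symm
  by_contra hcon
  push_neg at hcon
  have memb : ∀ j : Fin 4, (0 : Fin 4) < j →
      (Y 0 * Y j = R 0 / S 0 ∨ Y 0 * Y j = R 0 / S 1 ∨
        Y 0 * Y j = R 1 / S 0 ∨ Y 0 * Y j = R 1 / S 1) := by
    intro j hj
    obtain ⟨m, n, hmn⟩ := hcon 0 j hj
    have h2 := (hiff _ _ (div_ne_zero (hρ0 m) (hσ0 n))
      (mul_ne_zero (hx0 0) (hx0 j))).mp hmn
    rw [hdiv _ _ (hρ0 m) (hσ0 n), hmul _ _ (hx0 0) (hx0 j)] at h2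
    fin_cases m <;> fin_cases n
    · exact Or.inl h2.symm
    · exact Or.inr (Or.inl h2.symm)
    · exact Or.inr (Or.inr (Or.inl h2.symm))
    · exact Or.inr (Or.inr (Or.inr h2.symm))
  exact key (R 0 / S 0) (R 0 / S 1) (R 1 / S 0) (R 1 / S 1) (Y 0) (Y 1) (Y 2) (Y 3)
    hP hFR'
    (hYne 0 1 (by decide)) (hYne 0 2 (by decide)) (hYne 0 3 (by decide))
    (hYne 1 2 (by decide)) (hYne 1 3 (by decide)) (hYne 2 3 (by decide))
    (memb 1 (by decide)) (memb 2 (by decide)) (memb 3 (by decide))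
end

section
/- Let M ∈ F. Then M(x₁) ≠ 0 and M(x₂) ≠ 0, so for i = 1, 2 one may choose a nonzero column (f_i, g_i) of the 2×2 matrix M(x_i). Moreover: (i) one cannot have f₁g₂ = 0 and f₂g₁ = 0 simultaneously; (ii) the ratio (f₁g₂ : f₂g₁) ∈ P¹(ℂ) does not depend on the choices: for any two choices of nonzero columns (f_i, g_i) and (f′_i, g′_i) of M(x_i) (i = 1, 2), one has f₁g₂·f′₂g′₁ = f′₁g′₂·f₂g₁; (iii) this ratio is invariant under the diagonal action: if Γ, Δ ∈ GL₂(ℂ) are invertible diagonal matrices, N := Γ M Δ^{−1}, and (p_i, q_i) is a nonzero column of N(x_i) for i = 1, 2, then f₁g₂·p₂q₁ = p₁q₂·f₂g₁. -/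
open Matrix

/-- Entrywise holomorphy on `ℂ ∖ {0}` of a matrix-valued function. -/
def MatHolo (M : ℂ → Matrix (Fin 2) (Fin 2) ℂ) : Prop :=
  ∀ i j : Fin 2, ∀ x : ℂ, x ≠ 0 → DifferentiableAt ℂ (fun y => M y i j) x

/-- The Jimbo–Sakai monodromy space `F`: `2×2` matrices `M` holomorphic on `ℂ*` with
`x² M(qx) S = R M(x)`, `det M ≢ 0`, and `det M(x_i) = 0` for `i = 1, 2, 3, 4`. -/
def FJS (q : ℂ) (ρ σv : Fin 2 → ℂ) (xs : Fin 4 → ℂ) :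
    Set (ℂ → Matrix (Fin 2) (Fin 2) ℂ) :=
  {M | MatHolo M ∧
    (∀ x : ℂ, x ≠ 0 →
      (x ^ 2) • (M (q * x) * Matrix.diagonal σv) = Matrix.diagonal ρ * M x) ∧
    (∃ x : ℂ, x ≠ 0 ∧ (M x).det ≠ 0) ∧
    ∀ k : Fin 4, (M (xs k)).det = 0}

/-- `(f, g)` is a nonzero column of the `2×2` matrix `A`. -/
def IsNzCol (A : Matrix (Fin 2) (Fin 2) ℂ) (f g : ℂ) : Prop :=
  ∃ j : Fin 2, f = A 0 j ∧ g = A 1 j ∧ ¬(f = 0 ∧ g = 0)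

namespace JS10

noncomputable section

open Filter Topology

/-! ### Basic facts about `q` -/

lemma qne {q : ℂ} (hq0 : 0 < ‖q‖) : q ≠ 0 := by
  simpa [norm_pos_iff] using hq0

lemma qpow_ne_one {q : ℂ} (hq0 : 0 < ‖q‖) (hq1 : ‖q‖ < 1) {k : ℕ} (hk : k ≠ 0) :
    q ^ k ≠ 1 := by
  intro h
  have : ‖q ^ k‖ < 1 := by
    rw [norm_pow]
    exact pow_lt_one₀ (norm_nonneg q) hq1 hk
  rw [h, norm_one] at this; exact lt_irrefl _ this

lemma one_sub_qpow_ne {q : ℂ} (hq0 : 0 < ‖q‖) (hq1 : ‖q‖ < 1) {k : ℕ} (hk : k ≠ 0) :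
    1 - q ^ k ≠ 0 := by
  intro h
  exact qpow_ne_one hq0 hq1 hk (by linear_combination -h)

/-! ### The `q`-Pochhammer-type entire function, defined by its power series -/

/-- Taylor coefficients of the function `(z;q)_∞ = ∏ (1 - qⁿ z)` (Euler). -/
def qc (q : ℂ) : ℕ → ℂ
  | 0 => 1
  | n + 1 => qc q n * (-(q ^ n) / (1 - q ^ (n + 1)))

/-- The entire function `(z;q)_∞`, defined via its power series. -/
def qA (q z : ℂ) : ℂ := ∑' n : ℕ, qc q n * z ^ n

lemma qc_rec {q : ℂ} (hq0 : 0 < ‖q‖) (hq1 : ‖q‖ < 1) (n : ℕ) :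
    qc q (n + 1) * (1 - q ^ (n + 1)) = -(qc q n * q ^ n) := by
  have h := one_sub_qpow_ne hq0 hq1 (Nat.succ_ne_zero n)
  show qc q n * (-(q ^ n) / (1 - q ^ (n + 1))) * (1 - q ^ (n + 1)) = _
  field_simp

lemma norm_qc_succ_le {q : ℂ} (hq0 : 0 < ‖q‖) (hq1 : ‖q‖ < 1) (n : ℕ) :
    ‖qc q (n + 1)‖ ≤ ‖qc q n‖ * (‖q‖ ^ n / (1 - ‖q‖)) := by
  have hd : (1 : ℝ) - ‖q‖ ≤ ‖1 - q ^ (n + 1)‖ := by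
    calc (1 : ℝ) - ‖q‖ ≤ 1 - ‖q ^ (n + 1)‖ := by
          rw [norm_pow]
          have : ‖q‖ ^ (n + 1) ≤ ‖q‖ := pow_le_of_le_one (norm_nonneg q) hq1.le (Nat.succ_ne_zero n)
          linarith
      _ ≤ ‖(1 : ℂ)‖ - ‖q ^ (n + 1)‖ := by rw [norm_one]
      _ ≤ ‖1 - q ^ (n + 1)‖ := norm_sub_norm_le _ _
  have h1q : (0 : ℝ) < 1 - ‖q‖ := by linarith
  show ‖qc q n * (-(q ^ n) / (1 - q ^ (n + 1)))‖ ≤ _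
  rw [norm_mul, norm_div, norm_neg, norm_pow]
  gcongr

lemma summable_norm_qc_mul_pow {q : ℂ} (hq0 : 0 < ‖q‖) (hq1 : ‖q‖ < 1) (R : ℝ) (hR : 0 ≤ R) :
    Summable (fun n : ℕ => ‖qc q n‖ * R ^ n) := by
  have h1q : (0 : ℝ) < 1 - ‖q‖ := by linarith
  have htend : Tendsto (fun n : ℕ => ‖q‖ ^ n * (R / (1 - ‖q‖))) atTop (𝓝 0) := by
    simpa using (tendsto_pow_atTop_nhds_zero_of_lt_one (norm_nonneg q) hq1).mul_const
      (R / (1 - ‖q‖))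
  have hev : ∀ᶠ n : ℕ in atTop, ‖q‖ ^ n * (R / (1 - ‖q‖)) ≤ 1 / 2 := by
    filter_upwards [htend.eventually_le_const (by norm_num : (0:ℝ) < 1/2)] with n hn
    exact hn
  apply summable_of_ratio_norm_eventually_le (r := 1 / 2) (by norm_num)
  filter_upwards [hev] with n hn
  have hb := norm_qc_succ_le hq0 hq1 n
  have h1 : ‖‖qc q (n+1)‖ * R ^ (n+1)‖ ≤ (‖qc q n‖ * (‖q‖ ^ n / (1 - ‖q‖))) * R ^ (n+1) := by
    rw [Real.norm_eq_abs, abs_of_nonneg (by positivity)]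
    gcongr
  refine h1.trans ?_
  calc ‖qc q n‖ * (‖q‖ ^ n / (1 - ‖q‖)) * R ^ (n+1)
      = (‖q‖ ^ n * (R / (1 - ‖q‖))) * (‖qc q n‖ * R ^ n) := by ring
    _ ≤ (1/2) * (‖qc q n‖ * R ^ n) := by
        apply mul_le_mul_of_nonneg_right hn (by positivity)
    _ = 1/2 * ‖‖qc q n‖ * R ^ n‖ := by
        rw [Real.norm_eq_abs, abs_of_nonneg (by positivity)]

lemma summable_qc_mul_pow {q : ℂ} (hq0 : 0 < ‖q‖) (hq1 : ‖q‖ < 1) (z : ℂ) :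
    Summable (fun n : ℕ => qc q n * z ^ n) := by
  apply Summable.of_norm
  have := summable_norm_qc_mul_pow hq0 hq1 ‖z‖ (norm_nonneg z)
  refine this.congr fun n => ?_
  rw [norm_mul, norm_pow]

lemma qA_differentiable {q : ℂ} (hq0 : 0 < ‖q‖) (hq1 : ‖q‖ < 1) :
    Differentiable ℂ (qA q) := by
  intro z₀
  have hR : (0:ℝ) ≤ ‖z₀‖ + 1 := by positivity
  have hU : IsOpen (Metric.ball (0:ℂ) (‖z₀‖ + 1)) := Metric.isOpen_ball
  have hdo := Complex.differentiableOn_tsum_of_summable_norm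
    (F := fun (n : ℕ) (w : ℂ) => qc q n * w ^ n)
    (summable_norm_qc_mul_pow hq0 hq1 (‖z₀‖ + 1) hR)
    (fun n => (Differentiable.differentiableOn (by fun_prop)))
    hU
    (fun n w hw => by
      rw [norm_mul, norm_pow]
      have hw' : ‖w‖ ≤ ‖z₀‖ + 1 := by
        have := Metric.mem_ball.mp hw
        simpa [dist_eq_norm] using this.le
      gcongr)
  have hz₀ : z₀ ∈ Metric.ball (0:ℂ) (‖z₀‖ + 1) := by
    simp [Metric.mem_ball, dist_eq_norm]
  exact (hdo.differentiableAt (hU.mem_nhds hz₀)).congr_of_eventuallyEq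
    (Eventually.of_forall fun w => rfl)

lemma qA_zero (q : ℂ) : qA q 0 = 1 := by
  unfold qA
  rw [tsum_eq_single 0]
  · simp [qc]
  · intro n hn
    simp [zero_pow hn]

lemma qA_funct {q : ℂ} (hq0 : 0 < ‖q‖) (hq1 : ‖q‖ < 1) (z : ℂ) :
    qA q z = (1 - z) * qA q (q * z) := by
  have h1 : Summable fun n : ℕ => qc q n * z ^ n := summable_qc_mul_pow hq0 hq1 z
  have h2 : Summable fun n : ℕ => qc q n * (q * z) ^ n := summable_qc_mul_pow hq0 hq1 (q * z)
  set b : ℕ → ℂ := fun n => qc q n * z ^ n - qc q n * (q * z) ^ n with hb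
  have hbsum : Summable b := h1.sub h2
  have hbsucc : Summable fun n => b (n + 1) := (summable_nat_add_iff 1).mpr hbsum
  have hb0 : b 0 = 0 := by simp [hb, qc]
  have hkey : ∀ n : ℕ, b (n + 1) = -(z * (qc q n * (q * z) ^ n)) := by
    intro n
    have h := qc_rec hq0 hq1 n
    calc b (n + 1) = (qc q (n+1) * (1 - q ^ (n+1))) * z ^ (n+1) := by
          simp only [hb]; ring
      _ = -(qc q n * q ^ n) * z ^ (n + 1) := by rw [h]
      _ = -(z * (qc q n * (q * z) ^ n)) := by ring
  have hsum_b : ∑' n, b n = b 0 + ∑' n, b (n + 1) := Summable.tsum_eq_zero_add hbsum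
  have hsb : ∑' n, b (n + 1) = -(z * ∑' n, qc q n * (q * z) ^ n) := by
    rw [← tsum_mul_left, ← tsum_neg]
    exact tsum_congr hkey
  have hlhs : qA q z - qA q (q * z) = ∑' n, b n := (Summable.tsum_sub h1 h2).symm
  have hfin : qA q z - qA q (q * z) = -(z * qA q (q * z)) := by
    rw [hlhs, hsum_b, hb0, hsb]; simp [qA]
  linear_combination hfin

lemma qA_iter {q : ℂ} (hq0 : 0 < ‖q‖) (hq1 : ‖q‖ < 1) (N : ℕ) (z : ℂ) :
    qA q z = (∏ k ∈ Finset.range N, (1 - q ^ k * z)) * qA q (q ^ N * z) := by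
  induction N with
  | zero => simp
  | succ n ih =>
    rw [ih, Finset.prod_range_succ, qA_funct hq0 hq1 (q ^ n * z)]
    have harg : q * (q ^ n * z) = q ^ (n + 1) * z := by ring
    rw [harg]; ring

lemma qA_ne_zero {q : ℂ} (hq0 : 0 < ‖q‖) (hq1 : ‖q‖ < 1) {z : ℂ}
    (h : ∀ k : ℕ, q ^ k * z ≠ 1) : qA q z ≠ 0 := by
  intro h0
  have hall : ∀ N : ℕ, qA q (q ^ N * z) = 0 := by
    intro N
    have hiter := qA_iter hq0 hq1 N z
    rw [h0] at hiter
    have hprod : (∏ k ∈ Finset.range N, (1 - q ^ k * z)) ≠ 0 := by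
      rw [Finset.prod_ne_zero_iff]
      intro k _
      intro hk
      exact h k (by linear_combination -hk)
    exact (mul_eq_zero.mp hiter.symm).resolve_left hprod
  have htend : Tendsto (fun N : ℕ => q ^ N * z) atTop (𝓝 0) := by
    simpa using (tendsto_pow_atTop_nhds_zero_of_norm_lt_one hq1).mul_const z
  have hc : Tendsto (fun N : ℕ => qA q (q ^ N * z)) atTop (𝓝 (qA q 0)) :=
    ((qA_differentiable hq0 hq1).continuous.continuousAt).tendsto.comp htend
  have h2 : Tendsto (fun N : ℕ => qA q (q ^ N * z)) atTop (𝓝 0) :=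
    tendsto_const_nhds.congr fun N => (hall N).symm
  have : qA q 0 = 0 := tendsto_nhds_unique hc h2
  rw [qA_zero] at this
  exact one_ne_zero this

lemma qA_eq_zero {q : ℂ} (hq0 : 0 < ‖q‖) (hq1 : ‖q‖ < 1) {n : ℕ} {z : ℂ}
    (h : q ^ n * z = 1) : qA q z = 0 := by
  rw [qA_iter hq0 hq1 (n + 1) z]
  apply mul_eq_zero_of_left
  apply Finset.prod_eq_zero (Finset.self_mem_range_succ n)
  rw [h]; ring

lemma qpow_unique {q : ℂ} (hq0 : 0 < ‖q‖) (hq1 : ‖q‖ < 1) {k n : ℕ} {z₀ : ℂ}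
    (h1 : q ^ k * z₀ = 1) (h2 : q ^ n * z₀ = 1) : k = n := by
  have hz₀ : z₀ ≠ 0 := by
    intro h0; rw [h0, mul_zero] at h1; exact one_ne_zero h1.symm
  have hqq : q ^ k = q ^ n := mul_right_cancel₀ hz₀ (h1.trans h2.symm)
  have key : ∀ k n : ℕ, k ≤ n → q ^ k = q ^ n → k = n := by
    intro k n hle he
    by_contra hne
    have hd : n - k ≠ 0 := by omega
    have hadd : q ^ k * q ^ (n - k) = q ^ k * 1 := by
      rw [← pow_add, Nat.add_sub_cancel' hle, mul_one, he]
    have := mul_left_cancel₀ (pow_ne_zero _ (qne hq0)) hadd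
    exact qpow_ne_one hq0 hq1 hd this
  rcases le_total k n with hle | hle
  · exact key k n hle hqq
  · exact (key n k hle hqq.symm).symm

lemma qA_factor {q : ℂ} (hq0 : 0 < ‖q‖) (hq1 : ‖q‖ < 1) {n : ℕ} {z₀ : ℂ}
    (h : q ^ n * z₀ = 1) :
    ∃ V : ℂ → ℂ, Differentiable ℂ V ∧ V z₀ ≠ 0 ∧ ∀ z, qA q z = (z - z₀) * V z := by
  refine ⟨fun z => -(q ^ n) * ((∏ k ∈ Finset.range n, (1 - q ^ k * z)) *
      qA q (q ^ (n + 1) * z)), ?_, ?_, ?_⟩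
  · apply Differentiable.const_mul
    apply Differentiable.mul
    · apply Differentiable.fun_finsetProd
      intro i _
      exact (differentiable_const 1).sub (differentiable_id.const_mul _)
    · exact (qA_differentiable hq0 hq1).comp (differentiable_id.const_mul _)
  · apply mul_ne_zero (neg_ne_zero.mpr (pow_ne_zero _ (qne hq0)))
    apply mul_ne_zero
    · rw [Finset.prod_ne_zero_iff]
      intro k hk
      rw [sub_ne_zero]
      intro hke
      have : k = n := qpow_unique hq0 hq1 hke.symm h
      rw [Finset.mem_range] at hk; omega
    · apply qA_ne_zero hq0 hq1
      intro k
      have he : q ^ k * (q ^ (n + 1) * z₀) = q ^ (k + 1) * (q ^ n * z₀) := by ring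
      rw [he, h, mul_one]
      exact qpow_ne_one hq0 hq1 (Nat.succ_ne_zero k)
  · intro z
    rw [qA_iter hq0 hq1 (n + 1) z, Finset.prod_range_succ]
    have he : (1 - q ^ n * z) = (z - z₀) * (-(q ^ n)) := by linear_combination -h
    rw [he]; ring

/-! ### The function `P_a` with zeros exactly on `q^ℤ a`, all simple -/

def qP (q a x : ℂ) : ℂ := qA q (x / a) * qA q (q * a / x)

lemma qP_diff {q : ℂ} (hq0 : 0 < ‖q‖) (hq1 : ‖q‖ < 1) (a : ℂ) :
    ∀ x : ℂ, x ≠ 0 → DifferentiableAt ℂ (qP q a) x := by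
  intro x hx
  apply DifferentiableAt.mul
  · exact ((qA_differentiable hq0 hq1) _).comp x (differentiableAt_id.div_const a)
  · exact ((qA_differentiable hq0 hq1) _).comp x
      ((differentiableAt_const _).div differentiableAt_id hx)

lemma qP_funct {q : ℂ} (hq0 : 0 < ‖q‖) (hq1 : ‖q‖ < 1) {a : ℂ} (ha : a ≠ 0) :
    ∀ x : ℂ, x ≠ 0 → x * qP q a (q * x) = -a * qP q a x := by
  intro x hx
  have hq : q ≠ 0 := qne hq0
  unfold qP
  have e1 : q * x / a = q * (x / a) := by ring
  have e2 : q * a / (q * x) = a / x := by field_simp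
  rw [e1, e2]
  have f1 : qA q (x / a) = (1 - x / a) * qA q (q * (x / a)) := qA_funct hq0 hq1 _
  have f2 : qA q (a / x) = (1 - a / x) * qA q (q * (a / x)) := qA_funct hq0 hq1 _
  have e3 : q * (a / x) = q * a / x := by ring
  rw [e3] at f2
  rw [f2, f1]
  field_simp
  ring

lemma qP_zero_iff {q : ℂ} (hq0 : 0 < ‖q‖) (hq1 : ‖q‖ < 1) {a : ℂ} (ha : a ≠ 0)
    {x : ℂ} (hx : x ≠ 0) : qP q a x = 0 ↔ ∃ n : ℤ, x = q ^ n * a := by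
  have hq : q ≠ 0 := qne hq0
  constructor
  · intro h
    rcases mul_eq_zero.mp h with h1 | h2
    · have hk : ¬ ∀ k : ℕ, q ^ k * (x / a) ≠ 1 := fun hall => qA_ne_zero hq0 hq1 hall h1
      push_neg at hk
      obtain ⟨k, hk⟩ := hk
      refine ⟨-(k : ℤ), ?_⟩
      rw [_root_.zpow_neg, zpow_natCast]
      field_simp at hk ⊢
      linear_combination hk
    · have hk : ¬ ∀ k : ℕ, q ^ k * (q * a / x) ≠ 1 := fun hall => qA_ne_zero hq0 hq1 hall h2
      push_neg at hk
      obtain ⟨k, hk⟩ := hk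
      refine ⟨(k : ℤ) + 1, ?_⟩
      rw [zpow_add_one₀ hq, zpow_natCast]
      field_simp at hk ⊢
      linear_combination -hk
  · rintro ⟨n, rfl⟩
    rcases n.eq_nat_or_neg with ⟨m, rfl | rfl⟩
    · cases m with
      | zero =>
        apply mul_eq_zero_of_left
        apply qA_eq_zero hq0 hq1 (n := 0)
        rw [zpow_natCast]
        field_simp
      | succ m =>
        apply mul_eq_zero_of_right
        apply qA_eq_zero hq0 hq1 (n := m)
        rw [zpow_natCast]
        have hpa : (q : ℂ) ^ (m + 1) * a ≠ 0 := mul_ne_zero (pow_ne_zero _ hq) ha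
        field_simp
        ring
    · apply mul_eq_zero_of_left
      apply qA_eq_zero hq0 hq1 (n := m)
      rw [_root_.zpow_neg, zpow_natCast]
      field_simp

lemma qP_factor {q : ℂ} (hq0 : 0 < ‖q‖) (hq1 : ‖q‖ < 1) {a : ℂ} (ha : a ≠ 0)
    {x₀ : ℂ} (hx0 : x₀ ≠ 0) (h : qP q a x₀ = 0) :
    ∃ V : ℂ → ℂ, (∀ x : ℂ, x ≠ 0 → DifferentiableAt ℂ V x) ∧ V x₀ ≠ 0 ∧
      ∀ x : ℂ, x ≠ 0 → qP q a x = (x - x₀) * V x := by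
  have hq : q ≠ 0 := qne hq0
  obtain ⟨n, hn⟩ := (qP_zero_iff hq0 hq1 ha hx0).mp h
  have hcase : (∃ m : ℕ, q ^ m * (x₀ / a) = 1) ∨ (∃ m : ℕ, q ^ m * (q * a / x₀) = 1) := by
    rcases n.eq_nat_or_neg with ⟨m, rfl | rfl⟩
    · cases m with
      | zero =>
        left; exact ⟨0, by rw [hn, zpow_natCast]; field_simp⟩
      | succ m =>
        right
        refine ⟨m, ?_⟩
        rw [hn, zpow_natCast]
        have hpa : (q : ℂ) ^ (m + 1) * a ≠ 0 := mul_ne_zero (pow_ne_zero _ hq) ha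
        field_simp
        ring
    · left
      refine ⟨m, ?_⟩
      rw [hn, _root_.zpow_neg, zpow_natCast]
      field_simp
  rcases hcase with ⟨m, hm⟩ | ⟨m, hm⟩
  · obtain ⟨Va, hVad, hVa0, hVaf⟩ := qA_factor hq0 hq1 hm
    refine ⟨fun x => a⁻¹ * Va (x / a) * qA q (q * a / x), ?_, ?_, ?_⟩
    · intro x hx
      apply DifferentiableAt.mul
      · exact ((hVad _).comp x (differentiableAt_id.div_const a)).const_mul _
      · exact ((qA_differentiable hq0 hq1) _).comp x
          ((differentiableAt_const _).div differentiableAt_id hx)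
    · apply mul_ne_zero (mul_ne_zero (inv_ne_zero ha) hVa0)
      apply qA_ne_zero hq0 hq1
      intro k hk
      -- q^k * (q * a / x₀) = 1 and q^m * (x₀/a) = 1 gives q^(k+m+1) = 1
      have hx₀a : x₀ / a ≠ 0 := div_ne_zero hx0 ha
      have : q ^ (k + m + 1) = 1 := by
        have e : q ^ (k + m + 1) = (q ^ k * (q * a / x₀)) * (q ^ m * (x₀ / a)) := by
          field_simp
          ring
        rw [e, hk, hm, mul_one]
      exact qpow_ne_one hq0 hq1 (by omega) this
    · intro x hx
      unfold qP
      rw [hVaf (x / a)]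
      field_simp
  · obtain ⟨Vb, hVbd, hVb0, hVbf⟩ := qA_factor hq0 hq1 hm
    refine ⟨fun x => -(q * a) * (x * x₀)⁻¹ * Vb (q * a / x) * qA q (x / a), ?_, ?_, ?_⟩
    · intro x hx
      apply DifferentiableAt.mul
      · apply DifferentiableAt.mul
        · apply DifferentiableAt.const_mul
          exact (differentiableAt_id.mul_const x₀).inv (mul_ne_zero hx hx0)
        · exact (hVbd _).comp x ((differentiableAt_const _).div differentiableAt_id hx)
      · exact ((qA_differentiable hq0 hq1) _).comp x (differentiableAt_id.div_const a)
    · apply mul_ne_zero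
      apply mul_ne_zero
      · exact mul_ne_zero (neg_ne_zero.mpr (mul_ne_zero hq ha))
          (inv_ne_zero (mul_ne_zero hx0 hx0))
      · exact hVb0
      · apply qA_ne_zero hq0 hq1
        intro k hk
        -- q^k * (x₀/a) = 1 and q^m * (q a/x₀) = 1 gives q^(k+m+1) = 1
        have : q ^ (k + m + 1) = 1 := by
          have e : q ^ (k + m + 1) = (q ^ k * (x₀ / a)) * (q ^ m * (q * a / x₀)) := by
            field_simp
            ring
          rw [e, hk, hm, mul_one]
        exact qpow_ne_one hq0 hq1 (by omega) this
    · intro x hx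
      unfold qP
      rw [hVbf (q * a / x)]
      field_simp
      ring

lemma qP_eventually_ne {q : ℂ} (hq0 : 0 < ‖q‖) (hq1 : ‖q‖ < 1) {a : ℂ} (ha : a ≠ 0)
    {x₀ : ℂ} (hx0 : x₀ ≠ 0) : ∀ᶠ x in 𝓝[≠] x₀, qP q a x ≠ 0 := by
  by_cases h : qP q a x₀ = 0
  · obtain ⟨V, hVd, hV0, hVf⟩ := qP_factor hq0 hq1 ha hx0 h
    have h1 : ∀ᶠ x in 𝓝 x₀, V x ≠ 0 := (hVd x₀ hx0).continuousAt.eventually_ne hV0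
    have h2 : ∀ᶠ x in 𝓝 x₀, x ≠ 0 := eventually_ne_nhds hx0
    have h3 : ∀ᶠ x in 𝓝[≠] x₀, x ≠ x₀ := by
      filter_upwards [eventually_mem_nhdsWithin] with x hx
      exact hx
    filter_upwards [h1.filter_mono nhdsWithin_le_nhds, h2.filter_mono nhdsWithin_le_nhds, h3]
      with x hV hx hxx
    rw [hVf x hx]
    exact mul_ne_zero (sub_ne_zero.mpr hxx) hV
  · exact ((qP_diff hq0 hq1 a x₀ hx0).continuousAt.eventually_ne h).filter_mono
      nhdsWithin_le_nhds

/-! ### Liouville-type lemmas for `q`-difference equations on `ℂ*` -/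

/-- A `q`-invariant function holomorphic on `ℂ*` is constant. -/
lemma lemINV {q : ℂ} (hq0 : 0 < ‖q‖) (hq1 : ‖q‖ < 1) {h : ℂ → ℂ}
    (hd : ∀ x : ℂ, x ≠ 0 → DifferentiableAt ℂ h x)
    (he : ∀ x : ℂ, x ≠ 0 → h (q * x) = h x) :
    ∀ x : ℂ, x ≠ 0 → h x = h 1 := by
  have hq : q ≠ 0 := qne hq0
  have hzpow : ∀ n : ℤ, ∀ x : ℂ, x ≠ 0 → h (q ^ n * x) = h x := by
    intro n
    induction n using Int.induction_on with
    | zero => intro x hx; rw [zpow_zero, one_mul]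
    | succ n ih =>
      intro x hx
      have e : q ^ ((n : ℤ) + 1) * x = q * (q ^ (n : ℤ) * x) := by
        rw [zpow_add_one₀ hq]; ring
      rw [e, he _ (mul_ne_zero (zpow_ne_zero _ hq) hx), ih x hx]
    | pred n ih =>
      intro x hx
      have hy : (q ^ (-(n:ℤ) - 1) * x) ≠ 0 := mul_ne_zero (zpow_ne_zero _ hq) hx
      have e : q * (q ^ (-(n:ℤ) - 1) * x) = q ^ (-(n:ℤ)) * x := by
        rw [show -(n:ℤ) = (-(n:ℤ) - 1) + 1 by ring, zpow_add_one₀ hq]; ring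
      have h1 := he _ hy
      rw [e] at h1
      rw [← h1]
      exact ih x hx
  -- every point can be moved into the compact annulus K
  set K : Set ℂ := {z : ℂ | ‖q‖ ≤ ‖z‖ ∧ ‖z‖ ≤ 1} with hK
  have hKne : ∀ z ∈ K, z ≠ 0 := by
    intro z hz h0
    rw [h0] at hz
    obtain ⟨h1, -⟩ := hz
    rw [norm_zero] at h1
    exact absurd h1 (not_le.mpr hq0)
  have hmove : ∀ x : ℂ, x ≠ 0 → ∃ n : ℤ, q ^ n * x ∈ K := by
    intro x hx
    have hr : (0:ℝ) < ‖x‖ := norm_pos_iff.mpr hx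
    have hb1 : (1:ℝ) < ‖q‖⁻¹ := (one_lt_inv₀ hq0).mpr hq1
    obtain ⟨n, hn⟩ := exists_mem_Ioc_zpow hr hb1
    refine ⟨n + 1, ?_, ?_⟩
    · show ‖q‖ ≤ ‖q ^ (n+1) * x‖
      rw [norm_mul, norm_zpow]
      have h1 : (‖q‖⁻¹) ^ n < ‖x‖ := hn.1
      have hpow : (0:ℝ) < ‖q‖ ^ (n + 1) := zpow_pos hq0 _
      have := mul_lt_mul_of_pos_left h1 hpow
      calc ‖q‖ = ‖q‖ ^ ((n + 1) - n : ℤ) := by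
            rw [show (n + 1) - n = (1:ℤ) by ring, zpow_one]
        _ = ‖q‖ ^ (n+1) * (‖q‖⁻¹) ^ n := by
            rw [zpow_sub₀ (ne_of_gt hq0), div_eq_mul_inv, _root_.inv_zpow]
        _ ≤ ‖q‖ ^ (n+1) * ‖x‖ := by
            apply mul_le_mul_of_nonneg_left h1.le hpow.le
    · show ‖q ^ (n+1) * x‖ ≤ 1
      rw [norm_mul, norm_zpow]
      have h2 : ‖x‖ ≤ (‖q‖⁻¹) ^ (n + 1) := hn.2
      have hpow : (0:ℝ) < ‖q‖ ^ (n + 1) := zpow_pos hq0 _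
      calc ‖q‖ ^ (n+1) * ‖x‖ ≤ ‖q‖ ^ (n+1) * (‖q‖⁻¹) ^ (n+1) := by
            apply mul_le_mul_of_nonneg_left h2 hpow.le
        _ = 1 := by
            rw [_root_.inv_zpow]
            exact mul_inv_cancel₀ (zpow_ne_zero _ (ne_of_gt hq0))
  -- bound on the annulus
  have hKcompact : IsCompact K := by
    have hclosed : IsClosed K := by
      have : K = (fun z : ℂ => ‖z‖) ⁻¹' (Set.Icc ‖q‖ 1) := by
        ext z; simp [hK, Set.mem_Icc]
      rw [this]
      exact IsClosed.preimage continuous_norm isClosed_Icc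
    apply Metric.isCompact_of_isClosed_isBounded hclosed
    apply Bornology.IsBounded.subset (Metric.isBounded_closedBall (x := (0:ℂ)) (r := 1))
    intro z hz
    simpa [Metric.mem_closedBall, dist_eq_norm] using hz.2
  obtain ⟨C, hC⟩ := hKcompact.exists_bound_of_continuousOn
    (fun z hz => ((hd z (hKne z hz)).continuousAt).continuousWithinAt)
  have hbound : ∀ x : ℂ, x ≠ 0 → ‖h x‖ ≤ C := by
    intro x hx
    obtain ⟨n, hn⟩ := hmove x hx
    rw [← hzpow n x hx]
    exact hC _ hn
  -- remove the singularity and apply Liouville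
  set H : ℂ → ℂ := Function.update h 0 (limUnder (𝓝[≠] (0:ℂ)) h) with hH
  have hHdiff : Differentiable ℂ H := by
    rw [← differentiableOn_univ]
    apply Complex.differentiableOn_update_limUnder_of_bddAbove (Filter.univ_mem)
    · intro z hz
      exact (hd z (by simpa using hz.2)).differentiableWithinAt
    · refine ⟨C, ?_⟩
      rintro y ⟨z, hz, rfl⟩
      exact hbound z (by simpa using hz.2)
  have hHbd : Bornology.IsBounded (Set.range H) := by
    rw [isBounded_iff_forall_norm_le]
    refine ⟨max C ‖H 0‖, ?_⟩
    rintro y ⟨z, rfl⟩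
    by_cases hz : z = 0
    · rw [hz]; exact le_max_right _ _
    · rw [hH, Function.update_of_ne hz]
      exact le_max_of_le_left (hbound z hz)
  intro x hx
  have h1 : H x = H 1 := hHdiff.apply_eq_apply_of_bounded hHbd x 1
  rwa [hH, Function.update_of_ne hx, Function.update_of_ne one_ne_zero] at h1

/-- A solution of `g(qx) = λ g(x)` holomorphic on `ℂ*` with a zero vanishes identically. -/
lemma lemA {q : ℂ} (hq0 : 0 < ‖q‖) (hq1 : ‖q‖ < 1) {l : ℂ} {g : ℂ → ℂ}
    (hd : ∀ x : ℂ, x ≠ 0 → DifferentiableAt ℂ g x)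
    (he : ∀ x : ℂ, x ≠ 0 → g (q * x) = l * g x)
    {p : ℂ} (hp : p ≠ 0) (hgp : g p = 0) :
    ∀ x : ℂ, x ≠ 0 → g x = 0 := by
  have hq : q ≠ 0 := qne hq0
  by_cases hl : l = 0
  · intro x hx
    have := he (x / q) (div_ne_zero hx hq)
    rw [mul_div_cancel₀ x hq, hl, zero_mul] at this
    exact this
  · intro x hx
    set G : ℂ → ℂ := fun y => g y * g (x ^ 2 / y) with hG
    have hGd : ∀ y : ℂ, y ≠ 0 → DifferentiableAt ℂ G y := by
      intro y hy
      apply DifferentiableAt.mul (hd y hy)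
      exact (hd _ (div_ne_zero (pow_ne_zero _ hx) hy)).comp y
        ((differentiableAt_const _).div differentiableAt_id hy)
    have hGe : ∀ y : ℂ, y ≠ 0 → G (q * y) = G y := by
      intro y hy
      have hxy : x ^ 2 / (q * y) ≠ 0 :=
        div_ne_zero (pow_ne_zero _ hx) (mul_ne_zero hq hy)
      have h1 : g (q * (x ^ 2 / (q * y))) = l * g (x ^ 2 / (q * y)) := he _ hxy
      have e : q * (x ^ 2 / (q * y)) = x ^ 2 / y := by field_simp
      rw [e] at h1
      show g (q * y) * g (x ^ 2 / (q * y)) = g y * g (x ^ 2 / y)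
      rw [he y hy, h1]
      ring
    have hc1 : G x = G 1 := lemINV hq0 hq1 hGd hGe x hx
    have hc2 : G p = G 1 := lemINV hq0 hq1 hGd hGe p hp
    have hGp : G p = 0 := by rw [hG]; simp [hgp]
    have hGx : G x = g x * g x := by
      rw [hG]
      have : x ^ 2 / x = x := by field_simp [sq]
      simp [this]
    have : g x * g x = 0 := by rw [← hGx, hc1, ← hc2, hGp]
    exact mul_self_eq_zero.mp this

/-- A solution of `g(qx) = λ g(x)` holomorphic on `ℂ*` with `λ ∉ q^ℤ` vanishes identically. -/
lemma lemB {q : ℂ} (hq0 : 0 < ‖q‖) (hq1 : ‖q‖ < 1) {l : ℂ} {g : ℂ → ℂ}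
    (hd : ∀ x : ℂ, x ≠ 0 → DifferentiableAt ℂ g x)
    (he : ∀ x : ℂ, x ≠ 0 → g (q * x) = l * g x)
    (hl : ¬ ∃ n : ℤ, l = q ^ n) :
    ∀ x : ℂ, x ≠ 0 → g x = 0 := by
  have hq : q ≠ 0 := qne hq0
  by_contra hcon
  push_neg at hcon
  obtain ⟨x₀, hx₀, hgx₀⟩ := hcon
  -- g never vanishes on ℂ*
  have hnz : ∀ p : ℂ, p ≠ 0 → g p ≠ 0 := by
    intro p hp hgp
    exact hgx₀ (lemA hq0 hq1 hd he hp hgp x₀ hx₀)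
  have hl0 : l ≠ 0 := by
    intro h0
    apply hnz (q * 1) (by simp [hq])
    rw [he 1 one_ne_zero, h0, zero_mul]
  -- the derivative is holomorphic on ℂ*
  have hgan : AnalyticOnNhd ℂ g {(0:ℂ)}ᶜ := by
    apply DifferentiableOn.analyticOnNhd _ isOpen_compl_singleton
    intro z hz
    exact (hd z hz).differentiableWithinAt
  have hg'd : ∀ x : ℂ, x ≠ 0 → DifferentiableAt ℂ (deriv g) x := by
    intro x hx
    exact (hgan.deriv x hx).differentiableAt
  -- derivative of the functional equation
  have hder : ∀ x : ℂ, x ≠ 0 → deriv g (q * x) * q = l * deriv g x := by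
    intro x hx
    have h1 : HasDerivAt (fun y : ℂ => g (q * y)) (deriv g (q * x) * q) x := by
      have hinner : HasDerivAt (fun y : ℂ => q * y) q x := by
        simpa using (hasDerivAt_id x).const_mul q
      exact ((hd (q * x) (mul_ne_zero hq hx)).hasDerivAt).comp x hinner
    have h2 : HasDerivAt (fun y : ℂ => l * g y) (l * deriv g x) x :=
      ((hd x hx).hasDerivAt).const_mul l
    have heq : (fun y : ℂ => g (q * y)) =ᶠ[𝓝 x] (fun y : ℂ => l * g y) := by
      filter_upwards [eventually_ne_nhds hx] with y hy
      exact he y hy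
    have h1' : HasDerivAt (fun y : ℂ => l * g y) (deriv g (q * x) * q) x :=
      h1.congr_of_eventuallyEq heq.symm
    exact h1'.unique h2
  -- the logarithmic derivative times x is q-invariant, hence constant
  set v : ℂ → ℂ := fun x => x * deriv g x / g x with hv
  have hvd : ∀ x : ℂ, x ≠ 0 → DifferentiableAt ℂ v x := by
    intro x hx
    exact (differentiableAt_id.mul (hg'd x hx)).div (hd x hx) (hnz x hx)
  have hve : ∀ x : ℂ, x ≠ 0 → v (q * x) = v x := by
    intro x hx
    show q * x * deriv g (q * x) / g (q * x) = x * deriv g x / g x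
    rw [he x hx]
    have hder' := hder x hx
    have hgx := hnz x hx
    field_simp
    linear_combination hder'
  obtain ⟨c, hc⟩ : ∃ c : ℂ, ∀ x : ℂ, x ≠ 0 → x * deriv g x = c * g x := by
    refine ⟨v 1, fun x hx => ?_⟩
    have hvx := lemINV hq0 hq1 hvd hve x hx
    rw [hv] at hvx
    exact (div_eq_iff (hnz x hx)).mp hvx
  -- ψ(t) = g(exp t)·exp(-ct) is constant
  have hψ : ∀ s t : ℂ, g (Complex.exp s) * Complex.exp (-(c * s)) =
      g (Complex.exp t) * Complex.exp (-(c * t)) := by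
    have hdiff : ∀ t : ℂ,
        HasDerivAt (fun t => g (Complex.exp t) * Complex.exp (-(c * t))) 0 t := by
      intro t
      have h1 : HasDerivAt (fun t : ℂ => g (Complex.exp t))
          (deriv g (Complex.exp t) * Complex.exp t) t :=
        ((hd _ (Complex.exp_ne_zero t)).hasDerivAt).comp t (Complex.hasDerivAt_exp t)
      have hin : HasDerivAt (fun t : ℂ => -(c * t)) (-c) t := by
        have := ((hasDerivAt_id t).const_mul c).neg; rw [mul_one] at this; exact this
      have h2 : HasDerivAt (fun t : ℂ => Complex.exp (-(c * t)))
          (Complex.exp (-(c * t)) * -c) t := hin.cexp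
      have h3 := h1.mul h2
      have hkey := hc (Complex.exp t) (Complex.exp_ne_zero t)
      have h4 : deriv g (Complex.exp t) * Complex.exp t * Complex.exp (-(c * t)) +
          g (Complex.exp t) * (Complex.exp (-(c * t)) * -c) = 0 := by
        linear_combination Complex.exp (-(c * t)) * hkey
      rw [h4] at h3
      exact h3
    intro s t
    have hdiffg : Differentiable ℂ (fun t => g (Complex.exp t) * Complex.exp (-(c * t))) :=
      fun t => (hdiff t).differentiableAt
    exact is_const_of_deriv_eq_zero hdiffg (fun t => (hdiff t).deriv) s t
  have hg1 : g 1 ≠ 0 := hnz 1 one_ne_zero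
  -- c is an integer
  have hψ0 := hψ (2 * Real.pi * Complex.I) 0
  rw [Complex.exp_two_pi_mul_I, mul_zero, neg_zero, Complex.exp_zero, mul_one] at hψ0
  have hexp1 : Complex.exp (-(c * (2 * Real.pi * Complex.I))) = 1 :=
    mul_left_cancel₀ hg1 (by rw [hψ0, mul_one])
  obtain ⟨n, hn⟩ := Complex.exp_eq_one_iff.mp hexp1
  have hc_int : c = -n := by
    have h2piI : (2 * Real.pi * Complex.I : ℂ) ≠ 0 := Complex.two_pi_I_ne_zero
    have he2 : (-c) * (2 * Real.pi * Complex.I) = n * (2 * Real.pi * Complex.I) := by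
      linear_combination hn
    have := mul_right_cancel₀ h2piI he2
    linear_combination -this
  -- conclude l = q^(-n)
  have hlog : Complex.exp (Complex.log q) = q := Complex.exp_log hq
  have hstep := hψ (Complex.log q) 0
  rw [hlog, mul_zero, neg_zero, Complex.exp_zero, mul_one] at hstep
  have hgq : g q = g 1 * Complex.exp (c * Complex.log q) := by
    rw [← hstep, mul_assoc, ← Complex.exp_add]
    norm_num
  have hpow : Complex.exp (c * Complex.log q) = q ^ (-n : ℤ) := by
    have hcast : c * Complex.log q = ((-n : ℤ) : ℂ) * Complex.log q := by
      rw [hc_int]; push_cast; ring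
    rw [hcast, Complex.exp_int_mul, hlog]
  have hgq2 : g q = l * g 1 := by
    have := he 1 one_ne_zero
    rwa [mul_one] at this
  apply hl
  refine ⟨-n, ?_⟩
  apply mul_right_cancel₀ hg1
  rw [← hgq2, hgq, hpow]
  ring

/-- Extension of an identity across the (isolated) zero set of `P`. -/
lemma ext0 {φ ψ P : ℂ → ℂ}
    (hφ : ∀ x : ℂ, x ≠ 0 → ContinuousAt φ x) (hψ : ∀ x : ℂ, x ≠ 0 → ContinuousAt ψ x)
    (hne : ∀ x₀ : ℂ, x₀ ≠ 0 → ∀ᶠ x in 𝓝[≠] x₀, P x ≠ 0)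
    (heq : ∀ x : ℂ, x ≠ 0 → P x ≠ 0 → φ x = ψ x) :
    ∀ x : ℂ, x ≠ 0 → φ x = ψ x := by
  intro x₀ hx₀
  have hev : ∀ᶠ x in 𝓝[≠] x₀, φ x = ψ x := by
    filter_upwards [hne x₀ hx₀, (eventually_ne_nhds hx₀).filter_mono nhdsWithin_le_nhds]
      with x hP hx
    exact heq x hx hP
  have t1 : Tendsto φ (𝓝[≠] x₀) (𝓝 (φ x₀)) := ((hφ x₀ hx₀).continuousWithinAt).tendsto
  have t2 : Tendsto ψ (𝓝[≠] x₀) (𝓝 (ψ x₀)) := ((hψ x₀ hx₀).continuousWithinAt).tendsto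
  exact tendsto_nhds_unique (t1.congr' hev) t2

/-- Division of a holomorphic function on `ℂ*` by a function with simple zeros,
provided the numerator vanishes on the zero set. -/
lemma lemDIV {P f : ℂ → ℂ}
    (hP : ∀ x : ℂ, x ≠ 0 → DifferentiableAt ℂ P x)
    (hf : ∀ x : ℂ, x ≠ 0 → DifferentiableAt ℂ f x)
    (hz : ∀ x₀ : ℂ, x₀ ≠ 0 → P x₀ = 0 → f x₀ = 0 ∧ ∃ V : ℂ → ℂ,
      (∀ x : ℂ, x ≠ 0 → DifferentiableAt ℂ V x) ∧ V x₀ ≠ 0 ∧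
      ∀ x : ℂ, x ≠ 0 → P x = (x - x₀) * V x) :
    ∃ g : ℂ → ℂ, (∀ x : ℂ, x ≠ 0 → DifferentiableAt ℂ g x) ∧
      ∀ x : ℂ, x ≠ 0 → f x = g x * P x := by
  classical
  refine ⟨fun x => if h : x ≠ 0 ∧ P x = 0
    then deriv f x / ((hz x h.1 h.2).2).choose x else f x / P x, ?_, ?_⟩
  · intro x₀ hx₀
    by_cases hP0 : P x₀ = 0
    · obtain ⟨hf0, hVex⟩ := hz x₀ hx₀ hP0
      set V := hVex.choose with hV
      obtain ⟨hVd, hV0, hVfac⟩ := hVex.choose_spec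
      have hDf : DifferentiableAt ℂ (dslope f x₀) x₀ := by
        have hs : {x : ℂ | x ≠ 0} ∈ 𝓝 x₀ := by
          have : IsOpen {x : ℂ | x ≠ 0} := isOpen_ne
          exact this.mem_nhds hx₀
        have hfs : DifferentiableOn ℂ f {x : ℂ | x ≠ 0} :=
          fun z hz' => (hf z hz').differentiableWithinAt
        have := (Complex.differentiableOn_dslope hs).mpr hfs
        exact this.differentiableAt hs
      have hq : DifferentiableAt ℂ (fun x => dslope f x₀ x / V x) x₀ :=
        hDf.div (hVd x₀ hx₀) hV0
      apply hq.congr_of_eventuallyEq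
      have hV' : ∀ᶠ x in 𝓝 x₀, V x ≠ 0 := (hVd x₀ hx₀).continuousAt.eventually_ne hV0
      have hx' : ∀ᶠ x in 𝓝 x₀, x ≠ 0 := eventually_ne_nhds hx₀
      filter_upwards [hV', hx'] with x hVx hx0'
      by_cases hxx : x = x₀
      · subst hxx
        rw [dif_pos ⟨hx₀, hP0⟩, dslope_same]
      · have hPx : P x = (x - x₀) * V x := hVfac x hx0'
        have hPxne : P x ≠ 0 := by
          rw [hPx]; exact mul_ne_zero (sub_ne_zero.mpr hxx) hVx
        rw [dif_neg (by tauto)]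
        rw [dslope_of_ne f hxx, slope_def_field, hf0, sub_zero, hPx]
        rw [div_div]
    · have hev : ∀ᶠ x in 𝓝 x₀, ¬(x ≠ 0 ∧ P x = 0) := by
        filter_upwards [(hP x₀ hx₀).continuousAt.eventually_ne hP0] with x hPx
        tauto
      have hdiff : DifferentiableAt ℂ (fun x => f x / P x) x₀ :=
        (hf x₀ hx₀).div (hP x₀ hx₀) hP0
      apply hdiff.congr_of_eventuallyEq
      filter_upwards [hev] with x hx
      rw [dif_neg hx]
  · intro x hx
    by_cases hP0 : P x = 0
    · rw [hP0, mul_zero]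
      exact (hz x hx hP0).1
    · show f x = (if h : x ≠ 0 ∧ P x = 0
          then deriv f x / ((hz x h.1 h.2).2).choose x else f x / P x) * P x
      rw [dif_neg (by tauto : ¬(x ≠ 0 ∧ P x = 0)), div_mul_cancel₀ _ hP0]

/-- Zeros of solutions of `x² f(qx) = c f(x)` propagate along `q`-spirals. -/
lemma lemPROP {q : ℂ} (hq0 : 0 < ‖q‖) {c : ℂ} (hc : c ≠ 0) {f : ℂ → ℂ}
    (heq : ∀ x : ℂ, x ≠ 0 → x ^ 2 * f (q * x) = c * f x)
    {a : ℂ} (ha : a ≠ 0) (hfa : f a = 0) :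
    ∀ n : ℤ, f (q ^ n * a) = 0 := by
  have hq : q ≠ 0 := qne hq0
  intro n
  induction n using Int.induction_on with
  | zero => simpa using hfa
  | succ n ih =>
    have hy : q ^ (n:ℤ) * a ≠ 0 := mul_ne_zero (zpow_ne_zero _ hq) ha
    have := heq _ hy
    rw [ih, mul_zero] at this
    have h2 : f (q * (q ^ (n:ℤ) * a)) = 0 := by
      have hsq : (q ^ (n:ℤ) * a) ^ 2 ≠ 0 := pow_ne_zero _ hy
      exact (mul_eq_zero.mp this).resolve_left hsq
    have e : q * (q ^ (n:ℤ) * a) = q ^ ((n:ℤ)+1) * a := by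
      rw [zpow_add_one₀ hq]; ring
    rwa [e] at h2
  | pred n ih =>
    have hy : q ^ (-(n:ℤ) - 1) * a ≠ 0 := mul_ne_zero (zpow_ne_zero _ hq) ha
    have h1 := heq _ hy
    have e : q * (q ^ (-(n:ℤ) - 1) * a) = q ^ (-(n:ℤ)) * a := by
      rw [show -(n:ℤ) = (-(n:ℤ) - 1) + 1 by ring, zpow_add_one₀ hq]; ring
    rw [e, ih, mul_zero] at h1
    exact (mul_eq_zero.mp h1.symm).resolve_left hc

/-- The key rigidity lemma: a solution of `x² f(qx) = c f(x)` holomorphic on `ℂ*`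
vanishing at two points `a, b` with `a/b ∉ q^ℤ` and `ab ≢ c` vanishes identically. -/
lemma lemR {q : ℂ} (hq0 : 0 < ‖q‖) (hq1 : ‖q‖ < 1) {c a b : ℂ} (hc : c ≠ 0)
    (ha : a ≠ 0) (hb : b ≠ 0) (hab : ¬ qCong q a b) (hcab : ¬ qCong q c (a * b))
    {f : ℂ → ℂ} (hf : ∀ x : ℂ, x ≠ 0 → DifferentiableAt ℂ f x)
    (heq : ∀ x : ℂ, x ≠ 0 → x ^ 2 * f (q * x) = c * f x)
    (hfa : f a = 0) (hfb : f b = 0) :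
    ∀ x : ℂ, x ≠ 0 → f x = 0 := by
  have hq : q ≠ 0 := qne hq0
  set P : ℂ → ℂ := fun x => qP q a x * qP q b x with hPdef
  have hPd : ∀ x : ℂ, x ≠ 0 → DifferentiableAt ℂ P x :=
    fun x hx => (qP_diff hq0 hq1 a x hx).mul (qP_diff hq0 hq1 b x hx)
  have hprop_a := lemPROP hq0 hc heq ha hfa
  have hprop_b := lemPROP hq0 hc heq hb hfb
  have hz : ∀ x₀ : ℂ, x₀ ≠ 0 → P x₀ = 0 → f x₀ = 0 ∧ ∃ V : ℂ → ℂ,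
      (∀ x : ℂ, x ≠ 0 → DifferentiableAt ℂ V x) ∧ V x₀ ≠ 0 ∧
      ∀ x : ℂ, x ≠ 0 → P x = (x - x₀) * V x := by
    intro x₀ hx₀ hP0
    rcases mul_eq_zero.mp hP0 with h1 | h1
    · obtain ⟨n, hn⟩ := (qP_zero_iff hq0 hq1 ha hx₀).mp h1
      have hbx : qP q b x₀ ≠ 0 := by
        intro h2
        obtain ⟨m, hm⟩ := (qP_zero_iff hq0 hq1 hb hx₀).mp h2
        apply hab
        refine ⟨m - n, ?_⟩
        have hmn : q ^ n * a = q ^ m * b := by rw [← hn, ← hm]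
        rw [zpow_sub₀ hq]
        rw [div_mul_eq_mul_div, eq_div_iff (zpow_ne_zero _ hq)]
        linear_combination hmn
      refine ⟨hn ▸ hprop_a n, ?_⟩
      obtain ⟨V, hVd, hV0, hVf⟩ := qP_factor hq0 hq1 ha hx₀ h1
      refine ⟨fun x => V x * qP q b x, fun x hx => (hVd x hx).mul (qP_diff hq0 hq1 b x hx),
        mul_ne_zero hV0 hbx, fun x hx => ?_⟩
      show qP q a x * qP q b x = (x - x₀) * (V x * qP q b x)
      rw [hVf x hx]; ring
    · obtain ⟨n, hn⟩ := (qP_zero_iff hq0 hq1 hb hx₀).mp h1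
      have hax : qP q a x₀ ≠ 0 := by
        intro h2
        obtain ⟨m, hm⟩ := (qP_zero_iff hq0 hq1 ha hx₀).mp h2
        apply hab
        refine ⟨n - m, ?_⟩
        have hmn : q ^ m * a = q ^ n * b := by rw [← hm, ← hn]
        rw [zpow_sub₀ hq]
        rw [div_mul_eq_mul_div, eq_div_iff (zpow_ne_zero _ hq)]
        linear_combination hmn
      refine ⟨hn ▸ hprop_b n, ?_⟩
      obtain ⟨V, hVd, hV0, hVf⟩ := qP_factor hq0 hq1 hb hx₀ h1
      refine ⟨fun x => qP q a x * V x, fun x hx => (qP_diff hq0 hq1 a x hx).mul (hVd x hx),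
        mul_ne_zero hax hV0, fun x hx => ?_⟩
      show qP q a x * qP q b x = (x - x₀) * (qP q a x * V x)
      rw [hVf x hx]; ring
  obtain ⟨g, hgd, hfg⟩ := lemDIV hPd hf hz
  -- functional equation for g away from zeros of P
  have hgeq : ∀ x : ℂ, x ≠ 0 → g (q * x) = (c / (a * b)) * g x := by
    apply ext0 (P := P)
    · intro x hx
      exact ((hgd (q * x) (mul_ne_zero hq hx)).continuousAt).comp
        (by fun_prop : ContinuousAt (fun y : ℂ => q * y) x)
    · intro x hx
      exact continuousAt_const.mul ((hgd x hx).continuousAt)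
    · intro x₀ hx₀
      filter_upwards [qP_eventually_ne hq0 hq1 ha hx₀, qP_eventually_ne hq0 hq1 hb hx₀]
        with x h1 h2
      exact mul_ne_zero h1 h2
    · intro x hx hPx
      have hqx : q * x ≠ 0 := mul_ne_zero hq hx
      have h1 := heq x hx
      rw [hfg x hx, hfg (q * x) hqx] at h1
      have hPq : P (q * x) = (a * b / x ^ 2) * P x := by
        have ha' := qP_funct hq0 hq1 ha x hx
        have hb' := qP_funct hq0 hq1 hb x hx
        show qP q a (q * x) * qP q b (q * x) = (a * b / x ^ 2) * (qP q a x * qP q b x)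
        have hx2 : x ^ 2 ≠ 0 := pow_ne_zero _ hx
        field_simp
        linear_combination (x * qP q b (q * x)) * ha' - (a * qP q a x) * hb'
      rw [hPq] at h1
      -- h1 : x^2 * (g (q x) * ((a b / x^2) * P x)) = c * (g x * P x)
      have hx2 : (x:ℂ) ^ 2 ≠ 0 := pow_ne_zero _ hx
      have hab0 : a * b ≠ 0 := mul_ne_zero ha hb
      apply mul_right_cancel₀ hPx
      field_simp at h1 ⊢
      linear_combination h1
  have hlnot : ¬ ∃ n : ℤ, (c / (a * b)) = q ^ n := by
    rintro ⟨n, hn⟩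
    apply hcab
    refine ⟨n, ?_⟩
    field_simp at hn
    linear_combination hn
  have hg0 := lemB hq0 hq1 hgd hgeq hlnot
  intro x hx
  rw [hfg x hx, hg0 x hx, zero_mul]

/-! ### Matrix-level lemmas -/

lemma lemENT {q : ℂ} {ρ σv : Fin 2 → ℂ} (hσ0 : ∀ i, σv i ≠ 0)
    {M : ℂ → Matrix (Fin 2) (Fin 2) ℂ}
    (heqM : ∀ x : ℂ, x ≠ 0 →
      (x ^ 2) • (M (q * x) * Matrix.diagonal σv) = Matrix.diagonal ρ * M x)
    (i j : Fin 2) : ∀ x : ℂ, x ≠ 0 →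
      x ^ 2 * M (q * x) i j = (ρ i / σv j) * M x i j := by
  intro x hx
  have h := congrFun (congrFun (heqM x hx) i) j
  simp only [Matrix.smul_apply, Matrix.mul_diagonal, Matrix.diagonal_mul, smul_eq_mul] at h
  rw [div_mul_eq_mul_div, eq_div_iff (hσ0 j)]
  linear_combination h

lemma rowTopZero {A : Matrix (Fin 2) (Fin 2) ℂ} (hdet : A.det = 0) {f g : ℂ}
    (h : IsNzCol A f g) (hf : f = 0) : A 0 0 = 0 ∧ A 0 1 = 0 := by
  obtain ⟨j, hfj, hgj, hne⟩ := h
  have hg : g ≠ 0 := fun h0 => hne ⟨hf, h0⟩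
  rw [Matrix.det_fin_two] at hdet
  fin_cases j <;> simp only [Fin.zero_eta, Fin.mk_one, Fin.isValue] at hfj hgj
  · have h00 : A 0 0 = 0 := by rw [← hfj, hf]
    refine ⟨h00, ?_⟩
    have hg' : A 1 0 ≠ 0 := by rw [← hgj]; exact hg
    have hm : A 0 1 * A 1 0 = 0 := by linear_combination A 1 1 * h00 - hdet
    exact (mul_eq_zero.mp hm).resolve_right hg'
  · have h01 : A 0 1 = 0 := by rw [← hfj, hf]
    refine ⟨?_, h01⟩
    have hg' : A 1 1 ≠ 0 := by rw [← hgj]; exact hg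
    have hm : A 0 0 * A 1 1 = 0 := by linear_combination A 1 0 * h01 + hdet
    exact (mul_eq_zero.mp hm).resolve_right hg'

lemma rowBotZero {A : Matrix (Fin 2) (Fin 2) ℂ} (hdet : A.det = 0) {f g : ℂ}
    (h : IsNzCol A f g) (hg : g = 0) : A 1 0 = 0 ∧ A 1 1 = 0 := by
  obtain ⟨j, hfj, hgj, hne⟩ := h
  have hf : f ≠ 0 := fun h0 => hne ⟨h0, hg⟩
  rw [Matrix.det_fin_two] at hdet
  fin_cases j <;> simp only [Fin.zero_eta, Fin.mk_one, Fin.isValue] at hfj hgj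
  · have h10 : A 1 0 = 0 := by rw [← hgj, hg]
    refine ⟨h10, ?_⟩
    have hf' : A 0 0 ≠ 0 := by rw [← hfj]; exact hf
    have hm : A 0 0 * A 1 1 = 0 := by linear_combination A 0 1 * h10 + hdet
    exact (mul_eq_zero.mp hm).resolve_left hf'
  · have h11 : A 1 1 = 0 := by rw [← hgj, hg]
    refine ⟨?_, h11⟩
    have hf' : A 0 1 ≠ 0 := by rw [← hfj]; exact hf
    have hm : A 0 1 * A 1 0 = 0 := by linear_combination A 0 0 * h11 - hdet
    exact (mul_eq_zero.mp hm).resolve_left hf'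

lemma colProp {A : Matrix (Fin 2) (Fin 2) ℂ} (hdet : A.det = 0) {f g f' g' : ℂ}
    (h : ∃ j, f = A 0 j ∧ g = A 1 j) (h' : ∃ j, f' = A 0 j ∧ g' = A 1 j) :
    f * g' = f' * g := by
  obtain ⟨j, hf, hg⟩ := h
  obtain ⟨j', hf', hg'⟩ := h'
  rw [Matrix.det_fin_two] at hdet
  subst hf hg hf' hg'
  fin_cases j <;> fin_cases j' <;>
    simp only [Fin.zero_eta, Fin.mk_one, Fin.isValue] <;>
    first
      | ring1
      | linear_combination hdet
      | linear_combination -hdet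

lemma pairInv {A B : Matrix (Fin 2) (Fin 2) ℂ} (hA : A.det = 0) (hB : B.det = 0)
    {f1 g1 f1' g1' f2 g2 f2' g2' : ℂ}
    (h1 : ∃ j, f1 = A 0 j ∧ g1 = A 1 j) (h1' : ∃ j, f1' = A 0 j ∧ g1' = A 1 j)
    (h2 : ∃ j, f2 = B 0 j ∧ g2 = B 1 j) (h2' : ∃ j, f2' = B 0 j ∧ g2' = B 1 j) :
    f1 * g2 * (f2' * g1') = f1' * g2' * (f2 * g1) := by
  have hp1 : f1 * g1' = f1' * g1 := colProp hA h1 h1'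
  have hp2 : f2 * g2' = f2' * g2 := colProp hB h2 h2'
  linear_combination (f2' * g2) * hp1 - (f1' * g1) * hp2

/-- If a whole row of `M` vanishes at two suitable points, `det M ≡ 0`; contradiction. -/
lemma lemROW {q : ℂ} (hq0 : 0 < ‖q‖) (hq1 : ‖q‖ < 1) {ρ σv : Fin 2 → ℂ}
    (hρ0 : ∀ i, ρ i ≠ 0) (hσ0 : ∀ i, σv i ≠ 0)
    {x1 x2 : ℂ} (hx1 : x1 ≠ 0) (hx2 : x2 ≠ 0) (h12 : ¬ qCong q x1 x2)
    {M : ℂ → Matrix (Fin 2) (Fin 2) ℂ} (hholo : MatHolo M)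
    (heqM : ∀ x : ℂ, x ≠ 0 →
      (x ^ 2) • (M (q * x) * Matrix.diagonal σv) = Matrix.diagonal ρ * M x)
    (hwit : ∃ x : ℂ, x ≠ 0 ∧ (M x).det ≠ 0)
    (i : Fin 2) (hNS : ∀ j : Fin 2, ¬ qCong q (ρ i / σv j) (x1 * x2))
    (hrow : ∀ j : Fin 2, M x1 i j = 0 ∧ M x2 i j = 0) : False := by
  have hzrow : ∀ j : Fin 2, ∀ x : ℂ, x ≠ 0 → M x i j = 0 := by
    intro j
    exact lemR (f := fun y => M y i j) hq0 hq1 (div_ne_zero (hρ0 i) (hσ0 j)) hx1 hx2 h12 (hNS j)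
      (hholo i j) (lemENT hσ0 heqM i j) (hrow j).1 (hrow j).2
  obtain ⟨x₀, hx₀, hwitne⟩ := hwit
  apply hwitne
  rw [Matrix.det_fin_two]
  fin_cases i <;> simp only [Fin.zero_eta, Fin.mk_one, Fin.isValue] at hzrow <;>
    rw [hzrow 0 x₀ hx₀, hzrow 1 x₀ hx₀] <;> ring

/-- `M(a) ≠ 0` for `a` one of the four singular points. -/
lemma lemNZ {q : ℂ} (hq0 : 0 < ‖q‖) (hq1 : ‖q‖ < 1) {ρ σv : Fin 2 → ℂ}
    (hρ0 : ∀ i, ρ i ≠ 0) (hσ0 : ∀ i, σv i ≠ 0)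
    {a b1 b2 b3 : ℂ} (ha : a ≠ 0) (hb1 : b1 ≠ 0) (hb2 : b2 ≠ 0) (hb3 : b3 ≠ 0)
    (h12 : ¬ qCong q b1 b2) (h1a : ¬ qCong q b1 a) (h2a : ¬ qCong q b2 a)
    (h3a : ¬ qCong q b3 a)
    (hFR : qCong q (a * b1 * b2 * b3) (ρ 0 * ρ 1 / (σv 0 * σv 1)))
    {M : ℂ → Matrix (Fin 2) (Fin 2) ℂ} (hholo : MatHolo M)
    (heqM : ∀ x : ℂ, x ≠ 0 →
      (x ^ 2) • (M (q * x) * Matrix.diagonal σv) = Matrix.diagonal ρ * M x)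
    (hwit : ∃ x : ℂ, x ≠ 0 ∧ (M x).det ≠ 0)
    (hdet1 : (M b1).det = 0) (hdet2 : (M b2).det = 0) :
    M a ≠ 0 := by
  intro hMa
  have hq : q ≠ 0 := qne hq0
  have hσ : σv 0 * σv 1 ≠ 0 := mul_ne_zero (hσ0 0) (hσ0 1)
  have ha2 : a ^ 2 ≠ 0 := pow_ne_zero _ ha
  have hMa0 : ∀ i j : Fin 2, M a i j = 0 := by
    intro i j; rw [hMa]; rfl
  -- divide all entries by qP q a
  have hdiv : ∀ i j : Fin 2, ∃ g : ℂ → ℂ, (∀ x : ℂ, x ≠ 0 → DifferentiableAt ℂ g x) ∧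
      ∀ x : ℂ, x ≠ 0 → M x i j = g x * qP q a x := by
    intro i j
    have hcij : ρ i / σv j ≠ 0 := div_ne_zero (hρ0 i) (hσ0 j)
    have hprop := lemPROP (f := fun y => M y i j) hq0 hcij (lemENT hσ0 heqM i j) ha (hMa0 i j)
    apply lemDIV (qP_diff hq0 hq1 a) (hholo i j)
    intro x₀ hx₀ hP0
    obtain ⟨n, hn⟩ := (qP_zero_iff hq0 hq1 ha hx₀).mp hP0
    exact ⟨hn ▸ hprop n, qP_factor hq0 hq1 ha hx₀ hP0⟩
  choose G hGd hGf using hdiv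
  set dN : ℂ → ℂ := fun x => G 0 0 x * G 1 1 x - G 0 1 x * G 1 0 x with hdNdef
  have hdNd : ∀ x : ℂ, x ≠ 0 → DifferentiableAt ℂ dN x := fun x hx =>
    ((hGd 0 0 x hx).mul (hGd 1 1 x hx)).sub ((hGd 0 1 x hx).mul (hGd 1 0 x hx))
  have hdet_fact : ∀ x : ℂ, x ≠ 0 → (M x).det = qP q a x ^ 2 * dN x := by
    intro x hx
    rw [Matrix.det_fin_two, hGf 0 0 x hx, hGf 0 1 x hx, hGf 1 0 x hx, hGf 1 1 x hx]
    simp only [hdNdef]; ring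
  -- the q-difference equation satisfied by det M
  have hdeteq : ∀ x : ℂ, x ≠ 0 →
      x ^ 4 * (M (q * x)).det = (ρ 0 * ρ 1 / (σv 0 * σv 1)) * (M x).det := by
    intro x hx
    have h00 := lemENT hσ0 heqM 0 0 x hx
    have h01 := lemENT hσ0 heqM 0 1 x hx
    have h10 := lemENT hσ0 heqM 1 0 x hx
    have h11 := lemENT hσ0 heqM 1 1 x hx
    rw [Matrix.det_fin_two, Matrix.det_fin_two]
    have e : ρ 0 * ρ 1 / (σv 0 * σv 1) = (ρ 0 / σv 0) * (ρ 1 / σv 1) := by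
      rw [div_mul_div_comm]
    have e2 : (ρ 0 / σv 1) * (ρ 1 / σv 0) = (ρ 0 / σv 0) * (ρ 1 / σv 1) := by
      rw [div_mul_div_comm, div_mul_div_comm, mul_comm (σv 1) (σv 0)]
    rw [e]
    linear_combination (x^2 * M (q*x) 1 1) * h00 + ((ρ 0 / σv 0) * M x 0 0) * h11
      - (x^2 * M (q*x) 1 0) * h01 - ((ρ 0 / σv 1) * M x 0 1) * h10
      + (M x 0 1 * M x 1 0) * e2
  -- the q-difference equation for dN
  set c' : ℂ := ρ 0 * ρ 1 / (σv 0 * σv 1 * a ^ 2) with hc'def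
  have hc' : c' ≠ 0 := div_ne_zero (mul_ne_zero (hρ0 0) (hρ0 1)) (mul_ne_zero hσ ha2)
  have hdNeq : ∀ x : ℂ, x ≠ 0 → x ^ 2 * dN (q * x) = c' * dN x := by
    apply ext0 (P := qP q a)
    · intro x hx
      have hqx : q * x ≠ 0 := mul_ne_zero hq hx
      exact (continuousAt_id.pow 2).mul (((hdNd (q*x) hqx).continuousAt).comp
        (continuousAt_const.mul continuousAt_id))
    · intro x hx
      exact continuousAt_const.mul ((hdNd x hx).continuousAt)
    · intro x₀ hx₀
      exact qP_eventually_ne hq0 hq1 ha hx₀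
    · intro x hx hPx
      have hqx : q * x ≠ 0 := mul_ne_zero hq hx
      have h1 := hdeteq x hx
      rw [hdet_fact x hx, hdet_fact (q * x) hqx] at h1
      have hPq := qP_funct hq0 hq1 ha x hx
      have e1 : x ^ 2 * qP q a (q * x) ^ 2 = a ^ 2 * qP q a x ^ 2 := by
        linear_combination (x * qP q a (q * x) - a * qP q a x) * hPq
      rw [div_mul_eq_mul_div, eq_div_iff hσ] at h1
      rw [hc'def, div_mul_eq_mul_div, eq_div_iff (mul_ne_zero hσ ha2)]
      apply mul_right_cancel₀ (pow_ne_zero 2 hPx)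
      linear_combination h1 - (σv 0 * σv 1) * x^2 * dN (q*x) * e1
  -- dN vanishes at b1 and b2
  have hQne : ∀ {b : ℂ}, b ≠ 0 → ¬ qCong q b a → qP q a b ≠ 0 := by
    intro b hb hba h0
    obtain ⟨n, hn⟩ := (qP_zero_iff hq0 hq1 ha hb).mp h0
    exact hba ⟨n, hn⟩
  have hdN1 : dN b1 = 0 := by
    have h := hdet_fact b1 hb1
    rw [hdet1] at h
    exact (mul_eq_zero.mp h.symm).resolve_left (pow_ne_zero _ (hQne hb1 h1a))
  have hdN2 : dN b2 = 0 := by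
    have h := hdet_fact b2 hb2
    rw [hdet2] at h
    exact (mul_eq_zero.mp h.symm).resolve_left (pow_ne_zero _ (hQne hb2 h2a))
  -- the non-resonance condition for lemR
  have hcab : ¬ qCong q c' (b1 * b2) := by
    rintro ⟨n, hn⟩
    obtain ⟨k, hk⟩ := hFR
    apply h3a
    refine ⟨k + n, ?_⟩
    rw [zpow_add₀ hq]
    rw [hc'def, div_eq_iff (mul_ne_zero hσ ha2)] at hn
    have hk' : (a * b1 * b2 * b3) * (σv 0 * σv 1) = q ^ k * (ρ 0 * ρ 1) := by
      rw [hk, mul_assoc, div_mul_cancel₀ _ hσ]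
    have hmain : (a * (b1 * b2) * (σv 0 * σv 1)) * b3 =
        (a * (b1 * b2) * (σv 0 * σv 1)) * (q ^ k * q ^ n * a) := by
      linear_combination hk' + (q ^ (k:ℤ)) * hn
    exact mul_left_cancel₀ (mul_ne_zero (mul_ne_zero ha (mul_ne_zero hb1 hb2)) hσ) hmain
  -- rigidity kills dN, contradicting the witness
  have hzero := lemR hq0 hq1 hc' hb1 hb2 h12 hcab hdNd hdNeq hdN1 hdN2
  obtain ⟨x₀, hx₀, hwitne⟩ := hwit
  apply hwitne
  rw [hdet_fact x₀ hx₀, hzero x₀ hx₀, mul_zero]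

end

end JS10

/-- The projective invariant `Π(M) = (f₁g₂ : f₂g₁)` is well defined and invariant under
the diagonal action. -/
theorem stmt10 (q : ℂ) (hq0 : 0 < ‖q‖) (hq1 : ‖q‖ < 1)
    (ρ σv : Fin 2 → ℂ) (xs : Fin 4 → ℂ)
    (hρ0 : ∀ i, ρ i ≠ 0) (hσ0 : ∀ i, σv i ≠ 0) (hx0 : ∀ k, xs k ≠ 0)
    (hFR : qCong q (xs 0 * xs 1 * xs 2 * xs 3) (ρ 0 * ρ 1 / (σv 0 * σv 1)))
    (hNRρ : ¬ qCong q (ρ 0) (ρ 1)) (hNRσ : ¬ qCong q (σv 0) (σv 1))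
    (hNRx : ∀ k l : Fin 4, k ≠ l → ¬ qCong q (xs k) (xs l))
    (hNS : ∀ i j : Fin 2, ¬ qCong q (ρ i / σv j) (xs 0 * xs 1))
    (M : ℂ → Matrix (Fin 2) (Fin 2) ℂ) (hM : M ∈ FJS q ρ σv xs) :
    (M (xs 0) ≠ 0 ∧ M (xs 1) ≠ 0) ∧
    ∀ f1 g1 f2 g2 : ℂ, IsNzCol (M (xs 0)) f1 g1 → IsNzCol (M (xs 1)) f2 g2 →
      ¬(f1 * g2 = 0 ∧ f2 * g1 = 0) ∧
      (∀ f1' g1' f2' g2' : ℂ,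
        IsNzCol (M (xs 0)) f1' g1' → IsNzCol (M (xs 1)) f2' g2' →
        f1 * g2 * (f2' * g1') = f1' * g2' * (f2 * g1)) ∧
      (∀ Γ Δ : Fin 2 → ℂ, (∀ i, Γ i ≠ 0) → (∀ i, Δ i ≠ 0) →
        ∀ p1 q1 p2 q2 : ℂ,
          IsNzCol (Matrix.diagonal Γ * M (xs 0) *
            Matrix.diagonal (fun i => (Δ i)⁻¹)) p1 q1 →
          IsNzCol (Matrix.diagonal Γ * M (xs 1) *
            Matrix.diagonal (fun i => (Δ i)⁻¹)) p2 q2 →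
          f1 * g2 * (p2 * q1) = p1 * q2 * (f2 * g1)) := by
  obtain ⟨hholo, heqM, hwit, hdet0⟩ := hM
  have hq0n : 0 < ‖q‖ := hq0
  have hq1n : ‖q‖ < 1 := hq1
  have hFR' : qCong q (xs 1 * xs 2 * xs 3 * xs 0) (ρ 0 * ρ 1 / (σv 0 * σv 1)) := by
    obtain ⟨k, hk⟩ := hFR
    exact ⟨k, by linear_combination hk⟩
  have hMnz0 : M (xs 0) ≠ 0 :=
    JS10.lemNZ hq0n hq1n hρ0 hσ0 (hx0 0) (hx0 1) (hx0 2) (hx0 3)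
      (hNRx 1 2 (by decide)) (hNRx 1 0 (by decide)) (hNRx 2 0 (by decide))
      (hNRx 3 0 (by decide)) hFR hholo heqM hwit (hdet0 1) (hdet0 2)
  have hMnz1 : M (xs 1) ≠ 0 :=
    JS10.lemNZ hq0n hq1n hρ0 hσ0 (hx0 1) (hx0 2) (hx0 3) (hx0 0)
      (hNRx 2 3 (by decide)) (hNRx 2 1 (by decide)) (hNRx 3 1 (by decide))
      (hNRx 0 1 (by decide)) hFR' hholo heqM hwit (hdet0 2) (hdet0 3)
  refine ⟨⟨hMnz0, hMnz1⟩, ?_⟩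
  intro f1 g1 f2 g2 h1 h2
  refine ⟨?_, ?_, ?_⟩
  · -- (i) not both products vanish
    rintro ⟨e1, e2⟩
    rcases mul_eq_zero.mp e1 with hf1 | hg2 <;> rcases mul_eq_zero.mp e2 with hf2 | hg1
    · -- f1 = 0 and f2 = 0 : top rows of M(xs 0), M(xs 1) vanish
      have hr1 := JS10.rowTopZero (hdet0 0) h1 hf1
      have hr2 := JS10.rowTopZero (hdet0 1) h2 hf2
      refine JS10.lemROW hq0n hq1n hρ0 hσ0 (hx0 0) (hx0 1) (hNRx 0 1 (by decide))
        hholo heqM hwit 0 (fun j => hNS 0 j) ?_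
      intro j
      fin_cases j
      · exact ⟨hr1.1, hr2.1⟩
      · exact ⟨hr1.2, hr2.2⟩
    · -- f1 = 0 and g1 = 0 : contradicts column nonzero
      obtain ⟨j, hfj, hgj, hne⟩ := h1
      exact hne ⟨hf1, hg1⟩
    · -- g2 = 0 and f2 = 0 : contradicts column nonzero
      obtain ⟨j, hfj, hgj, hne⟩ := h2
      exact hne ⟨hf2, hg2⟩
    · -- g2 = 0 and g1 = 0 : bottom rows vanish
      have hr1 := JS10.rowBotZero (hdet0 0) h1 hg1
      have hr2 := JS10.rowBotZero (hdet0 1) h2 hg2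
      refine JS10.lemROW hq0n hq1n hρ0 hσ0 (hx0 0) (hx0 1) (hNRx 0 1 (by decide))
        hholo heqM hwit 1 (fun j => hNS 1 j) ?_
      intro j
      fin_cases j
      · exact ⟨hr1.1, hr2.1⟩
      · exact ⟨hr1.2, hr2.2⟩
  · -- (ii) independence of the choice of columns
    intro f1' g1' f2' g2' h1' h2'
    obtain ⟨j1, ha1, hb1, -⟩ := h1
    obtain ⟨j1', ha1', hb1', -⟩ := h1'
    obtain ⟨j2, ha2, hb2, -⟩ := h2
    obtain ⟨j2', ha2', hb2', -⟩ := h2'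
    exact JS10.pairInv (hdet0 0) (hdet0 1) ⟨j1, ha1, hb1⟩ ⟨j1', ha1', hb1'⟩
      ⟨j2, ha2, hb2⟩ ⟨j2', ha2', hb2'⟩
  · -- (iii) invariance under the diagonal action
    intro Γ Δ hΓ hΔ p1 q1 p2 q2 hp1 hp2
    obtain ⟨j1, ha1, hb1, -⟩ := h1
    obtain ⟨j2, ha2, hb2, -⟩ := h2
    obtain ⟨l1, hpe1, hqe1, -⟩ := hp1
    obtain ⟨l2, hpe2, hqe2, -⟩ := hp2
    simp only [Matrix.mul_diagonal, Matrix.diagonal_mul] at hpe1 hqe1 hpe2 hqe2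
    have key := JS10.pairInv (hdet0 0) (hdet0 1) ⟨j1, ha1, hb1⟩
      ⟨l1, rfl, rfl⟩ ⟨j2, ha2, hb2⟩ ⟨l2, rfl, rfl⟩
    rw [hpe1, hqe1, hpe2, hqe2]
    linear_combination (Γ 0 * Γ 1 * (Δ l1)⁻¹ * (Δ l2)⁻¹) * key
end

section
/- (Gauge freedom of Mano decompositions.) Let M ∈ F. (i) If (P, Q) is a Mano decomposition of M with factor C, Λ ∈ GL₂(O(ℂ*)), and C′ ∈ GL₂(ℂ) satisfies Λ(qx) C = C′ Λ(x) for all x ≠ 0, then (P Λ^{−1}, Λ Q) is a Mano decomposition of M with factor C′. (ii) Conversely, if (P, Q) is a Mano decomposition of M with factor C and (P′, Q′) is a Mano decomposition of M with factor C′, then there exists Λ ∈ GL₂(O(ℂ*)) such that P′ = P Λ^{−1}, Q′ = Λ Q, and Λ(qx) C = C′ Λ(x) for all x ≠ 0. -/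
open Complex Metric Filter Set

noncomputable section ManoAux

lemma isOpen_cstar : IsOpen {x : ℂ | x ≠ 0} := isOpen_ne

lemma preconn_cstar : IsPreconnected {x : ℂ | x ≠ 0} := by
  have h := isConnected_compl_singleton_of_one_lt_rank (E := ℂ)
    (by rw [Complex.rank_real_complex]; norm_num) 0
  have h2 : ({(0:ℂ)}ᶜ : Set ℂ) = {x : ℂ | x ≠ 0} := by ext x; simp
  rw [h2] at h; exact h.isPreconnected

variable {f : ℂ → ℂ}

lemma anAt (hf : DifferentiableOn ℂ f {x : ℂ | x ≠ 0}) {z : ℂ} (hz : z ≠ 0) :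
    AnalyticAt ℂ f z :=
  (hf.analyticOnNhd isOpen_cstar) z hz

lemma not_ev0 (hf : DifferentiableOn ℂ f {x : ℂ | x ≠ 0})
    (hne : ∃ x : ℂ, x ≠ 0 ∧ f x ≠ 0) {z : ℂ} (hz : z ≠ 0) :
    ¬ (∀ᶠ w in nhds z, f w = 0) := by
  intro h
  obtain ⟨x, hx, hfx⟩ := hne
  have := (hf.analyticOnNhd isOpen_cstar).eqOn_zero_of_preconnected_of_eventuallyEq_zero
    preconn_cstar hz (h.mono fun w hw => by simpa using hw) hx
  exact hfx this

lemma ev_ne (hf : DifferentiableOn ℂ f {x : ℂ | x ≠ 0})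
    (hne : ∃ x : ℂ, x ≠ 0 ∧ f x ≠ 0) {z : ℂ} (hz : z ≠ 0) :
    ∀ᶠ w in nhdsWithin z {z}ᶜ, f w ≠ 0 :=
  ((anAt hf hz).eventually_eq_zero_or_eventually_ne_zero).resolve_left (not_ev0 hf hne hz)

lemma zeros_finite (hf : DifferentiableOn ℂ f {x : ℂ | x ≠ 0})
    (hne : ∃ x : ℂ, x ≠ 0 ∧ f x ≠ 0) {K : Set ℂ} (hK : IsCompact K)
    (hK0 : (0:ℂ) ∉ K) : {z | z ∈ K ∧ f z = 0}.Finite := by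
  have hU : ∀ z ∈ K, ∃ U ∈ nhds z, ∀ w ∈ U, f w = 0 → w = z := by
    intro z hz
    have hz0 : z ≠ 0 := fun h => hK0 (h ▸ hz)
    have := ev_ne hf hne hz0
    rw [eventually_nhdsWithin_iff] at this
    obtain ⟨U, hU, hprop⟩ := this.exists_mem
    exact ⟨U, hU, fun w hw hfw => by
      by_contra hne'
      exact hprop w hw (by simpa using hne') hfw⟩
  choose U hUmem hUprop using hU
  obtain ⟨t, hcov⟩ := hK.elim_nhds_subcover' (fun z hz => U z hz) (fun z hz => hUmem z hz)
  have hfin : (Set.image (fun i : ↥K => (i : ℂ)) ↑t).Finite :=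
    Set.Finite.image _ t.finite_toSet
  apply hfin.subset
  rintro z ⟨hzK, hzf⟩
  obtain ⟨i, hi⟩ := Set.mem_iUnion.mp (hcov hzK)
  simp only [Set.mem_iUnion] at hi
  obtain ⟨hit, hiU⟩ := hi
  have := hUprop i i.2 z hiU hzf
  exact ⟨i, Finset.mem_coe.mpr hit, this.symm⟩

open scoped Classical

/-- order of vanishing as a natural number -/
noncomputable def ordval (f : ℂ → ℂ) (z : ℂ) : ℕ :=
  if h : AnalyticAt ℂ f z then (analyticOrderAt f z).toNat else 0

lemma ordval_eq {z : ℂ} (h : AnalyticAt ℂ f z) (hnt : ¬ ∀ᶠ w in nhds z, f w = 0) :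
    analyticOrderAt f z = (ordval f z : ℕ∞) := by
  have hne : analyticOrderAt f z ≠ ⊤ := fun ht => hnt (analyticOrderAt_eq_top.mp ht)
  classical
  rw [ordval, dif_pos h, ENat.coe_toNat hne]

lemma ordval_factor {z : ℂ} (h : AnalyticAt ℂ f z) (hnt : ¬ ∀ᶠ w in nhds z, f w = 0) :
    ∃ g : ℂ → ℂ, AnalyticAt ℂ g z ∧ g z ≠ 0 ∧
      ∀ᶠ w in nhds z, f w = (w - z) ^ (ordval f z) * g w := by
  have := (h.analyticOrderAt_eq_natCast (n := ordval f z)).mp (ordval_eq h hnt)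
  obtain ⟨g, hg, hgz, hev⟩ := this
  exact ⟨g, hg, hgz, hev.mono fun w hw => by simpa [smul_eq_mul] using hw⟩

lemma ordval_of_factor {z : ℂ} (h : AnalyticAt ℂ f z) {g : ℂ → ℂ} {n : ℕ}
    (hg : AnalyticAt ℂ g z) (hgz : g z ≠ 0)
    (hev : ∀ᶠ w in nhds z, f w = (w - z) ^ n * g w) : ordval f z = n := by
  have : analyticOrderAt f z = (n : ℕ∞) := (h.analyticOrderAt_eq_natCast (n := n)).mpr
    ⟨g, hg, hgz, hev.mono fun w hw => by simpa [smul_eq_mul] using hw⟩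
  classical
  rw [ordval, dif_pos h, this]; rfl

lemma ordval_pos {z : ℂ} (h : AnalyticAt ℂ f z) (hnt : ¬ ∀ᶠ w in nhds z, f w = 0)
    (hz : f z = 0) : 1 ≤ ordval f z := by
  obtain ⟨g, hg, hgz, hev⟩ := ordval_factor h hnt
  rcases Nat.eq_zero_or_pos (ordval f z) with h0 | h1
  · exfalso
    have := hev.self_of_nhds
    rw [h0, pow_zero, one_mul] at this
    exact hgz (this ▸ hz)
  · exact h1

lemma ordval_zero_of_ne {z : ℂ} (h : AnalyticAt ℂ f z) (hz : f z ≠ 0) : ordval f z = 0 :=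
  ordval_of_factor h h hz (Filter.Eventually.of_forall fun w => by simp)


section Peeling

variable {f : ℂ → ℂ} {z₀ : ℂ}

lemma peel_diff (hf : DifferentiableOn ℂ f {x : ℂ | x ≠ 0}) (hz₀ : z₀ ≠ 0) :
    DifferentiableOn ℂ (dslope f z₀) {x : ℂ | x ≠ 0} := by
  intro z hz
  rcases eq_or_ne z z₀ with rfl | hne
  · obtain ⟨p, hp⟩ := anAt hf hz₀
    have : AnalyticAt ℂ (dslope f z) z := ⟨_, hp.has_fpower_series_dslope_fslope⟩
    exact this.differentiableAt.differentiableWithinAt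
  · have : DifferentiableAt ℂ f z :=
      (hf z hz).differentiableAt (isOpen_cstar.mem_nhds hz)
    exact ((differentiableAt_dslope_of_ne hne).mpr this).differentiableWithinAt

lemma peel_factor (hz : f z₀ = 0) (x : ℂ) : f x = (x - z₀) * dslope f z₀ x := by
  have := sub_smul_dslope f z₀ x
  rw [hz, sub_zero] at this
  rw [← this]; simp [smul_eq_mul]

lemma peel_analyticAt_z₀ (hf : DifferentiableOn ℂ f {x : ℂ | x ≠ 0}) (hz₀ : z₀ ≠ 0) :
    AnalyticAt ℂ (dslope f z₀) z₀ := by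
  obtain ⟨p, hp⟩ := anAt hf hz₀
  exact ⟨_, hp.has_fpower_series_dslope_fslope⟩

lemma peel_ord_at (hf : DifferentiableOn ℂ f {x : ℂ | x ≠ 0})
    (hne : ∃ x : ℂ, x ≠ 0 ∧ f x ≠ 0) (hz₀ : z₀ ≠ 0) (hz : f z₀ = 0) :
    ordval (dslope f z₀) z₀ = ordval f z₀ - 1 := by
  have hA := anAt hf hz₀
  have hnt := not_ev0 hf hne hz₀
  obtain ⟨g, hg, hgz, hev⟩ := ordval_factor hA hnt
  set n := ordval f z₀ with hn
  have hn1 : 1 ≤ n := ordval_pos hA hnt hz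
  have hA1 := peel_analyticAt_z₀ hf hz₀
  -- eventual equality on punctured neighbourhood
  have hevp : ∀ᶠ w in nhdsWithin z₀ {z₀}ᶜ, dslope f z₀ w = (w - z₀) ^ (n - 1) * g w := by
    filter_upwards [hev.filter_mono nhdsWithin_le_nhds, self_mem_nhdsWithin] with w hw hw'
    have hwne : w ≠ z₀ := by simpa using hw'
    have hsub : w - z₀ ≠ 0 := sub_ne_zero.mpr hwne
    have h1 : f w = (w - z₀) * dslope f z₀ w := peel_factor hz w
    have h2 : (w - z₀) * dslope f z₀ w = (w - z₀) * ((w - z₀) ^ (n - 1) * g w) := by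
      rw [← h1, hw]
      rw [mul_comm ((w - z₀) ^ (n-1)) (g w)]
      rw [← mul_assoc]
      rw [mul_comm (w-z₀) (g w), mul_assoc]
      rw [← pow_succ']
      have : n - 1 + 1 = n := Nat.succ_pred_eq_of_pos hn1
      rw [this, mul_comm]
    exact mul_left_cancel₀ hsub h2
  -- value at z₀ agrees by continuity
  have hval : dslope f z₀ z₀ = (z₀ - z₀) ^ (n - 1) * g z₀ := by
    have hc1 : ContinuousAt (dslope f z₀) z₀ := hA1.continuousAt
    have hc2 : ContinuousAt (fun w => (w - z₀) ^ (n - 1) * g w) z₀ := by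
      exact (((continuousAt_id.sub continuousAt_const).pow _).mul hg.continuousAt)
    have hne' : (nhdsWithin z₀ ({z₀}ᶜ : Set ℂ)).NeBot := by infer_instance
    exact tendsto_nhds_unique_of_eventuallyEq
      (hc1.tendsto.mono_left nhdsWithin_le_nhds)
      (hc2.tendsto.mono_left nhdsWithin_le_nhds) hevp
  have hev1 : ∀ᶠ w in nhds z₀, dslope f z₀ w = (w - z₀) ^ (n - 1) * g w := by
    rw [← nhdsNE_sup_pure z₀]
    rw [Filter.eventually_sup]
    exact ⟨hevp, by simpa [Filter.eventually_pure] using hval⟩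
  exact ordval_of_factor hA1 hg hgz hev1

lemma peel_ord_ne (hf : DifferentiableOn ℂ f {x : ℂ | x ≠ 0})
    (hne : ∃ x : ℂ, x ≠ 0 ∧ f x ≠ 0) (hz₀ : z₀ ≠ 0) (hz₀f : f z₀ = 0) {z : ℂ}
    (hz : z ≠ 0) (hzz : z ≠ z₀) : ordval (dslope f z₀) z = ordval f z := by
  have hA := anAt hf hz
  have hnt := not_ev0 hf hne hz
  obtain ⟨g, hg, hgz, hev⟩ := ordval_factor hA hnt
  set n := ordval f z with hn
  have hsub : z - z₀ ≠ 0 := sub_ne_zero.mpr hzz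
  have hg1 : AnalyticAt ℂ (fun w => g w * (w - z₀)⁻¹) z :=
    hg.mul (((analyticAt_id.sub analyticAt_const).inv hsub))
  have hevd : ∀ᶠ w in nhds z, dslope f z₀ w = (w - z) ^ n * (g w * (w - z₀)⁻¹) := by
    have hop : ∀ᶠ w in nhds z, w ≠ z₀ := isOpen_ne.eventually_mem hzz
    filter_upwards [hev, hop] with w hw hwne
    rw [dslope_of_ne f hwne, slope_def_field, hz₀f, sub_zero, hw]
    field_simp
  have hX : AnalyticAt ℂ (fun w => (w - z) ^ n * (g w * (w - z₀)⁻¹)) z :=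
    ((analyticAt_id.sub analyticAt_const).pow n).mul hg1
  have hA1 : AnalyticAt ℂ (dslope f z₀) z := hX.congr (Filter.EventuallyEq.symm hevd)
  exact ordval_of_factor hA1 hg1 (mul_ne_zero hgz (inv_ne_zero hsub)) hevd

end Peeling

section ArgPrinciple

/-- zeros of `f` in the open annulus `s < |z| < r`. -/
def annZeros (f : ℂ → ℂ) (s r : ℝ) : Set ℂ :=
  {z : ℂ | (s < ‖z‖ ∧ ‖z‖ < r) ∧ f z = 0}

variable {f : ℂ → ℂ}

lemma derivQuot_diffAt (hf : DifferentiableOn ℂ f {x : ℂ | x ≠ 0}) {x : ℂ}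
    (hx : x ≠ 0) (hfx : f x ≠ 0) :
    DifferentiableAt ℂ (fun z => deriv f z / f z) x := by
  have h1 : DifferentiableAt ℂ f x := (hf x hx).differentiableAt (isOpen_cstar.mem_nhds hx)
  have h2 : DifferentiableAt ℂ (deriv f) x :=
    (((hf.analyticOnNhd isOpen_cstar).deriv_of_isOpen isOpen_cstar) x hx).differentiableAt
  exact h2.div h1 hfx

lemma argPrinciple (N : ℕ) :
    ∀ (f : ℂ → ℂ), DifferentiableOn ℂ f {x : ℂ | x ≠ 0} →
    ∀ {s r : ℝ}, 0 < s → s < r →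
    (∀ x : ℂ, ‖x‖ = s → f x ≠ 0) →
    (∀ x : ℂ, ‖x‖ = r → f x ≠ 0) →
    ∀ (hZ : (annZeros f s r).Finite),
    (∑ z ∈ hZ.toFinset, ordval f z) = N →
    (∮ z in C(0, r), deriv f z / f z) - (∮ z in C(0, s), deriv f z / f z)
      = 2 * (Real.pi : ℂ) * Complex.I * (N : ℂ) := by
  induction N with
  | zero =>
    intro f hf s r hs hsr hbs hbr hZ hsum
    have hr0 : (0:ℝ) < r := hs.trans hsr
    have hfr : ∀ x : ℂ, x ∈ closedBall (0:ℂ) r \ ball 0 s → (x ≠ 0 ∧ f x ≠ 0) := by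
      intro x hx
      obtain ⟨hx1, hx2⟩ := hx
      rw [mem_closedBall_zero_iff] at hx1
      rw [mem_ball_zero_iff, not_lt] at hx2
      have hx0 : x ≠ 0 := by
        intro h; rw [h] at hx2; simpa using lt_of_lt_of_le hs hx2
      refine ⟨hx0, ?_⟩
      rcases eq_or_lt_of_le hx2 with h | h
      · exact hbs x h.symm
      rcases eq_or_lt_of_le hx1 with h' | h'
      · exact hbr x h'
      intro hfx
      have hmem : x ∈ hZ.toFinset := by
        rw [Set.Finite.mem_toFinset]; exact ⟨⟨h, h'⟩, hfx⟩
      have h1 : 1 ≤ ordval f x :=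
        ordval_pos (anAt hf hx0)
          (not_ev0 hf ⟨(r:ℂ), by simp [hr0.ne'], by
            apply hbr; rw [Complex.norm_of_nonneg hr0.le]⟩ hx0) hfx
      have : 1 ≤ ∑ z ∈ hZ.toFinset, ordval f z :=
        le_trans h1 (Finset.single_le_sum (fun i _ => Nat.zero_le _) hmem)
      omega
    have hsub : (ball (0:ℂ) r \ closedBall 0 s) ⊆ closedBall (0:ℂ) r \ ball 0 s := by
      intro z hz
      exact ⟨ball_subset_closedBall hz.1, fun h => hz.2 (ball_subset_closedBall h)⟩
    have heq := Complex.circleIntegral_eq_of_differentiable_on_annulus_off_countable hs hsr.le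
      countable_empty
      (f := fun z => deriv f z / f z)
      (fun x hx => ((derivQuot_diffAt hf (hfr x hx).1 (hfr x hx).2).continuousAt).continuousWithinAt)
      (fun z hz => derivQuot_diffAt hf (hfr z (hsub hz.1)).1 (hfr z (hsub hz.1)).2)
    rw [heq, sub_self]
    simp
  | succ n ih =>
    intro f hf s r hs hsr hbs hbr hZ hsum
    have hr0 : (0:ℝ) < r := hs.trans hsr
    have hne : ∃ x : ℂ, x ≠ 0 ∧ f x ≠ 0 := by
      refine ⟨(r:ℂ), by simp [hr0.ne'], ?_⟩
      apply hbr; rw [Complex.norm_of_nonneg hr0.le]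
    -- pick a zero z₀
    have hZne : hZ.toFinset.Nonempty := by
      rcases hZ.toFinset.eq_empty_or_nonempty with h | h
      · rw [h] at hsum; simp at hsum
      · exact h
    obtain ⟨z₀, hz₀mem⟩ := hZne
    have hz₀p : ((s < ‖z₀‖ ∧ ‖z₀‖ < r) ∧ f z₀ = 0) :=
      (Set.Finite.mem_toFinset hZ).mp hz₀mem
    obtain ⟨⟨hz₀s, hz₀r⟩, hz₀f⟩ := hz₀p
    have hz₀ne : z₀ ≠ 0 := by
      intro h; rw [h] at hz₀s; simpa using lt_trans hs hz₀s
    set f₁ := dslope f z₀ with hf₁def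
    have hf₁ : DifferentiableOn ℂ f₁ {x : ℂ | x ≠ 0} := peel_diff hf hz₀ne
    have hfac : ∀ x : ℂ, f x = (x - z₀) * f₁ x := peel_factor hz₀f
    have hbs₁ : ∀ x : ℂ, ‖x‖ = s → f₁ x ≠ 0 := by
      intro x hx h
      exact hbs x hx (by rw [hfac x, h, mul_zero])
    have hbr₁ : ∀ x : ℂ, ‖x‖ = r → f₁ x ≠ 0 := by
      intro x hx h
      exact hbr x hx (by rw [hfac x, h, mul_zero])
    have hne₁ : ∃ x : ℂ, x ≠ 0 ∧ f₁ x ≠ 0 := by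
      refine ⟨(r:ℂ), by simp [hr0.ne'], ?_⟩
      apply hbr₁; rw [Complex.norm_of_nonneg hr0.le]
    have hZsub : annZeros f₁ s r ⊆ annZeros f s r := by
      rintro z ⟨hann, hz⟩
      exact ⟨hann, by rw [hfac z, hz, mul_zero]⟩
    have hZ₁ : (annZeros f₁ s r).Finite := hZ.subset hZsub
    have hsubF : hZ₁.toFinset ⊆ hZ.toFinset := by
      intro z hz
      rw [Set.Finite.mem_toFinset] at hz ⊢
      exact hZsub hz
    -- point of annulus is nonzero
    have hann_ne : ∀ z ∈ hZ.toFinset, z ≠ 0 := by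
      intro z hz
      rw [Set.Finite.mem_toFinset] at hz
      intro h; rw [h] at hz; simpa using lt_trans hs hz.1.1
    have hsum₁ : ∑ z ∈ hZ₁.toFinset, ordval f₁ z = n := by
      have h1 : ∑ z ∈ hZ₁.toFinset, ordval f₁ z = ∑ z ∈ hZ.toFinset, ordval f₁ z := by
        apply Finset.sum_subset hsubF
        intro z hzZ hznZ₁
        have hzann := (Set.Finite.mem_toFinset hZ).mp hzZ
        have hzf₁ : f₁ z ≠ 0 := by
          intro h
          exact hznZ₁ ((Set.Finite.mem_toFinset hZ₁).mpr ⟨hzann.1, h⟩)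
        exact ordval_zero_of_ne (anAt hf₁ (hann_ne z hzZ)) hzf₁
      have h2 := Finset.sum_erase_add hZ.toFinset (ordval f₁) hz₀mem
      have h3 := Finset.sum_erase_add hZ.toFinset (ordval f) hz₀mem
      have h4 : ∑ z ∈ hZ.toFinset.erase z₀, ordval f₁ z
          = ∑ z ∈ hZ.toFinset.erase z₀, ordval f z := by
        apply Finset.sum_congr rfl
        intro z hz
        have hzne := Finset.ne_of_mem_erase hz
        exact peel_ord_ne hf hne hz₀ne hz₀f (hann_ne z (Finset.mem_of_mem_erase hz)) hzne
      have h5 : ordval f₁ z₀ = ordval f z₀ - 1 := peel_ord_at hf hne hz₀ne hz₀f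
      have h6 : 1 ≤ ordval f z₀ :=
        ordval_pos (anAt hf hz₀ne) (not_ev0 hf hne hz₀ne) hz₀f
      omega
    have IH := ih f₁ hf₁ hs hsr hbs₁ hbr₁ hZ₁ hsum₁
    -- the contour identity on each circle
    have key : ∀ t : ℝ, 0 < t → (∀ x : ℂ, ‖x‖ = t → f x ≠ 0) →
        ‖z₀‖ ≠ t →
        (∮ z in C(0, t), deriv f₁ z / f₁ z)
          = (∮ z in C(0, t), deriv f z / f z) - ∮ z in C(0, t), (z - z₀)⁻¹ := by
      intro t ht hft htz
      have hsph : ∀ x : ℂ, x ∈ sphere (0:ℂ) t → ‖x‖ = t := by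
        intro x hx
        rw [mem_sphere_zero_iff_norm] at hx
        exact hx
      have hxne0 : ∀ x : ℂ, ‖x‖ = t → x ≠ 0 := by
        intro x hxt h
        rw [h, norm_zero] at hxt
        exact ht.ne' hxt.symm
      have hxnez₀ : ∀ x : ℂ, ‖x‖ = t → x ≠ z₀ := by
        intro x hxt h
        rw [h] at hxt
        exact htz hxt
      have heq : EqOn (fun z => deriv f z / f z)
          (fun z => deriv f₁ z / f₁ z + (z - z₀)⁻¹) (sphere (0:ℂ) t) := by
        intro x hx
        have hxt := hsph x hx
        have hx0 : x ≠ 0 := hxne0 x hxt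
        have hxz₀ : x ≠ z₀ := hxnez₀ x hxt
        have hfx : f x ≠ 0 := hft x hxt
        have hf₁x : f₁ x ≠ 0 := fun h => hfx (by rw [hfac x, h, mul_zero])
        have hsubx : x - z₀ ≠ 0 := sub_ne_zero.mpr hxz₀
        have hdx : DifferentiableAt ℂ f₁ x :=
          (hf₁ x hx0).differentiableAt (isOpen_cstar.mem_nhds hx0)
        have hder : HasDerivAt f (f₁ x + (x - z₀) * deriv f₁ x) x := by
          have h1 : HasDerivAt (fun w => (w - z₀) * f₁ w)
              (1 * f₁ x + (x - z₀) * deriv f₁ x) x :=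
            ((hasDerivAt_id x).sub_const z₀).mul hdx.hasDerivAt
          rw [one_mul] at h1
          exact h1.congr_of_eventuallyEq (Filter.Eventually.of_forall fun w => hfac w)
        show deriv f x / f x = deriv f₁ x / f₁ x + (x - z₀)⁻¹
        rw [hder.deriv, hfac x]
        field_simp
        ring
      have hci1 : CircleIntegrable (fun z => deriv f z / f z) 0 t := by
        apply ContinuousOn.circleIntegrable ht.le
        intro x hx
        have hxt := hsph x hx
        exact (derivQuot_diffAt hf (hxne0 x hxt) (hft x hxt)).continuousAt.continuousWithinAt
      have hci2 : CircleIntegrable (fun z => (z - z₀)⁻¹) 0 t := by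
        apply ContinuousOn.circleIntegrable ht.le
        intro x hx
        have hxt := hsph x hx
        exact ((continuousAt_id.sub continuousAt_const).inv₀
          (sub_ne_zero.mpr (hxnez₀ x hxt))).continuousWithinAt
      calc (∮ z in C(0,t), deriv f₁ z / f₁ z)
          = ∮ z in C(0,t), (deriv f z / f z - (z - z₀)⁻¹) := by
            apply circleIntegral.integral_congr ht.le
            intro x hx
            have h := heq hx
            simp only at h ⊢
            rw [h]; ring
        _ = (∮ z in C(0,t), deriv f z / f z) - ∮ z in C(0,t), (z - z₀)⁻¹ :=
            circleIntegral.integral_sub hci1 hci2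
    have hkeyr := key r hr0 hbr (ne_of_lt hz₀r)
    have hkeys := key s hs hbs (ne_of_gt hz₀s)
    have hint_r : (∮ z in C(0,r), (z - z₀)⁻¹) = 2 * Real.pi * Complex.I := by
      apply circleIntegral.integral_sub_inv_of_mem_ball
      rw [mem_ball_zero_iff]
      exact hz₀r
    have hint_s : (∮ z in C(0,s), (z - z₀)⁻¹) = 0 := by
      have hnz : ∀ x : ℂ, x ∈ closedBall (0:ℂ) s → x ≠ z₀ := by
        intro x hx h
        rw [mem_closedBall_zero_iff, h] at hx
        exact absurd (lt_of_le_of_lt hx hz₀s) (lt_irrefl _)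
      apply Complex.circleIntegral_eq_zero_of_differentiable_on_off_countable hs.le
        countable_empty
      · intro x hx
        exact ((continuousAt_id.sub continuousAt_const).inv₀
          (sub_ne_zero.mpr (hnz x hx))).continuousWithinAt
      · intro z hz
        exact (differentiableAt_id.sub_const z₀).inv
          (sub_ne_zero.mpr (hnz z (ball_subset_closedBall hz.1)))
    have hfin : (∮ z in C(0,r), deriv f z / f z) - (∮ z in C(0,s), deriv f z / f z)
        = ((∮ z in C(0,r), deriv f₁ z / f₁ z) - (∮ z in C(0,s), deriv f₁ z / f₁ z))
          + ((∮ z in C(0,r), (z - z₀)⁻¹) - (∮ z in C(0,s), (z - z₀)⁻¹)) := by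
      rw [hkeyr, hkeys]; ring
    rw [hfin, IH, hint_r, hint_s]
    push_cast
    ring

end ArgPrinciple

section Scaling

lemma circle_scale (h : ℂ → ℂ) {q : ℂ} (hq : q ≠ 0) (r : ℝ) :
    (∮ x in C(0, r), q * h (q * x)) = ∮ y in C(0, ‖q‖ * r), h y := by
  set F : ℝ → ℂ := fun u => deriv (circleMap 0 (‖q‖ * r)) u •
      h (circleMap 0 (‖q‖ * r) u) with hF
  have habs : (‖q‖ : ℂ) * Complex.exp (Complex.arg q * Complex.I) = q :=
    Complex.norm_mul_exp_arg_mul_I q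
  have hrot : ∀ θ : ℝ, q * circleMap 0 r θ = circleMap 0 (‖q‖ * r) (θ + Complex.arg q) := by
    intro θ
    rw [circleMap, circleMap]
    simp only [zero_add]
    push_cast
    rw [add_mul, Complex.exp_add]
    conv_lhs => rw [← habs]
    ring
  have hint : ∀ θ : ℝ, deriv (circleMap 0 r) θ • (q * h (q * circleMap 0 r θ))
      = F (θ + Complex.arg q) := by
    intro θ
    rw [hF]
    simp only [deriv_circleMap, smul_eq_mul]
    rw [← hrot θ]
    ring
  rw [circleIntegral, circleIntegral]
  have h1 : (∫ θ in (0:ℝ)..2 * Real.pi,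
        deriv (circleMap 0 r) θ • (q * h (q * circleMap 0 r θ)))
      = ∫ θ in (0:ℝ)..2 * Real.pi, F (θ + Complex.arg q) :=
    intervalIntegral.integral_congr fun θ _ => hint θ
  rw [h1, intervalIntegral.integral_comp_add_right F (Complex.arg q)]
  have hper : Function.Periodic F (2 * Real.pi) := by
    intro u
    rw [hF]
    simp only [deriv_circleMap]
    rw [periodic_circleMap _ _ u]
  have h2 := hper.intervalIntegral_add_eq (Complex.arg q) 0
  rw [zero_add] at h2
  rw [zero_add, add_comm (2 * Real.pi) (Complex.arg q)]
  exact h2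

lemma contour_fe {f : ℂ → ℂ} (hf : DifferentiableOn ℂ f {x : ℂ | x ≠ 0})
    {q : ℂ} (hq0 : q ≠ 0) {k : ℕ} (hk : 1 ≤ k) {c : ℂ} (hc : c ≠ 0)
    (heq : ∀ x : ℂ, x ≠ 0 → x ^ k * f (q * x) = c * f x) {r : ℝ} (hr : 0 < r)
    (hfr : ∀ x : ℂ, ‖x‖ = r → f x ≠ 0) :
    (∮ z in C(0, ‖q‖ * r), deriv f z / f z)
      = (∮ z in C(0, r), deriv f z / f z) - 2 * (Real.pi : ℂ) * Complex.I * k := by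
  have h1 : (∮ z in C(0, ‖q‖ * r), deriv f z / f z)
      = ∮ x in C(0, r), q * (deriv f (q * x) / f (q * x)) :=
    (circle_scale (fun z => deriv f z / f z) hq0 r).symm
  have hsph : ∀ x : ℂ, x ∈ sphere (0:ℂ) r → ‖x‖ = r := by
    intro x hx
    rw [mem_sphere_zero_iff_norm] at hx
    exact hx
  have heqO : EqOn (fun x => q * (deriv f (q * x) / f (q * x)))
      (fun x => deriv f x / f x - (k : ℂ) * (x - 0)⁻¹) (sphere (0:ℂ) r) := by
    intro x hx
    have hxr := hsph x hx
    have hx0 : x ≠ 0 := by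
      intro h; rw [h, norm_zero] at hxr; exact hr.ne' hxr.symm
    have hxk : x ^ k ≠ 0 := pow_ne_zero _ hx0
    have hfx : f x ≠ 0 := hfr x hxr
    have hqx0 : q * x ≠ 0 := mul_ne_zero hq0 hx0
    have hfqx : f (q * x) ≠ 0 := by
      intro h
      have hE := heq x hx0
      rw [h, mul_zero] at hE
      rcases mul_eq_zero.mp hE.symm with h' | h'
      · exact hc h'
      · exact hfx h'
    have hfd : ∀ w : ℂ, w ≠ 0 → DifferentiableAt ℂ f w := fun w hw =>
      (hf w hw).differentiableAt (isOpen_cstar.mem_nhds hw)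
    have hlin : HasDerivAt (fun w : ℂ => q * w) q x := by
      simpa using (hasDerivAt_id x).const_mul q
    have hqd : HasDerivAt (fun w => f (q * w)) (deriv f (q * x) * q) x :=
      HasDerivAt.comp x (hfd (q * x) hqx0).hasDerivAt hlin
    have hφ : HasDerivAt (fun w => w ^ k * f (q * w))
        ((k : ℂ) * x ^ (k - 1) * f (q * x) + x ^ k * (deriv f (q * x) * q)) x :=
      (hasDerivAt_pow k x).mul hqd
    have hψ : HasDerivAt (fun w => c * f w) (c * deriv f x) x :=
      (hfd x hx0).hasDerivAt.const_mul c
    have hev : (fun w => c * f w) =ᶠ[nhds x] (fun w => w ^ k * f (q * w)) := by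
      filter_upwards [isOpen_cstar.mem_nhds hx0] with w hw
      exact (heq w hw).symm
    have hder : HasDerivAt (fun w => c * f w)
        ((k : ℂ) * x ^ (k - 1) * f (q * x) + x ^ k * (deriv f (q * x) * q)) x :=
      hφ.congr_of_eventuallyEq hev
    have hE2 : c * deriv f x
        = (k : ℂ) * x ^ (k - 1) * f (q * x) + x ^ k * (deriv f (q * x) * q) :=
      hψ.unique hder
    have hE1 : x ^ k * f (q * x) = c * f x := heq x hx0
    have hxk1 : x ^ (k - 1) * x = x ^ k := by
      rw [← pow_succ]
      congr 1
      omega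
    -- the pointwise identity
    show q * (deriv f (q * x) / f (q * x)) = deriv f x / f x - (k : ℂ) * (x - 0)⁻¹
    rw [sub_zero]
    have hmain : x ^ k * (q * deriv f (q * x) * f x * x)
        = x ^ k * (deriv f x * f (q * x) * x - (k : ℂ) * f (q * x) * f x) := by
      linear_combination (-(f x * x)) * hE2 - (deriv f x * x) * hE1
        - ((k : ℂ) * f (q * x) * f x) * hxk1
    have hmain' : q * deriv f (q * x) * f x * x
        = deriv f x * f (q * x) * x - (k : ℂ) * f (q * x) * f x :=
      mul_left_cancel₀ hxk hmain
    field_simp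
    linear_combination hmain'
  rw [h1, circleIntegral.integral_congr hr.le heqO]
  have hciA : CircleIntegrable (fun z => deriv f z / f z) 0 r := by
    apply ContinuousOn.circleIntegrable hr.le
    intro x hx
    have hxr := hsph x hx
    have hx0 : x ≠ 0 := by
      intro h; rw [h, norm_zero] at hxr; exact hr.ne' hxr.symm
    exact (derivQuot_diffAt hf hx0 (hfr x hxr)).continuousAt.continuousWithinAt
  have hciB : CircleIntegrable (fun z => (k : ℂ) * (z - 0)⁻¹) 0 r := by
    apply ContinuousOn.circleIntegrable hr.le
    intro x hx
    have hxr := hsph x hx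
    have hx0 : x - 0 ≠ 0 := by
      rw [sub_zero]
      intro h; rw [h, norm_zero] at hxr; exact hr.ne' hxr.symm
    exact (continuousAt_const.mul
      ((continuousAt_id.sub continuousAt_const).inv₀ hx0)).continuousWithinAt
  rw [circleIntegral.integral_sub hciA hciB]
  have hks : (∮ z in C(0, r), (k : ℂ) * (z - 0)⁻¹) = (k : ℂ) * (2 * Real.pi * Complex.I) := by
    have hsmul := circleIntegral.integral_smul (k : ℂ) (fun z => (z - 0)⁻¹) 0 r
    simp only [smul_eq_mul] at hsmul
    rw [hsmul, circleIntegral.integral_sub_inv_of_mem_ball (mem_ball_self hr)]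
  rw [hks]
  ring

end Scaling

section Theta

/-- location of a representative `ρ^m * u` in a half-open interval -/
lemma exists_zpow_between {ρ u r : ℝ} (hρ0 : 0 < ρ) (hρ1 : ρ < 1) (hu : 0 < u)
    (hr : 0 < r) : ∃ m : ℤ, ρ * r < ρ ^ m * u ∧ ρ ^ m * u ≤ r := by
  have hL : Real.log ρ < 0 := Real.log_neg hρ0 hρ1
  have hkey : ∀ m : ℤ, (ρ ^ m * u ≤ r ↔ (Real.log u - Real.log r) / (-Real.log ρ) ≤ (m : ℝ)) := by
    intro m
    have hpm : (0:ℝ) < ρ ^ m * u := mul_pos (zpow_pos hρ0 m) hu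
    rw [← Real.log_le_log_iff hpm hr, Real.log_mul (zpow_pos hρ0 m).ne' hu.ne',
      Real.log_zpow, div_le_iff₀ (by linarith : (0:ℝ) < -Real.log ρ)]
    constructor <;> intro h <;> nlinarith
  set t := (Real.log u - Real.log r) / (-Real.log ρ) with ht
  refine ⟨⌈t⌉, ?_, (hkey ⌈t⌉).mpr (Int.le_ceil t)⟩
  have hnot : ¬ (ρ ^ (⌈t⌉ - 1) * u ≤ r) := by
    rw [hkey]
    push_cast
    intro h
    have h2 : (⌈t⌉ : ℤ) ≤ ⌈t⌉ - 1 := Int.ceil_le.mpr (by push_cast; linarith)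
    omega
  push_neg at hnot
  have hstep : ρ ^ (⌈t⌉ : ℤ) = ρ * ρ ^ (⌈t⌉ - 1) := by
    rw [mul_comm, ← zpow_add_one₀ hρ0.ne']
    congr 1
    omega
  calc ρ * r < ρ * (ρ ^ (⌈t⌉ - 1) * u) := (mul_lt_mul_iff_right₀ hρ0).mpr hnot
  _ = ρ ^ (⌈t⌉ : ℤ) * u := by rw [hstep]; ring

variable {f : ℂ → ℂ} {q c : ℂ} {k : ℕ}

lemma zero_invariance (hq0 : q ≠ 0) (hc : c ≠ 0)
    (heq : ∀ x : ℂ, x ≠ 0 → x ^ k * f (q * x) = c * f x) :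
    ∀ x : ℂ, x ≠ 0 → (f (q * x) = 0 ↔ f x = 0) := by
  intro x hx
  have hE := heq x hx
  have hxk : x ^ k ≠ 0 := pow_ne_zero _ hx
  constructor
  · intro h
    rw [h, mul_zero] at hE
    rcases mul_eq_zero.mp hE.symm with h' | h'
    · exact absurd h' hc
    · exact h'
  · intro h
    rw [h, mul_zero] at hE
    rcases mul_eq_zero.mp hE with h' | h'
    · exact absurd h' hxk
    · exact h'

lemma zero_zpow_invariance (hq0 : q ≠ 0) (hc : c ≠ 0)
    (heq : ∀ x : ℂ, x ≠ 0 → x ^ k * f (q * x) = c * f x)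
    {x : ℂ} (hx : x ≠ 0) (hfx : f x = 0) : ∀ m : ℤ, f (q ^ m * x) = 0 := by
  intro m
  induction m using Int.induction_on with
  | zero => simpa using hfx
  | succ n ihn =>
    have hqn : (q : ℂ) ^ (n : ℤ) * x ≠ 0 := mul_ne_zero (zpow_ne_zero _ hq0) hx
    have h1 : (q : ℂ) ^ ((n : ℤ) + 1) * x = q * (q ^ (n : ℤ) * x) := by
      rw [zpow_add_one₀ hq0]; ring
    rw [h1]
    exact (zero_invariance hq0 hc heq _ hqn).mpr ihn
  | pred n ihn =>
    have hqn : (q : ℂ) ^ (-(n : ℤ) - 1) * x ≠ 0 := mul_ne_zero (zpow_ne_zero _ hq0) hx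
    have h1 : q * ((q : ℂ) ^ (-(n : ℤ) - 1) * x) = q ^ (-(n : ℤ)) * x := by
      rw [← mul_assoc, mul_comm q, ← zpow_add_one₀ hq0]
      norm_num
    exact (zero_invariance hq0 hc heq _ hqn).mp (by rw [h1]; exact ihn)

theorem theta_no_extra_zeros (hq0 : q ≠ 0) (hq1 : ‖q‖ < 1) (hc : c ≠ 0)
    (hk : 1 ≤ k) (hf : DifferentiableOn ℂ f {x : ℂ | x ≠ 0})
    (heq : ∀ x : ℂ, x ≠ 0 → x ^ k * f (q * x) = c * f x)
    (hne : ∃ x : ℂ, x ≠ 0 ∧ f x ≠ 0)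
    (z : Fin (k + 1) → ℂ) (hz0 : ∀ i, z i ≠ 0) (hzf : ∀ i, f (z i) = 0)
    (hinc : ∀ i j, i ≠ j → ∀ m : ℤ, z i ≠ q ^ m * z j) : False := by
  have hqa : 0 < ‖q‖ := by
    exact norm_pos_iff.mpr hq0
  -- choose a good radius
  have hK : IsCompact (closedBall (0:ℂ) 1 \ ball 0 (‖q‖)) :=
    (isCompact_closedBall 0 1).diff isOpen_ball
  have hK0 : (0:ℂ) ∉ closedBall (0:ℂ) 1 \ ball 0 (‖q‖) := by
    intro h
    exact h.2 (by rwa [mem_ball_zero_iff, norm_zero])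
  have hKfin := zeros_finite hf hne hK hK0
  have hrex : ∃ r : ℝ, ‖q‖ < r ∧ r ≤ 1 ∧
      ∀ w : ℂ, f w = 0 → ‖w‖ ≠ r := by
    by_contra hcon
    push_neg at hcon
    have himg : Set.Ioc (‖q‖) 1 ⊆
        (norm : ℂ → ℝ) '' {w | w ∈ closedBall (0:ℂ) 1 \ ball 0 (‖q‖) ∧ f w = 0} := by
      rintro r ⟨hr1, hr2⟩
      obtain ⟨w, hw1, hw2⟩ := hcon r hr1 hr2
      refine ⟨w, ⟨⟨?_, ?_⟩, hw1⟩, hw2⟩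
      · rw [mem_closedBall_zero_iff, hw2]; exact hr2
      · rw [mem_ball_zero_iff, hw2]; exact not_lt.mpr hr1.le
    exact (Set.Ioc_infinite hq1) ((hKfin.image (norm : ℂ → ℝ)).subset himg)
  obtain ⟨r, hrq, hr1, hrz⟩ := hrex
  have hr0 : (0:ℝ) < r := lt_trans hqa hrq
  set s := ‖q‖ * r with hs
  have hs0 : 0 < s := mul_pos hqa hr0
  have hsr : s < r := by
    calc s = ‖q‖ * r := rfl
    _ < 1 * r := by exact mul_lt_mul_of_pos_right hq1 hr0
    _ = r := one_mul r
  -- boundary circles are zero-free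
  have hbr : ∀ x : ℂ, ‖x‖ = r → f x ≠ 0 := fun x hx h => hrz x h hx
  have hbs : ∀ x : ℂ, ‖x‖ = s → f x ≠ 0 := by
    intro x hx h
    have hx0 : x ≠ 0 := by
      intro h0; rw [h0, norm_zero] at hx; exact hs0.ne hx
    set y := q⁻¹ * x with hy
    have hy0 : y ≠ 0 := mul_ne_zero (inv_ne_zero hq0) hx0
    have hxy : x = q * y := by
      rw [hy, ← mul_assoc, mul_inv_cancel₀ hq0, one_mul]
    have hfy : f y = 0 := (zero_invariance hq0 hc heq y hy0).mp (by rwa [← hxy])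
    have : ‖y‖ = r := by
      have : ‖x‖ = ‖q‖ * ‖y‖ := by
        rw [hxy, norm_mul]
      rw [this] at hx
      exact mul_left_cancel₀ hqa.ne' hx
    exact hrz y hfy this
  -- representatives in the open annulus
  have hrep : ∀ i : Fin (k + 1), ∃ m : ℤ,
      s < ‖q ^ m * z i‖ ∧ ‖q ^ m * z i‖ < r := by
    intro i
    obtain ⟨m, hm1, hm2⟩ := exists_zpow_between hqa hq1
      (norm_pos_iff.mpr (hz0 i) : 0 < ‖z i‖) hr0
    have habs : ‖q ^ m * z i‖ = ‖q‖ ^ m * ‖z i‖ := by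
      rw [norm_mul, norm_zpow]
    refine ⟨m, by rw [habs]; exact hm1, ?_⟩
    rw [habs]
    rcases lt_or_eq_of_le hm2 with h | h
    · exact h
    · exfalso
      have hz' : f (q ^ m * z i) = 0 :=
        zero_zpow_invariance hq0 hc heq (hz0 i) (hzf i) m
      exact hrz _ hz' (by rw [habs, h])
  choose m hm1 hm2 using hrep
  set w : Fin (k + 1) → ℂ := fun i => q ^ (m i) * z i with hw
  have hwzero : ∀ i, f (w i) = 0 := fun i =>
    zero_zpow_invariance hq0 hc heq (hz0 i) (hzf i) (m i)
  have hwinj : Function.Injective w := by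
    intro i j hij
    by_contra hne'
    apply hinc i j hne' (m j - m i)
    have hmm : q ^ (m i) * z i = q ^ (m j) * z j := hij
    have h1 : z i = q ^ (-(m i)) * (q ^ (m i) * z i) := by
      rw [← mul_assoc, ← zpow_add₀ hq0]
      simp
    rw [h1, hmm, ← mul_assoc, ← zpow_add₀ hq0]
    congr 2
    omega
  -- finiteness of annulus zeros
  have hKann : IsCompact (closedBall (0:ℂ) r \ ball 0 s) :=
    (isCompact_closedBall 0 r).diff isOpen_ball
  have hKann0 : (0:ℂ) ∉ closedBall (0:ℂ) r \ ball 0 s := by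
    intro h
    exact h.2 (by rwa [mem_ball_zero_iff, norm_zero])
  have hZ : (annZeros f s r).Finite := by
    apply (zeros_finite hf hne hKann hKann0).subset
    rintro x ⟨⟨hx1, hx2⟩, hx3⟩
    refine ⟨⟨?_, ?_⟩, hx3⟩
    · rw [mem_closedBall_zero_iff]; exact hx2.le
    · rw [mem_ball_zero_iff]; exact not_lt.mpr hx1.le
  -- the counting
  set N := ∑ z ∈ hZ.toFinset, ordval f z with hN
  have hAP := argPrinciple N f hf hs0 hsr hbs hbr hZ rfl
  have hFE := contour_fe hf hq0 hk hc heq hr0 hbr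
  rw [← hs] at hFE
  have h2πI : (2 * (Real.pi : ℂ) * Complex.I) ≠ 0 := by
    simpa [mul_assoc] using Complex.two_pi_I_ne_zero
  have hNk : (N : ℂ) = (k : ℂ) := by
    have : 2 * (Real.pi : ℂ) * Complex.I * N = 2 * (Real.pi : ℂ) * Complex.I * k := by
      rw [← hAP, hFE]; ring
    exact mul_left_cancel₀ h2πI this
  have hNk' : N = k := by exact_mod_cast hNk
  -- lower bound N ≥ k + 1
  have hWsub : Finset.image w Finset.univ ⊆ hZ.toFinset := by
    intro x hx
    rw [Finset.mem_image] at hx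
    obtain ⟨i, _, rfl⟩ := hx
    rw [Set.Finite.mem_toFinset]
    exact ⟨⟨hm1 i, hm2 i⟩, hwzero i⟩
  have hwne0 : ∀ i, w i ≠ 0 := fun i => mul_ne_zero (zpow_ne_zero _ hq0) (hz0 i)
  have hcard : (Finset.image w Finset.univ).card = k + 1 := by
    rw [Finset.card_image_of_injective _ hwinj, Finset.card_univ, Fintype.card_fin]
  have hlow : k + 1 ≤ N := by
    calc k + 1 = ∑ _x ∈ Finset.image w Finset.univ, 1 := by
          rw [Finset.sum_const, hcard, smul_eq_mul, mul_one]
    _ ≤ ∑ x ∈ Finset.image w Finset.univ, ordval f x := by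
          apply Finset.sum_le_sum
          intro x hx
          rw [Finset.mem_image] at hx
          obtain ⟨i, _, rfl⟩ := hx
          exact ordval_pos (anAt hf (hwne0 i)) (not_ev0 hf hne (hwne0 i)) (hwzero i)
    _ ≤ N := Finset.sum_le_sum_of_subset hWsub
  omega

theorem theta_zero_set (hq0 : q ≠ 0) (hq1 : ‖q‖ < 1) (hc : c ≠ 0)
    (hk : 1 ≤ k) (hf : DifferentiableOn ℂ f {x : ℂ | x ≠ 0})
    (heq : ∀ x : ℂ, x ≠ 0 → x ^ k * f (q * x) = c * f x)
    (hne : ∃ x : ℂ, x ≠ 0 ∧ f x ≠ 0)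
    (A : Fin k → ℂ) (hA0 : ∀ i, A i ≠ 0) (hAf : ∀ i, f (A i) = 0)
    (hAinc : ∀ i j, i ≠ j → ∀ m : ℤ, A i ≠ q ^ m * A j) :
    ∀ x : ℂ, x ≠ 0 → (f x = 0 ↔ ∃ i, ∃ m : ℤ, x = q ^ m * A i) := by
  intro x hx
  constructor
  · intro hfx
    by_contra hcon
    push_neg at hcon
    set z : Fin (k + 1) → ℂ := Fin.cons x A with hz
    have hz0' : ∀ i, z i ≠ 0 := by
      intro i
      refine Fin.cases ?_ ?_ i
      · simpa [hz] using hx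
      · intro j; simpa [hz] using hA0 j
    have hzf' : ∀ i, f (z i) = 0 := by
      intro i
      refine Fin.cases ?_ ?_ i
      · simpa [hz] using hfx
      · intro j; simpa [hz] using hAf j
    have hinc' : ∀ i j, i ≠ j → ∀ mm : ℤ, z i ≠ q ^ mm * z j := by
      intro i
      refine Fin.cases ?_ ?_ i
      · intro j
        refine Fin.cases ?_ ?_ j
        · intro hij; exact absurd rfl hij
        · intro j' _ mm
          simpa [hz] using hcon j' mm
      · intro i' j
        refine Fin.cases ?_ ?_ j
        · intro _ mm
          simp only [hz, Fin.cons_succ, Fin.cons_zero]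
          intro h
          apply hcon i' (-mm)
          rw [h, ← mul_assoc, ← zpow_add₀ hq0]
          simp
        · intro j' hij mm
          have hne' : i' ≠ j' := fun h => hij (by rw [h])
          simpa [hz] using hAinc i' j' hne' mm
    exact theta_no_extra_zeros hq0 hq1 hc hk hf heq hne z hz0' hzf' hinc'
  · rintro ⟨i, mm, rfl⟩
    exact zero_zpow_invariance hq0 hc heq (hA0 i) (hAf i) mm

/-- key continuity extension lemma -/
lemma vanish_factor {g h : ℂ → ℂ} (hg : DifferentiableOn ℂ g {x : ℂ | x ≠ 0})
    (hgne : ∃ x : ℂ, x ≠ 0 ∧ g x ≠ 0) (hhc : ∀ x : ℂ, x ≠ 0 → ContinuousAt h x)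
    (hzero : ∀ x : ℂ, x ≠ 0 → g x * h x = 0) : ∀ x : ℂ, x ≠ 0 → h x = 0 := by
  intro x hx
  have hev := ev_ne hg hgne hx
  have hmem : ∀ᶠ w in nhdsWithin x {x}ᶜ, w ≠ 0 :=
    (isOpen_cstar.eventually_mem hx).filter_mono nhdsWithin_le_nhds
  have hev0 : ∀ᶠ w in nhdsWithin x {x}ᶜ, h w = 0 := by
    filter_upwards [hev, hmem] with w hw hw0
    rcases mul_eq_zero.mp (hzero w hw0) with h' | h'
    · exact absurd h' hw
    · exact h'
  exact tendsto_nhds_unique_of_eventuallyEq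
    ((hhc x hx).tendsto.mono_left nhdsWithin_le_nhds) tendsto_const_nhds hev0

/-- isolated nonvanishing on punctured neighbourhoods -/
lemma ev_ne_punct {g : ℂ → ℂ} (hg : DifferentiableOn ℂ g {x : ℂ | x ≠ 0})
    (hgne : ∃ x : ℂ, x ≠ 0 ∧ g x ≠ 0) {x : ℂ} (hx : x ≠ 0) :
    ∀ᶠ w in nhdsWithin x {x}ᶜ, g w ≠ 0 ∧ w ≠ 0 := by
  have hmem : ∀ᶠ w in nhdsWithin x {x}ᶜ, w ≠ 0 :=
    (isOpen_cstar.eventually_mem hx).filter_mono nhdsWithin_le_nhds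
  filter_upwards [ev_ne hg hgne hx, hmem] with w h1 h2
  exact ⟨h1, h2⟩

end Theta

end ManoAux

open Matrix

/-- `GL₂(O(ℂ*))`: matrices holomorphic on `ℂ*` and invertible at every `x ≠ 0`. -/
def GLO (Λ : ℂ → Matrix (Fin 2) (Fin 2) ℂ) : Prop :=
  MatHolo Λ ∧ ∀ x : ℂ, x ≠ 0 → IsUnit (Λ x).det

/-- A Mano decomposition of `M` with factor `C ∈ GL₂(ℂ)`: `M = P Q`,
`x P(qx) C = R P(x)`, `det P ≢ 0` and `det P(x₁) = det P(x₂) = 0`. -/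
def Mano (q : ℂ) (ρ : Fin 2 → ℂ) (x1 x2 : ℂ) (M : ℂ → Matrix (Fin 2) (Fin 2) ℂ)
    (C : Matrix (Fin 2) (Fin 2) ℂ) (P Q : ℂ → Matrix (Fin 2) (Fin 2) ℂ) : Prop :=
  IsUnit C.det ∧ MatHolo P ∧ MatHolo Q ∧
  (∀ x : ℂ, x ≠ 0 → M x = P x * Q x) ∧
  (∀ x : ℂ, x ≠ 0 → x • (P (q * x) * C) = Matrix.diagonal ρ * P x) ∧
  (∃ x : ℂ, x ≠ 0 ∧ (P x).det ≠ 0) ∧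
  (P x1).det = 0 ∧ (P x2).det = 0

section MatrixAux

abbrev M2 := Matrix (Fin 2) (Fin 2) ℂ

namespace ManoAux2

lemma qCong_symm {q a b : ℂ} (hq : q ≠ 0) (h : qCong q a b) : qCong q b a := by
  obtain ⟨m, hm⟩ := h
  refine ⟨-m, ?_⟩
  rw [hm, ← mul_assoc, ← zpow_add₀ hq]
  simp

lemma qCong_trans {q a b c : ℂ} (hq : q ≠ 0) (h1 : qCong q a b) (h2 : qCong q b c) :
    qCong q a c := by
  obtain ⟨m, hm⟩ := h1
  obtain ⟨n, hn⟩ := h2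
  refine ⟨m + n, ?_⟩
  rw [hm, hn, ← mul_assoc, ← zpow_add₀ hq]

lemma qCong_qmul {q x a : ℂ} (hq : q ≠ 0) : qCong q (q * x) a ↔ qCong q x a := by
  constructor
  · rintro ⟨m, hm⟩
    refine ⟨m - 1, ?_⟩
    have : x = q⁻¹ * (q * x) := by field_simp
    rw [this, hm, ← mul_assoc, mul_comm q⁻¹ (q ^ m), ← zpow_sub_one₀ hq]
  · rintro ⟨m, hm⟩
    refine ⟨m + 1, ?_⟩
    rw [hm, ← mul_assoc, mul_comm q (q ^ m), ← zpow_add_one₀ hq]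

lemma mat_inv_mul {A : M2} (h : A.det ≠ 0) : A⁻¹ * A = 1 :=
  Matrix.nonsing_inv_mul A (isUnit_iff_ne_zero.mpr h)

lemma mat_mul_inv {A : M2} (h : A.det ≠ 0) : A * A⁻¹ = 1 :=
  Matrix.mul_nonsing_inv A (isUnit_iff_ne_zero.mpr h)

lemma inv_mul_cancel_left' {A : M2} (B : M2) (h : A.det ≠ 0) : A⁻¹ * (A * B) = B := by
  rw [← Matrix.mul_assoc, mat_inv_mul h, Matrix.one_mul]

lemma mul_inv_cancel_left' {A : M2} (B : M2) (h : A.det ≠ 0) : A * (A⁻¹ * B) = B := by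
  rw [← Matrix.mul_assoc, mat_mul_inv h, Matrix.one_mul]

lemma mul_inv_cancel_right' {B : M2} (A : M2) (h : B.det ≠ 0) : A * B * B⁻¹ = A := by
  rw [Matrix.mul_assoc, mat_mul_inv h, Matrix.mul_one]

lemma inv_mul_cancel_right' {B : M2} (A : M2) (h : B.det ≠ 0) : A * B⁻¹ * B = A := by
  rw [Matrix.mul_assoc, mat_inv_mul h, Matrix.mul_one]

lemma det_inv' (A : M2) : (A⁻¹).det = (A.det)⁻¹ := by
  rw [Matrix.det_nonsing_inv, Ring.inverse_eq_inv']

lemma mulEntry_diffAt {A B : ℂ → M2} {x : ℂ}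
    (hA : ∀ i j : Fin 2, DifferentiableAt ℂ (fun y => A y i j) x)
    (hB : ∀ i j : Fin 2, DifferentiableAt ℂ (fun y => B y i j) x) :
    ∀ i j : Fin 2, DifferentiableAt ℂ (fun y => (A y * B y) i j) x := by
  intro i j
  have hfun : (fun y => (A y * B y) i j)
      = fun y => A y i 0 * B y 0 j + A y i 1 * B y 1 j := by
    funext y
    rw [Matrix.mul_apply, Fin.sum_univ_two]
  rw [hfun]
  exact ((hA i 0).mul (hB 0 j)).add ((hA i 1).mul (hB 1 j))

lemma detEntry_diffAt {A : ℂ → M2} {x : ℂ}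
    (hA : ∀ i j : Fin 2, DifferentiableAt ℂ (fun y => A y i j) x) :
    DifferentiableAt ℂ (fun y => (A y).det) x := by
  have hfun : (fun y => (A y).det)
      = fun y => A y 0 0 * A y 1 1 - A y 0 1 * A y 1 0 := by
    funext y
    rw [Matrix.det_fin_two]
  rw [hfun]
  exact ((hA 0 0).mul (hA 1 1)).sub ((hA 0 1).mul (hA 1 0))

lemma invEntry_diffAt {A : ℂ → M2} {x : ℂ}
    (hA : ∀ i j : Fin 2, DifferentiableAt ℂ (fun y => A y i j) x)
    (hdet : (A x).det ≠ 0) :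
    ∀ i j : Fin 2, DifferentiableAt ℂ (fun y => (A y)⁻¹ i j) x := by
  intro i j
  have hfun : (fun y => (A y)⁻¹ i j)
      = fun y => ((A y).det)⁻¹ * (A y).adjugate i j := by
    funext y
    rw [Matrix.inv_def, Ring.inverse_eq_inv', Matrix.smul_apply, smul_eq_mul]
  rw [hfun]
  apply DifferentiableAt.mul
  · exact (detEntry_diffAt hA).inv hdet
  · have hadj : (fun y => (A y).adjugate i j)
        = fun y => (Matrix.of ![![A y 1 1, -(A y 0 1)], ![-(A y 1 0), A y 0 0]]) i j := by
      funext y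
      rw [Matrix.adjugate_fin_two]
    rw [hadj]
    fin_cases i <;> fin_cases j <;>
      simp only [Matrix.of_apply, Matrix.cons_val', Matrix.cons_val_zero, Matrix.cons_val_one,
        Matrix.head_cons, Matrix.empty_val', Matrix.cons_val_fin_one, Matrix.head_fin_const,
        Fin.isValue]
    · exact hA 1 1
    · exact (hA 0 1).neg
    · exact (hA 1 0).neg
    · exact hA 0 0

lemma matHolo_mul {A B : ℂ → M2} (hA : MatHolo A) (hB : MatHolo B) :
    MatHolo (fun x => A x * B x) := by
  intro i j x hx
  exact mulEntry_diffAt (fun i j => hA i j x hx) (fun i j => hB i j x hx) i j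

lemma matHolo_det_diffOn {A : ℂ → M2} (hA : MatHolo A) :
    DifferentiableOn ℂ (fun y => (A y).det) {x : ℂ | x ≠ 0} :=
  fun x hx => (detEntry_diffAt (fun i j => hA i j x hx)).differentiableWithinAt

lemma det_smul_two (x : ℂ) (A : M2) : (x • A).det = x ^ 2 * A.det := by
  rw [Matrix.det_smul]
  norm_num

end ManoAux2

end MatrixAux

namespace ManoAux2

lemma mano_det_zeros
    {q : ℂ} (hq : q ≠ 0) (hq1 : ‖q‖ < 1)
    {ρ σv : Fin 2 → ℂ} {xs : Fin 4 → ℂ}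
    (hρ0 : ∀ i, ρ i ≠ 0) (hσ0 : ∀ i, σv i ≠ 0) (hx0 : ∀ k, xs k ≠ 0)
    (hNRx : ∀ k l : Fin 4, k ≠ l → ¬ qCong q (xs k) (xs l))
    {M : ℂ → Matrix (Fin 2) (Fin 2) ℂ} (hM : M ∈ FJS q ρ σv xs)
    {C : Matrix (Fin 2) (Fin 2) ℂ} {P Q : ℂ → Matrix (Fin 2) (Fin 2) ℂ}
    (hman : Mano q ρ (xs 0) (xs 1) M C P Q) :
    (∀ x : ℂ, x ≠ 0 → ((P x).det = 0 ↔ qCong q x (xs 0) ∨ qCong q x (xs 1))) ∧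
    (∀ x : ℂ, x ≠ 0 → ((Q x).det = 0 ↔ qCong q x (xs 2) ∨ qCong q x (xs 3))) := by
  obtain ⟨hMholo, hMfe, hMne, hMzeros⟩ := hM
  obtain ⟨hCu, hPh, hQh, hPQ, hPfe, hPne, hP1, hP2⟩ := hman
  have hC : C.det ≠ 0 := hCu.ne_zero
  have hρρ : ρ 0 * ρ 1 ≠ 0 := mul_ne_zero (hρ0 0) (hρ0 1)
  have hσσ : σv 0 * σv 1 ≠ 0 := mul_ne_zero (hσ0 0) (hσ0 1)
  set cP : ℂ := (ρ 0 * ρ 1) / C.det with hcPdef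
  set cM : ℂ := (ρ 0 * ρ 1) / (σv 0 * σv 1) with hcMdef
  set cQ : ℂ := C.det / (σv 0 * σv 1) with hcQdef
  have hcP : cP ≠ 0 := div_ne_zero hρρ hC
  have hcM : cM ≠ 0 := div_ne_zero hρρ hσσ
  have hcQ : cQ ≠ 0 := div_ne_zero hC hσσ
  -- functional equation for det P
  have hdPfe : ∀ x : ℂ, x ≠ 0 → x ^ 2 * (P (q * x)).det = cP * (P x).det := by
    intro x hx
    have h := congrArg Matrix.det (hPfe x hx)
    simp only [det_smul_two, Matrix.det_mul, Matrix.det_diagonal,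
      Fin.prod_univ_two] at h
    rw [hcPdef, div_mul_eq_mul_div, eq_div_iff hC]
    linear_combination h
  -- functional equation for det M
  have hdMfe : ∀ x : ℂ, x ≠ 0 → x ^ 4 * (M (q * x)).det = cM * (M x).det := by
    intro x hx
    have h := congrArg Matrix.det (hMfe x hx)
    simp only [det_smul_two, Matrix.det_mul, Matrix.det_diagonal,
      Fin.prod_univ_two] at h
    rw [hcMdef, div_mul_eq_mul_div, eq_div_iff hσσ]
    linear_combination h
  have hdPdiff : DifferentiableOn ℂ (fun y => (P y).det) {x : ℂ | x ≠ 0} :=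
    matHolo_det_diffOn hPh
  have hdQdiff : DifferentiableOn ℂ (fun y => (Q y).det) {x : ℂ | x ≠ 0} :=
    matHolo_det_diffOn hQh
  have hdMdiff : DifferentiableOn ℂ (fun y => (M y).det) {x : ℂ | x ≠ 0} :=
    matHolo_det_diffOn hMholo
  have hdMP : ∀ x : ℂ, x ≠ 0 → (M x).det = (P x).det * (Q x).det := by
    intro x hx
    rw [hPQ x hx, Matrix.det_mul]
  have hdPne : ∃ x : ℂ, x ≠ 0 ∧ (P x).det ≠ 0 := hPne
  have hdQne : ∃ x : ℂ, x ≠ 0 ∧ (Q x).det ≠ 0 := by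
    obtain ⟨x, hx, hdM⟩ := hMne
    refine ⟨x, hx, fun h => hdM ?_⟩
    rw [hdMP x hx, h, mul_zero]
  -- zero set of det P
  set A2 : Fin 2 → ℂ := ![xs 0, xs 1] with hA2
  have hA2ne : ∀ i, A2 i ≠ 0 := by
    intro i; fin_cases i
    · simpa [hA2] using hx0 0
    · simpa [hA2] using hx0 1
  have hA2f : ∀ i, (P (A2 i)).det = 0 := by
    intro i; fin_cases i
    · simpa [hA2] using hP1
    · simpa [hA2] using hP2
  have hA2inc : ∀ i j, i ≠ j → ∀ m : ℤ, A2 i ≠ q ^ m * A2 j := by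
    intro i j hij m hm
    fin_cases i <;> fin_cases j
    · exact hij rfl
    · simp only [hA2, Matrix.cons_val_zero, Matrix.cons_val_one, Matrix.head_cons] at hm
      exact hNRx 0 1 (by decide) ⟨m, hm⟩
    · simp only [hA2, Matrix.cons_val_zero, Matrix.cons_val_one, Matrix.head_cons] at hm
      exact hNRx 1 0 (by decide) ⟨m, hm⟩
    · exact hij rfl
  have hPz0 : ∀ x : ℂ, x ≠ 0 →
      ((P x).det = 0 ↔ ∃ i, ∃ m : ℤ, x = q ^ m * A2 i) :=
    theta_zero_set hq hq1 hcP (by norm_num) hdPdiff hdPfe hdPne A2 hA2ne hA2f hA2inc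
  have hPz : ∀ x : ℂ, x ≠ 0 →
      ((P x).det = 0 ↔ qCong q x (xs 0) ∨ qCong q x (xs 1)) := by
    intro x hx
    rw [hPz0 x hx]
    constructor
    · rintro ⟨i, m, hm⟩
      fin_cases i
      · exact Or.inl ⟨m, by simpa [hA2] using hm⟩
      · exact Or.inr ⟨m, by simpa [hA2] using hm⟩
    · rintro (⟨m, hm⟩ | ⟨m, hm⟩)
      · exact ⟨0, m, by simpa [hA2] using hm⟩
      · exact ⟨1, m, by simpa [hA2] using hm⟩
  -- zero set of det M
  have hMz0 : ∀ x : ℂ, x ≠ 0 →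
      ((M x).det = 0 ↔ ∃ i, ∃ m : ℤ, x = q ^ m * xs i) := by
    apply theta_zero_set hq hq1 hcM (by norm_num) hdMdiff hdMfe hMne xs hx0 hMzeros
    intro i j hij m hm
    exact hNRx i j hij ⟨m, hm⟩
  -- det P does not vanish at xs 2, xs 3
  have hdP23 : ∀ k : Fin 4, k = 2 ∨ k = 3 → (P (xs k)).det ≠ 0 := by
    intro k hk h
    rcases (hPz (xs k) (hx0 k)).mp h with hcg | hcg
    · rcases hk with rfl | rfl
      · exact hNRx 2 0 (by decide) hcg
      · exact hNRx 3 0 (by decide) hcg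
    · rcases hk with rfl | rfl
      · exact hNRx 2 1 (by decide) hcg
      · exact hNRx 3 1 (by decide) hcg
  have hQ3 : (Q (xs 2)).det = 0 := by
    have := hdMP (xs 2) (hx0 2)
    rw [hMzeros 2] at this
    rcases mul_eq_zero.mp this.symm with h | h
    · exact absurd h (hdP23 2 (Or.inl rfl))
    · exact h
  have hQ4 : (Q (xs 3)).det = 0 := by
    have := hdMP (xs 3) (hx0 3)
    rw [hMzeros 3] at this
    rcases mul_eq_zero.mp this.symm with h | h
    · exact absurd h (hdP23 3 (Or.inr rfl))
    · exact h
  -- functional equation for det Q, via the vanishing-factor trick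
  have hcPQ : cM = cP * cQ := by
    rw [hcPdef, hcQdef, hcMdef]
    field_simp
  have hQcont : ∀ x : ℂ, x ≠ 0 →
      ContinuousAt (fun y => y ^ 2 * (Q (q * y)).det - cQ * (Q y).det) x := by
    intro x hx
    have hqx : q * x ≠ 0 := mul_ne_zero hq hx
    have h1 : DifferentiableAt ℂ (fun y => (Q (q * y)).det) x := by
      have hcomp := ((detEntry_diffAt (fun i j => hQh i j (q * x) hqx)).comp x
        ((differentiableAt_id.const_mul q)))
      exact hcomp
    exact (((differentiableAt_id.pow 2).mul h1).sub
      ((differentiableAt_const cQ).mul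
        (detEntry_diffAt (fun i j => hQh i j x hx)))).continuousAt
  have hzeroprod : ∀ x : ℂ, x ≠ 0 →
      (P x).det * (x ^ 2 * (Q (q * x)).det - cQ * (Q x).det) = 0 := by
    intro x hx
    have hqx : q * x ≠ 0 := mul_ne_zero hq hx
    have e1 := hdMfe x hx
    have e2 := hdPfe x hx
    rw [hdMP x hx, hdMP (q * x) hqx] at e1
    have hcancel : cP * ((P x).det * (x ^ 2 * (Q (q * x)).det - cQ * (Q x).det)) = 0 := by
      linear_combination e1 - (x ^ 2 * (Q (q * x)).det) * e2
        + ((P x).det * (Q x).det) * hcPQ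
    rcases mul_eq_zero.mp hcancel with h | h
    · exact absurd h hcP
    · exact h
  have hdQfe : ∀ x : ℂ, x ≠ 0 → x ^ 2 * (Q (q * x)).det = cQ * (Q x).det := by
    intro x hx
    exact sub_eq_zero.mp (vanish_factor hdPdiff hdPne hQcont hzeroprod x hx)
  -- zero set of det Q
  set A2' : Fin 2 → ℂ := ![xs 2, xs 3] with hA2'
  have hA2ne' : ∀ i, A2' i ≠ 0 := by
    intro i; fin_cases i
    · simpa [hA2'] using hx0 2
    · simpa [hA2'] using hx0 3
  have hA2f' : ∀ i, (Q (A2' i)).det = 0 := by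
    intro i; fin_cases i
    · simpa [hA2'] using hQ3
    · simpa [hA2'] using hQ4
  have hA2inc' : ∀ i j, i ≠ j → ∀ m : ℤ, A2' i ≠ q ^ m * A2' j := by
    intro i j hij m hm
    fin_cases i <;> fin_cases j
    · exact hij rfl
    · simp only [hA2', Matrix.cons_val_zero, Matrix.cons_val_one, Matrix.head_cons] at hm
      exact hNRx 2 3 (by decide) ⟨m, hm⟩
    · simp only [hA2', Matrix.cons_val_zero, Matrix.cons_val_one, Matrix.head_cons] at hm
      exact hNRx 3 2 (by decide) ⟨m, hm⟩
    · exact hij rfl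
  have hQz0 : ∀ x : ℂ, x ≠ 0 →
      ((Q x).det = 0 ↔ ∃ i, ∃ m : ℤ, x = q ^ m * A2' i) :=
    theta_zero_set hq hq1 hcQ (by norm_num) hdQdiff hdQfe hdQne A2' hA2ne' hA2f' hA2inc'
  have hQz : ∀ x : ℂ, x ≠ 0 →
      ((Q x).det = 0 ↔ qCong q x (xs 2) ∨ qCong q x (xs 3)) := by
    intro x hx
    rw [hQz0 x hx]
    constructor
    · rintro ⟨i, m, hm⟩
      fin_cases i
      · exact Or.inl ⟨m, by simpa [hA2'] using hm⟩
      · exact Or.inr ⟨m, by simpa [hA2'] using hm⟩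
    · rintro (⟨m, hm⟩ | ⟨m, hm⟩)
      · exact ⟨0, m, by simpa [hA2'] using hm⟩
      · exact ⟨1, m, by simpa [hA2'] using hm⟩
  exact ⟨hPz, hQz⟩

end ManoAux2

open ManoAux2 in
/-- Gauge freedom of Mano decompositions. -/
theorem stmt12 (q : ℂ) (hq0 : 0 < ‖q‖) (hq1 : ‖q‖ < 1)
    (ρ σv : Fin 2 → ℂ) (xs : Fin 4 → ℂ)
    (hρ0 : ∀ i, ρ i ≠ 0) (hσ0 : ∀ i, σv i ≠ 0) (hx0 : ∀ k, xs k ≠ 0)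
    (hFR : qCong q (xs 0 * xs 1 * xs 2 * xs 3) (ρ 0 * ρ 1 / (σv 0 * σv 1)))
    (hNRρ : ¬ qCong q (ρ 0) (ρ 1)) (hNRσ : ¬ qCong q (σv 0) (σv 1))
    (hNRx : ∀ k l : Fin 4, k ≠ l → ¬ qCong q (xs k) (xs l))
    (hNS : ∀ i j : Fin 2, ¬ qCong q (ρ i / σv j) (xs 0 * xs 1))
    (M : ℂ → Matrix (Fin 2) (Fin 2) ℂ) (hM : M ∈ FJS q ρ σv xs) :
    (∀ (C C' : Matrix (Fin 2) (Fin 2) ℂ) (P Q Λ : ℂ → Matrix (Fin 2) (Fin 2) ℂ),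
      IsUnit C'.det → Mano q ρ (xs 0) (xs 1) M C P Q → GLO Λ →
      (∀ x : ℂ, x ≠ 0 → Λ (q * x) * C = C' * Λ x) →
      Mano q ρ (xs 0) (xs 1) M C' (fun x => P x * (Λ x)⁻¹) (fun x => Λ x * Q x)) ∧
    (∀ (C C' : Matrix (Fin 2) (Fin 2) ℂ) (P Q P' Q' : ℂ → Matrix (Fin 2) (Fin 2) ℂ),
      Mano q ρ (xs 0) (xs 1) M C P Q → Mano q ρ (xs 0) (xs 1) M C' P' Q' →
      ∃ Λ : ℂ → Matrix (Fin 2) (Fin 2) ℂ, GLO Λ ∧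
        (∀ x : ℂ, x ≠ 0 → P' x = P x * (Λ x)⁻¹) ∧
        (∀ x : ℂ, x ≠ 0 → Q' x = Λ x * Q x) ∧
        (∀ x : ℂ, x ≠ 0 → Λ (q * x) * C = C' * Λ x)) := by
  have hq : q ≠ 0 := norm_pos_iff.mp hq0
  constructor
  · -- part (i)
    rintro C C' P Q Λ hC'u hman hGLO hfe
    obtain ⟨hCu, hPh, hQh, hPQ, hPfe, hPne, hP1, hP2⟩ := hman
    obtain ⟨hΛh, hΛu⟩ := hGLO
    have hΛd : ∀ x : ℂ, x ≠ 0 → (Λ x).det ≠ 0 := fun x hx => (hΛu x hx).ne_zero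
    have hΛinvh : MatHolo (fun x => (Λ x)⁻¹) := fun i j x hx =>
      invEntry_diffAt (fun i j => hΛh i j x hx) (hΛd x hx) i j
    refine ⟨hC'u, matHolo_mul hPh hΛinvh, matHolo_mul hΛh hQh, ?_, ?_, ?_, ?_, ?_⟩
    · intro x hx
      show M x = P x * (Λ x)⁻¹ * (Λ x * Q x)
      rw [Matrix.mul_assoc (P x), inv_mul_cancel_left' (Q x) (hΛd x hx)]
      exact hPQ x hx
    · intro x hx
      have hqx : q * x ≠ 0 := mul_ne_zero hq hx
      have h1 : C * (Λ x)⁻¹ = (Λ (q * x))⁻¹ * C' := by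
        have h2 : (Λ (q * x))⁻¹ * (Λ (q * x) * C * (Λ x)⁻¹)
            = (Λ (q * x))⁻¹ * (C' * Λ x * (Λ x)⁻¹) := by rw [hfe x hx]
        rw [mul_inv_cancel_right' C' (hΛd x hx)] at h2
        rw [Matrix.mul_assoc (Λ (q * x)) C ((Λ x)⁻¹),
          inv_mul_cancel_left' (C * (Λ x)⁻¹) (hΛd (q * x) hqx)] at h2
        exact h2
      show x • (P (q * x) * (Λ (q * x))⁻¹ * C') = Matrix.diagonal ρ * (P x * (Λ x)⁻¹)
      calc x • (P (q * x) * (Λ (q * x))⁻¹ * C')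
          = x • (P (q * x) * ((Λ (q * x))⁻¹ * C')) := by rw [Matrix.mul_assoc]
        _ = x • (P (q * x) * (C * (Λ x)⁻¹)) := by rw [← h1]
        _ = x • (P (q * x) * C * (Λ x)⁻¹) := by rw [Matrix.mul_assoc]
        _ = (x • (P (q * x) * C)) * (Λ x)⁻¹ := by rw [smul_mul_assoc]
        _ = Matrix.diagonal ρ * P x * (Λ x)⁻¹ := by rw [hPfe x hx]
        _ = Matrix.diagonal ρ * (P x * (Λ x)⁻¹) := by rw [Matrix.mul_assoc]
    · obtain ⟨x₀, hx₀, hPd⟩ := hPne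
      refine ⟨x₀, hx₀, ?_⟩
      show (P x₀ * (Λ x₀)⁻¹).det ≠ 0
      rw [Matrix.det_mul, det_inv']
      exact mul_ne_zero hPd (inv_ne_zero (hΛd x₀ hx₀))
    · show (P (xs 0) * (Λ (xs 0))⁻¹).det = 0
      rw [Matrix.det_mul, hP1, zero_mul]
    · show (P (xs 1) * (Λ (xs 1))⁻¹).det = 0
      rw [Matrix.det_mul, hP2, zero_mul]
  · -- part (ii)
    rintro C C' P Q P' Q' hman hman'
    obtain ⟨hPz, hQz⟩ := mano_det_zeros hq hq1 hρ0 hσ0 hx0 hNRx hM hman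
    obtain ⟨hP'z, hQ'z⟩ := mano_det_zeros hq hq1 hρ0 hσ0 hx0 hNRx hM hman'
    obtain ⟨hCu, hPh, hQh, hPQ, hPfe, hPne, hP1, hP2⟩ := hman
    obtain ⟨hC'u, hP'h, hQ'h, hP'Q', hP'fe, hP'ne, hP'1, hP'2⟩ := hman'
    have hdisj : ∀ x : ℂ, x ≠ 0 → (qCong q x (xs 0) ∨ qCong q x (xs 1)) →
        (qCong q x (xs 2) ∨ qCong q x (xs 3)) → False := by
      intro x hx h1 h2
      rcases h1 with h1 | h1 <;> rcases h2 with h2 | h2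
      · exact hNRx 0 2 (by decide) (qCong_trans hq (qCong_symm hq h1) h2)
      · exact hNRx 0 3 (by decide) (qCong_trans hq (qCong_symm hq h1) h2)
      · exact hNRx 1 2 (by decide) (qCong_trans hq (qCong_symm hq h1) h2)
      · exact hNRx 1 3 (by decide) (qCong_trans hq (qCong_symm hq h1) h2)
    have hPP' : ∀ x : ℂ, x ≠ 0 → ((P' x).det = 0 ↔ (P x).det = 0) := by
      intro x hx; rw [hP'z x hx, hPz x hx]
    have hcompl : ∀ x : ℂ, x ≠ 0 → (P' x).det = 0 →
        ((Q x).det ≠ 0 ∧ (Q' x).det ≠ 0 ∧ (P x).det = 0) := by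
      intro x hx h
      have hsp := (hP'z x hx).mp h
      refine ⟨?_, ?_, (hPP' x hx).mp h⟩
      · intro hq0'; exact hdisj x hx hsp ((hQz x hx).mp hq0')
      · intro hq0'; exact hdisj x hx hsp ((hQ'z x hx).mp hq0')
    classical
    set Λ : ℂ → Matrix (Fin 2) (Fin 2) ℂ :=
      fun x => if (P' x).det = 0 then Q' x * (Q x)⁻¹ else (P' x)⁻¹ * P x with hΛdef
    have hMPQ : ∀ x : ℂ, x ≠ 0 → P x * Q x = P' x * Q' x := by
      intro x hx; rw [← hPQ x hx, ← hP'Q' x hx]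
    have hbr : ∀ x : ℂ, x ≠ 0 → (P' x).det ≠ 0 → (Q x).det ≠ 0 →
        (P' x)⁻¹ * P x = Q' x * (Q x)⁻¹ := by
      intro x hx h1 h2
      calc (P' x)⁻¹ * P x = (P' x)⁻¹ * P x * Q x * (Q x)⁻¹ :=
            (mul_inv_cancel_right' _ h2).symm
        _ = (P' x)⁻¹ * (P x * Q x) * (Q x)⁻¹ := by rw [Matrix.mul_assoc ((P' x)⁻¹)]
        _ = (P' x)⁻¹ * (P' x * Q' x) * (Q x)⁻¹ := by rw [hMPQ x hx]
        _ = Q' x * (Q x)⁻¹ := by rw [inv_mul_cancel_left' _ h1]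
    have hΛ1 : ∀ x : ℂ, x ≠ 0 → (P' x).det ≠ 0 → Λ x = (P' x)⁻¹ * P x := by
      intro x hx h; rw [hΛdef]; simp only [if_neg h]
    have hΛ2 : ∀ x : ℂ, x ≠ 0 → (Q x).det ≠ 0 → Λ x = Q' x * (Q x)⁻¹ := by
      intro x hx h
      rcases eq_or_ne (P' x).det 0 with h' | h'
      · rw [hΛdef]; simp only [if_pos h']
      · rw [hΛ1 x hx h', hbr x hx h' h]
    have hΛd : ∀ x : ℂ, x ≠ 0 → (Λ x).det ≠ 0 := by
      intro x hx
      rcases eq_or_ne (P' x).det 0 with h | h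
      · obtain ⟨hQd, hQ'd, hPd⟩ := hcompl x hx h
        rw [hΛ2 x hx hQd, Matrix.det_mul, det_inv']
        exact mul_ne_zero hQ'd (inv_ne_zero hQd)
      · have hPd : (P x).det ≠ 0 := fun hh => h ((hPP' x hx).mpr hh)
        rw [hΛ1 x hx h, Matrix.det_mul, det_inv']
        exact mul_ne_zero (inv_ne_zero h) hPd
    have hΛh : MatHolo Λ := by
      intro i j x hx
      rcases eq_or_ne (P' x).det 0 with h | h
      · obtain ⟨hQd, hQ'd, hPd⟩ := hcompl x hx h
        have hev : ∀ᶠ w in nhds x, (Q w).det ≠ 0 ∧ w ≠ 0 := by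
          have h1 : ContinuousAt (fun w => (Q w).det) x :=
            (detEntry_diffAt (fun i j => hQh i j x hx)).continuousAt
          filter_upwards [h1.eventually_ne hQd, isOpen_cstar.eventually_mem hx] with w h2 h3
          exact ⟨h2, h3⟩
        have hevΛ : (fun w => Λ w i j) =ᶠ[nhds x] (fun w => (Q' w * (Q w)⁻¹) i j) := by
          filter_upwards [hev] with w hw
          rw [hΛ2 w hw.2 hw.1]
        rw [Filter.EventuallyEq.differentiableAt_iff hevΛ]
        exact mulEntry_diffAt (fun i j => hQ'h i j x hx)
          (invEntry_diffAt (fun i j => hQh i j x hx) hQd) i j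
      · have hev : ∀ᶠ w in nhds x, (P' w).det ≠ 0 ∧ w ≠ 0 := by
          have h1 : ContinuousAt (fun w => (P' w).det) x :=
            (detEntry_diffAt (fun i j => hP'h i j x hx)).continuousAt
          filter_upwards [h1.eventually_ne h, isOpen_cstar.eventually_mem hx] with w h2 h3
          exact ⟨h2, h3⟩
        have hevΛ : (fun w => Λ w i j) =ᶠ[nhds x] (fun w => ((P' w)⁻¹ * P w) i j) := by
          filter_upwards [hev] with w hw
          rw [hΛ1 w hw.2 hw.1]
        rw [Filter.EventuallyEq.differentiableAt_iff hevΛ]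
        exact mulEntry_diffAt (invEntry_diffAt (fun i j => hP'h i j x hx) h)
          (fun i j => hPh i j x hx) i j
    have hP'eq : ∀ x : ℂ, x ≠ 0 → P' x = P x * (Λ x)⁻¹ := by
      intro x hx
      rcases eq_or_ne (P' x).det 0 with h | h
      · obtain ⟨hQd, hQ'd, hPd⟩ := hcompl x hx h
        rw [hΛ2 x hx hQd, Matrix.mul_inv_rev,
          Matrix.nonsing_inv_nonsing_inv _ (isUnit_iff_ne_zero.mpr hQd),
          ← Matrix.mul_assoc, hMPQ x hx, mul_inv_cancel_right' _ hQ'd]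
      · have hPd : (P x).det ≠ 0 := fun hh => h ((hPP' x hx).mpr hh)
        rw [hΛ1 x hx h, Matrix.mul_inv_rev,
          Matrix.nonsing_inv_nonsing_inv _ (isUnit_iff_ne_zero.mpr h),
          mul_inv_cancel_left' _ hPd]
    have hQ'eq : ∀ x : ℂ, x ≠ 0 → Q' x = Λ x * Q x := by
      intro x hx
      rcases eq_or_ne (Q x).det 0 with h | h
      · have hsp := (hQz x hx).mp h
        have hP'd : (P' x).det ≠ 0 := fun hh => hdisj x hx ((hP'z x hx).mp hh) hsp
        rw [hΛ1 x hx hP'd, Matrix.mul_assoc, hMPQ x hx, inv_mul_cancel_left' _ hP'd]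
      · rw [hΛ2 x hx h, inv_mul_cancel_right' _ h]
    have hfe1 : ∀ x : ℂ, x ≠ 0 → (P' x).det ≠ 0 → Λ (q * x) * C = C' * Λ x := by
      intro x hx h
      have hqx : q * x ≠ 0 := mul_ne_zero hq hx
      have hP'qx : (P' (q * x)).det ≠ 0 := by
        intro hh
        apply h
        apply (hP'z x hx).mpr
        rcases (hP'z (q * x) hqx).mp hh with h' | h'
        · exact Or.inl ((qCong_qmul hq).mp h')
        · exact Or.inr ((qCong_qmul hq).mp h')
      have hL : P' (q * x) * Λ (q * x) = P (q * x) := by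
        rw [hΛ1 (q * x) hqx hP'qx, mul_inv_cancel_left' _ hP'qx]
      have hstep : x • (P' (q * x) * (Λ (q * x) * C)) = x • (P' (q * x) * (C' * Λ x)) := by
        have lhs : x • (P' (q * x) * (Λ (q * x) * C)) = Matrix.diagonal ρ * P x := by
          rw [← Matrix.mul_assoc, hL]
          exact hPfe x hx
        have rhs : x • (P' (q * x) * (C' * Λ x)) = Matrix.diagonal ρ * P x := by
          rw [← Matrix.mul_assoc, ← smul_mul_assoc, hP'fe x hx, Matrix.mul_assoc,
            hΛ1 x hx h, mul_inv_cancel_left' _ h]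
        rw [lhs, rhs]
      have hstep2 : P' (q * x) * (Λ (q * x) * C) = P' (q * x) * (C' * Λ x) := by
        have h' := congrArg (fun A => x⁻¹ • A) hstep
        simpa [smul_smul, inv_mul_cancel₀ hx, one_smul] using h'
      calc Λ (q * x) * C = (P' (q * x))⁻¹ * (P' (q * x) * (Λ (q * x) * C)) :=
            (inv_mul_cancel_left' _ hP'qx).symm
        _ = (P' (q * x))⁻¹ * (P' (q * x) * (C' * Λ x)) := by rw [hstep2]
        _ = C' * Λ x := inv_mul_cancel_left' _ hP'qx
    have hfeAll : ∀ x : ℂ, x ≠ 0 → Λ (q * x) * C = C' * Λ x := by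
      intro x hx
      rcases eq_or_ne (P' x).det 0 with h | h
      · apply Matrix.ext
        intro i j
        have hqx : q * x ≠ 0 := mul_ne_zero hq hx
        have hLc : ContinuousAt (fun w => (Λ (q * w) * C) i j) x := by
          have h1 : ∀ k : Fin 2, ContinuousAt (fun w => Λ (q * w) i k) x := by
            intro k
            have h2 := (hΛh i k (q * x) hqx).comp x (differentiableAt_id.const_mul q)
            exact h2.continuousAt
          have hfun : (fun w => (Λ (q * w) * C) i j)
              = fun w => Λ (q * w) i 0 * C 0 j + Λ (q * w) i 1 * C 1 j := by
            funext w; rw [Matrix.mul_apply, Fin.sum_univ_two]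
          rw [hfun]
          exact ((h1 0).mul continuousAt_const).add ((h1 1).mul continuousAt_const)
        have hRc : ContinuousAt (fun w => (C' * Λ w) i j) x := by
          have hfun : (fun w => (C' * Λ w) i j)
              = fun w => C' i 0 * Λ w 0 j + C' i 1 * Λ w 1 j := by
            funext w; rw [Matrix.mul_apply, Fin.sum_univ_two]
          rw [hfun]
          exact (continuousAt_const.mul (hΛh 0 j x hx).continuousAt).add
            (continuousAt_const.mul (hΛh 1 j x hx).continuousAt)
        have hevp : (fun w => (Λ (q * w) * C) i j) =ᶠ[nhdsWithin x {x}ᶜ]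
            (fun w => (C' * Λ w) i j) := by
          filter_upwards [ev_ne_punct (matHolo_det_diffOn hP'h) hP'ne hx] with w hw
          rw [hfe1 w hw.2 hw.1]
        exact tendsto_nhds_unique_of_eventuallyEq
          (hLc.tendsto.mono_left nhdsWithin_le_nhds)
          (hRc.tendsto.mono_left nhdsWithin_le_nhds) hevp
      · exact hfe1 x hx h
    exact ⟨Λ, ⟨hΛh, fun x hx => isUnit_iff_ne_zero.mpr (hΛd x hx)⟩, hP'eq, hQ'eq, hfeAll⟩
end
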